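/- arXiv:2205.12167 — 8 statements merged into one kernel-verified Lean document; each statement's English description precedes it below -/
import Mathlib

section
/- Let Φ₁ be a Carathéodory solution with data (s₁,x₁) and Φ₂ a Carathéodory solution with data (s₂,x₂), where s₁, s₂ ∈ [t0,T] with s₁ ≤ s₂. Then for every t ∈ [s₂,T], |Φ₁(t) − Φ₂(t)| ≤ (|x₁ − x₂| + m·|s₁ − s₂|) · e^(L·(t − s₂)). -/
open MeasureTheory Set

/-- A Carathéodory solution on `[t0, T]` with data `(s, x)`. -/
def IsCaratheodorySol (t0 T : ℝ) (G : ℝ → ℝ → ℝ) (s x : ℝ) (Φ : ℝ → ℝ) : Prop :=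
  ContinuousOn Φ (Icc t0 T) ∧
    ∀ t ∈ Icc t0 T, Φ t = x + ∫ r in s..t, G r (Φ r)

lemma carath_integrable (t0 T : ℝ) (G : ℝ → ℝ → ℝ)
    (hmeas : ∀ x : ℝ, Measurable fun t => G t x)
    (m : ℝ) (hbound : ∀ t ∈ Icc t0 T, ∀ x : ℝ, |G t x| ≤ m)
    (L : ℝ) (hL : 0 ≤ L)
    (hlip : ∀ t ∈ Icc t0 T, ∀ x y : ℝ, |G t x - G t y| ≤ L * |x - y|)
    (Φ : ℝ → ℝ) (hΦ : ContinuousOn Φ (Icc t0 T))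
    {a b : ℝ} (ha : a ∈ Icc t0 T) (hb : b ∈ Icc t0 T) :
    IntervalIntegrable (fun r => G r (Φ r)) volume a b := by
  set G' : ℝ → ℝ → ℝ := fun t x => if t ∈ Icc t0 T then G t x else 0 with hG'
  have hIcc : IntegrableOn (fun r => G r (Φ r)) (Icc t0 T) volume := by
    have hu : Measurable (Function.uncurry fun (x t : ℝ) => G' t x) := by
      apply measurable_uncurry_of_continuous_of_measurable
      · intro t
        by_cases h : t ∈ Icc t0 T
        · have he : (fun x => G' t x) = fun x => G t x := funext fun x => if_pos h
          rw [he]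
          have : LipschitzWith L.toNNReal (fun x => G t x) := by
            apply LipschitzWith.of_dist_le_mul
            intro x y
            rw [Real.dist_eq, Real.dist_eq, Real.coe_toNNReal L hL]
            exact hlip t h x y
          exact this.continuous
        · have he : (fun x => G' t x) = fun _ => (0:ℝ) := funext fun x => if_neg h
          rw [he]; exact continuous_const
      · intro x
        have : (fun t => G' t x) = (Icc t0 T).indicator (fun t => G t x) := by
          funext t; rw [Set.indicator_apply]
        rw [this]
        exact (hmeas x).indicator measurableSet_Icc
    have hΦm : AEMeasurable Φ (volume.restrict (Icc t0 T)) :=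
      hΦ.aemeasurable measurableSet_Icc
    have hmeas' : AEMeasurable (fun r => G' r (Φ r)) (volume.restrict (Icc t0 T)) := by
      have : (fun r => G' r (Φ r)) =
          (Function.uncurry fun (x t : ℝ) => G' t x) ∘ (fun r => (Φ r, r)) := rfl
      rw [this]
      exact hu.comp_aemeasurable (hΦm.prodMk aemeasurable_id)
    have heq : (fun r => G' r (Φ r)) =ᵐ[volume.restrict (Icc t0 T)]
        (fun r => G r (Φ r)) := by
      filter_upwards [ae_restrict_mem measurableSet_Icc] with r hr
      exact if_pos hr
    have hmeas2 : AEStronglyMeasurable (fun r => G r (Φ r)) (volume.restrict (Icc t0 T)) :=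
      (hmeas'.congr heq).aestronglyMeasurable
    refine Integrable.mono' (integrable_const m) hmeas2 ?_
    filter_upwards [ae_restrict_mem measurableSet_Icc] with r hr
    exact hbound r hr (Φ r)
  rw [intervalIntegrable_iff]
  exact hIcc.mono_set (fun r hr => (uIcc_subset_Icc ha hb) (uIoc_subset_uIcc hr))

/-- Stability estimate for Carathéodory solutions with respect to their data:
`|Φ₁ t - Φ₂ t| ≤ (|x₁ - x₂| + m |s₁ - s₂|) e^{L (t - s₂)}` for `t ∈ [s₂, T]`. -/
theorem caratheodory_stability
    (t0 T : ℝ) (ht : t0 < T) (G : ℝ → ℝ → ℝ)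
    (hmeas : ∀ x : ℝ, Measurable fun t => G t x)
    (m : ℝ) (hm : 0 ≤ m) (hbound : ∀ t ∈ Icc t0 T, ∀ x : ℝ, |G t x| ≤ m)
    (L : ℝ) (hL : 0 ≤ L)
    (hlip : ∀ t ∈ Icc t0 T, ∀ x y : ℝ, |G t x - G t y| ≤ L * |x - y|)
    (s₁ s₂ x₁ x₂ : ℝ) (hs₁ : s₁ ∈ Icc t0 T) (hs₂ : s₂ ∈ Icc t0 T) (hs : s₁ ≤ s₂)
    (Φ₁ Φ₂ : ℝ → ℝ)
    (hΦ₁ : IsCaratheodorySol t0 T G s₁ x₁ Φ₁)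
    (hΦ₂ : IsCaratheodorySol t0 T G s₂ x₂ Φ₂) :
    ∀ t ∈ Icc s₂ T,
      |Φ₁ t - Φ₂ t| ≤ (|x₁ - x₂| + m * |s₁ - s₂|) * Real.exp (L * (t - s₂)) := by
  set δ₀ : ℝ := |x₁ - x₂| + m * |s₁ - s₂| with hδ₀
  have hδ₀0 : 0 ≤ δ₀ := add_nonneg (abs_nonneg _) (mul_nonneg hm (abs_nonneg _))
  -- clamp to [s₂, T]
  set p : ℝ → ℝ := fun r => max s₂ (min T r) with hp
  have hpmem : ∀ r, p r ∈ Icc t0 T := fun r =>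
    ⟨le_trans hs₂.1 (le_max_left _ _), max_le hs₂.2 (min_le_left _ _)⟩
  have hpeq : ∀ r ∈ Icc s₂ T, p r = r := fun r hr => by
    simp only [hp]; rw [min_eq_right hr.2, max_eq_right hr.1]
  set w : ℝ → ℝ := fun r => |Φ₁ (p r) - Φ₂ (p r)| with hw
  have hpcont : Continuous p := continuous_const.max (continuous_const.min continuous_id)
  have hwcont : Continuous w := by
    have h1 : Continuous (fun r => Φ₁ (p r)) :=
      hΦ₁.1.comp_continuous hpcont hpmem
    have h2 : Continuous (fun r => Φ₂ (p r)) :=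
      hΦ₂.1.comp_continuous hpcont hpmem
    exact (h1.sub h2).abs
  have hw0 : ∀ r, 0 ≤ w r := fun r => abs_nonneg _
  set ψ : ℝ → ℝ := fun t => ∫ r in s₂..t, w r with hψ
  have hψderiv : ∀ t : ℝ, HasDerivAt ψ (w t) t := fun t =>
    (hwcont.integral_hasStrictDerivAt s₂ t).hasDerivAt
  have hψcont : ContinuousOn ψ (Icc s₂ T) :=
    fun t _ => ((hψderiv t).continuousAt).continuousWithinAt
  -- integrability of the vector fields
  have hint₁ : ∀ {a b : ℝ}, a ∈ Icc t0 T → b ∈ Icc t0 T →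
      IntervalIntegrable (fun r => G r (Φ₁ r)) volume a b :=
    fun ha hb => carath_integrable t0 T G hmeas m hbound L hL hlip Φ₁ hΦ₁.1 ha hb
  have hint₂ : ∀ {a b : ℝ}, a ∈ Icc t0 T → b ∈ Icc t0 T →
      IntervalIntegrable (fun r => G r (Φ₂ r)) volume a b :=
    fun ha hb => carath_integrable t0 T G hmeas m hbound L hL hlip Φ₂ hΦ₂.1 ha hb
  -- key integral inequality
  have key : ∀ t ∈ Icc s₂ T, w t ≤ δ₀ + L * ψ t := by
    intro t htmem
    have hts : t ∈ Icc t0 T := ⟨le_trans hs₂.1 htmem.1, htmem.2⟩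
    have hwt : w t = |Φ₁ t - Φ₂ t| := by rw [hw]; simp only [hpeq t htmem]
    have hsplit : (∫ r in s₁..t, G r (Φ₁ r)) =
        (∫ r in s₁..s₂, G r (Φ₁ r)) + ∫ r in s₂..t, G r (Φ₁ r) :=
      (intervalIntegral.integral_add_adjacent_intervals
        (hint₁ hs₁ hs₂) (hint₁ hs₂ hts)).symm
    have hdiff : Φ₁ t - Φ₂ t = (x₁ - x₂) + (∫ r in s₁..s₂, G r (Φ₁ r)) +
        ∫ r in s₂..t, (G r (Φ₁ r) - G r (Φ₂ r)) := by
      rw [intervalIntegral.integral_sub (hint₁ hs₂ hts) (hint₂ hs₂ hts),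
        hΦ₁.2 t hts, hΦ₂.2 t hts, hsplit]
      ring
    have hB1 : |∫ r in s₁..s₂, G r (Φ₁ r)| ≤ m * |s₁ - s₂| := by
      have := intervalIntegral.norm_integral_le_of_norm_le_const
        (C := m) (f := fun r => G r (Φ₁ r)) (a := s₁) (b := s₂) ?_
      · rwa [Real.norm_eq_abs, abs_sub_comm s₂ s₁] at this
      · intro x hx
        rw [Set.uIoc_of_le hs] at hx
        exact hbound x ⟨le_trans hs₁.1 (le_of_lt hx.1), le_trans hx.2 hs₂.2⟩ (Φ₁ x)
    have hB2 : |∫ r in s₂..t, (G r (Φ₁ r) - G r (Φ₂ r))| ≤ L * ψ t := by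
      have hLw : IntervalIntegrable (fun r => L * w r) volume s₂ t :=
        (hwcont.const_smul L).intervalIntegrable _ _
      have h := intervalIntegral.norm_integral_le_abs_of_norm_le (μ := volume)
        (f := fun r => G r (Φ₁ r) - G r (Φ₂ r)) (g := fun r => L * w r)
        (a := s₂) (b := t) ?_ hLw
      · rw [Real.norm_eq_abs] at h
        refine h.trans (le_of_eq ?_)
        rw [abs_of_nonneg (intervalIntegral.integral_nonneg htmem.1
            (fun r _ => mul_nonneg hL (hw0 r))), hψ,
          ← intervalIntegral.integral_const_mul]
      · filter_upwards [ae_restrict_mem measurableSet_uIoc] with r hr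
        rw [Set.uIoc_of_le htmem.1] at hr
        have hr2 : r ∈ Icc s₂ T := ⟨le_of_lt hr.1, le_trans hr.2 htmem.2⟩
        have hrT : r ∈ Icc t0 T := ⟨le_trans hs₂.1 hr2.1, hr2.2⟩
        have := hlip r hrT (Φ₁ r) (Φ₂ r)
        rw [Real.norm_eq_abs]
        refine this.trans (le_of_eq ?_)
        rw [hw]; simp only [hpeq r hr2]
    calc w t = |Φ₁ t - Φ₂ t| := hwt
      _ ≤ |x₁ - x₂| + |∫ r in s₁..s₂, G r (Φ₁ r)| +
          |∫ r in s₂..t, (G r (Φ₁ r) - G r (Φ₂ r))| := by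
        rw [hdiff]; exact (abs_add_le _ _).trans (add_le_add_left (abs_add_le _ _) _)
      _ ≤ δ₀ + L * ψ t := by rw [hδ₀]; linarith
  -- Grönwall
  have hψnonneg : ∀ t ∈ Icc s₂ T, 0 ≤ ψ t := by
    intro t htmem
    exact intervalIntegral.integral_nonneg htmem.1 (fun r _ => hw0 r)
  have hgron : ∀ t ∈ Icc s₂ T, ψ t ≤ gronwallBound 0 L δ₀ (t - s₂) := by
    have := norm_le_gronwallBound_of_norm_deriv_right_le (f := ψ) (f' := w)
      (δ := 0) (K := L) (ε := δ₀) (a := s₂) (b := T) hψcont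
      (fun x _ => (hψderiv x).hasDerivWithinAt) (by simp [hψ]) ?_
    · intro t htmem
      have h := this t htmem
      rwa [Real.norm_eq_abs, abs_of_nonneg (hψnonneg t htmem)] at h
    · intro x hx
      have hx' : x ∈ Icc s₂ T := ⟨hx.1, le_of_lt hx.2⟩
      rw [Real.norm_eq_abs, Real.norm_eq_abs, abs_of_nonneg (hψnonneg x hx'),
        abs_of_nonneg (hw0 x)]
      linarith [key x hx']
  intro t htmem
  have h1 : |Φ₁ t - Φ₂ t| ≤ δ₀ + L * gronwallBound 0 L δ₀ (t - s₂) := by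
    have hwt : w t = |Φ₁ t - Φ₂ t| := by rw [hw]; simp only [hpeq t htmem]
    have := key t htmem
    rw [hwt] at this
    exact this.trans (by nlinarith [hgron t htmem])
  refine h1.trans (le_of_eq ?_)
  by_cases hL0 : L = 0
  · subst hL0; simp
  · rw [gronwallBound_of_K_ne_0 hL0]
    field_simp
    ring
end

section
/- Let Φ : [t0,T] × [t0,T] × ℝ → ℝ be a function such that for every (s,x), the map t ↦ Φ(t,s,x) is a Carathéodory solution with data (s,x). If x₁ < x₂ and s ∈ [t0,T], then Φ(t,s,x₁) < Φ(t,s,x₂) for every t ∈ [t0,T]; that is, distinct characteristic curves never intersect. -/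
open MeasureTheory Set

/-- Distinct characteristic curves never intersect: if `x₁ < x₂`, then
`Φ(t, s, x₁) < Φ(t, s, x₂)` for every `t ∈ [t0, T]`. -/
theorem caratheodory_characteristics_disjoint
    (t0 T : ℝ) (ht : t0 < T) (G : ℝ → ℝ → ℝ)
    (hmeas : ∀ x : ℝ, Measurable fun t => G t x)
    (m : ℝ) (hm : 0 ≤ m) (hbound : ∀ t ∈ Icc t0 T, ∀ x : ℝ, |G t x| ≤ m)
    (L : ℝ) (hL : 0 ≤ L)
    (hlip : ∀ t ∈ Icc t0 T, ∀ x y : ℝ, |G t x - G t y| ≤ L * |x - y|)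
    (Φ : ℝ → ℝ → ℝ → ℝ)
    (hΦ : ∀ s ∈ Icc t0 T, ∀ x : ℝ, IsCaratheodorySol t0 T G s x (fun t => Φ t s x))
    (s : ℝ) (hs : s ∈ Icc t0 T) (x₁ x₂ : ℝ) (hx : x₁ < x₂) :
    ∀ t ∈ Icc t0 T, Φ t s x₁ < Φ t s x₂ := by
  intro t htI
  by_contra hcon
  push_neg at hcon
  -- basic data
  have hc₁ : ContinuousOn (fun r => Φ r s x₁) (Icc t0 T) := (hΦ s hs x₁).1
  have hc₂ : ContinuousOn (fun r => Φ r s x₂) (Icc t0 T) := (hΦ s hs x₂).1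
  have he₁ : ∀ r ∈ Icc t0 T, Φ r s x₁ = x₁ + ∫ ρ in s..r, G ρ (Φ ρ s x₁) :=
    fun r hr => (hΦ s hs x₁).2 r hr
  have he₂ : ∀ r ∈ Icc t0 T, Φ r s x₂ = x₂ + ∫ ρ in s..r, G ρ (Φ ρ s x₂) :=
    fun r hr => (hΦ s hs x₂).2 r hr
  have hus₁ : Φ s s x₁ = x₁ := by simpa using he₁ s hs
  have hus₂ : Φ s s x₂ = x₂ := by simpa using he₂ s hs
  -- joint measurability of a clamped version of G
  set G' : ℝ → ℝ → ℝ := fun r y => G (max t0 (min r T)) y with hG'def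
  have hclamp : ∀ r, max t0 (min r T) ∈ Icc t0 T :=
    fun r => ⟨le_max_left _ _, max_le ht.le (min_le_right _ _)⟩
  have hG'cont : ∀ r, Continuous fun y => G' r y := by
    intro r
    have : LipschitzWith (Real.toNNReal L) (fun y => G' r y) := by
      apply LipschitzWith.of_dist_le_mul
      intro y z
      rw [Real.dist_eq, Real.dist_eq, Real.coe_toNNReal L hL]
      exact hlip _ (hclamp r) y z
    exact this.continuous
  have hG'meas : ∀ y, Measurable fun r => G' r y := by
    intro y
    exact (hmeas y).comp (measurable_const.max (measurable_id.min measurable_const))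
  have hF : Measurable (Function.uncurry fun y r => G' r y) :=
    measurable_uncurry_of_continuous_of_measurable (fun r => hG'cont r) (fun y => hG'meas y)
  -- integrability
  have hIntOn : ∀ x : ℝ, IntegrableOn (fun r => G r (Φ r s x)) (Icc t0 T) := by
    intro x
    have hφc : ContinuousOn (fun r => Φ r s x) (Icc t0 T) := (hΦ s hs x).1
    have hφae : AEMeasurable (fun r => Φ r s x) (volume.restrict (Icc t0 T)) :=
      hφc.aemeasurable measurableSet_Icc
    have hpair : AEMeasurable (fun r => ((Φ r s x : ℝ), r)) (volume.restrict (Icc t0 T)) :=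
      hφae.prodMk aemeasurable_id
    have hG'ae : AEMeasurable (fun r => G' r (Φ r s x)) (volume.restrict (Icc t0 T)) :=
      hF.comp_aemeasurable hpair
    have haeeq : ∀ᵐ r ∂(volume.restrict (Icc t0 T)), G' r (Φ r s x) = G r (Φ r s x) := by
      filter_upwards [ae_restrict_mem measurableSet_Icc] with r hr
      simp [hG'def, min_eq_left hr.2, max_eq_right hr.1]
    have hae : AEMeasurable (fun r => G r (Φ r s x)) (volume.restrict (Icc t0 T)) :=
      hG'ae.congr haeeq
    refine Integrable.mono' (g := fun _ => m) ?_ hae.aestronglyMeasurable ?_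
    · exact integrableOn_const measure_Icc_lt_top.ne
    · filter_upwards [ae_restrict_mem measurableSet_Icc] with r hr
      rw [Real.norm_eq_abs]
      exact hbound r hr _
  have hII : ∀ x : ℝ, ∀ a ∈ Icc t0 T, ∀ b ∈ Icc t0 T,
      IntervalIntegrable (fun r => G r (Φ r s x)) volume a b := by
    intro x a ha b hb
    rw [intervalIntegrable_iff]
    exact (hIntOn x).mono_set (uIoc_subset_uIcc.trans (uIcc_subset_Icc ha hb))
  -- the increment identity
  have hsplit : ∀ a ∈ Icc t0 T, ∀ b ∈ Icc t0 T,
      (Φ b s x₂ - Φ b s x₁) - (Φ a s x₂ - Φ a s x₁)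
        = ∫ r in a..b, (G r (Φ r s x₂) - G r (Φ r s x₁)) := by
    intro a ha b hb
    rw [intervalIntegral.integral_sub (hII x₂ a ha b hb) (hII x₁ a ha b hb),
        ← intervalIntegral.integral_interval_sub_left (hII x₂ s hs b hb) (hII x₂ s hs a ha),
        ← intervalIntegral.integral_interval_sub_left (hII x₁ s hs b hb) (hII x₁ s hs a ha),
        he₂ b hb, he₂ a ha, he₁ b hb, he₁ a ha]
    ring
  -- the contraction constant
  set δ : ℝ := 1 / (2 * (L + 1)) with hδdef
  have hδpos : 0 < δ := by positivity
  have hLδ : L * δ ≤ 1 / 2 := by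
    rw [hδdef, mul_one_div, div_le_div_iff₀ (by linarith) two_pos]
    nlinarith
  -- propagation of a zero
  have step : ∀ b ∈ Icc t0 T, Φ b s x₂ - Φ b s x₁ = 0 →
      ∀ r ∈ Icc t0 T, |r - b| ≤ δ → Φ r s x₂ - Φ r s x₁ = 0 := by
    intro b hb hub r hr hrb
    have hJsub : uIcc b r ⊆ Icc t0 T := uIcc_subset_Icc hb hr
    have hcontu : ContinuousOn (fun ρ => |Φ ρ s x₂ - Φ ρ s x₁|) (uIcc b r) :=
      ((hc₂.sub hc₁).mono hJsub).abs
    obtain ⟨c, hcJ, hcmax⟩ := isCompact_uIcc.exists_isMaxOn nonempty_uIcc hcontu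
    have hcI : c ∈ Icc t0 T := hJsub hcJ
    have hucb : Φ c s x₂ - Φ c s x₁ = ∫ ρ in b..c, (G ρ (Φ ρ s x₂) - G ρ (Φ ρ s x₁)) := by
      have h := hsplit b hb c hcI
      rw [hub, sub_zero] at h
      exact h
    have hbound' : ∀ ρ ∈ Set.uIoc b c,
        ‖G ρ (Φ ρ s x₂) - G ρ (Φ ρ s x₁)‖ ≤ L * |Φ c s x₂ - Φ c s x₁| := by
      intro ρ hρ
      have hρJ : ρ ∈ uIcc b r :=
        (uIcc_subset_uIcc left_mem_uIcc hcJ) (uIoc_subset_uIcc hρ)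
      have hρI : ρ ∈ Icc t0 T := hJsub hρJ
      rw [Real.norm_eq_abs]
      calc |G ρ (Φ ρ s x₂) - G ρ (Φ ρ s x₁)| ≤ L * |Φ ρ s x₂ - Φ ρ s x₁| :=
            hlip ρ hρI _ _
        _ ≤ L * |Φ c s x₂ - Φ c s x₁| := mul_le_mul_of_nonneg_left (hcmax hρJ) hL
    have hest : ‖∫ ρ in b..c, (G ρ (Φ ρ s x₂) - G ρ (Φ ρ s x₁))‖
        ≤ (L * |Φ c s x₂ - Φ c s x₁|) * |c - b| :=
      intervalIntegral.norm_integral_le_of_norm_le_const hbound'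
    have hcb : |c - b| ≤ δ := by
      rw [abs_sub_le_iff] at hrb ⊢
      rcases mem_uIcc.mp hcJ with ⟨h1, h2⟩ | ⟨h1, h2⟩ <;>
        exact ⟨by linarith [hrb.1, hrb.2, hδpos.le], by linarith [hrb.1, hrb.2, hδpos.le]⟩
    have habs : |Φ c s x₂ - Φ c s x₁| ≤ (L * |Φ c s x₂ - Φ c s x₁|) * δ := by
      calc |Φ c s x₂ - Φ c s x₁|
          = ‖∫ ρ in b..c, (G ρ (Φ ρ s x₂) - G ρ (Φ ρ s x₁))‖ := by
            rw [hucb, Real.norm_eq_abs]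
        _ ≤ (L * |Φ c s x₂ - Φ c s x₁|) * |c - b| := hest
        _ ≤ (L * |Φ c s x₂ - Φ c s x₁|) * δ := by
            apply mul_le_mul_of_nonneg_left hcb (by positivity)
    have hc0 : |Φ c s x₂ - Φ c s x₁| = 0 := by
      nlinarith [abs_nonneg (Φ c s x₂ - Φ c s x₁)]
    have hr0 : |Φ r s x₂ - Φ r s x₁| ≤ 0 := by
      have := hcmax right_mem_uIcc
      simpa [hc0] using this
    have := abs_nonneg (Φ r s x₂ - Φ r s x₁)
    have : |Φ r s x₂ - Φ r s x₁| = 0 := le_antisymm hr0 (abs_nonneg _)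
    exact abs_eq_zero.mp this
  -- find a zero of the difference between s and t
  have husp : 0 < Φ s s x₂ - Φ s s x₁ := by rw [hus₁, hus₂]; linarith
  have hJst : uIcc s t ⊆ Icc t0 T := uIcc_subset_Icc hs htI
  have hIVT := intermediate_value_uIcc (f := fun r => Φ r s x₂ - Φ r s x₁)
    (a := s) (b := t) ((hc₂.sub hc₁).mono hJst)
  have h0mem : (0 : ℝ) ∈ uIcc (Φ s s x₂ - Φ s s x₁) (Φ t s x₂ - Φ t s x₁) := by
    rw [mem_uIcc]
    right
    exact ⟨by linarith, by linarith⟩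
  obtain ⟨t₁, ht₁J, ht₁0⟩ := hIVT h0mem
  have ht₁I : t₁ ∈ Icc t0 T := hJst ht₁J
  have ht₁0' : Φ t₁ s x₂ - Φ t₁ s x₁ = 0 := ht₁0
  -- induction: the difference vanishes within distance n*δ of t₁
  have ind : ∀ n : ℕ, ∀ r ∈ Icc t0 T, |r - t₁| ≤ n * δ → Φ r s x₂ - Φ r s x₁ = 0 := by
    intro n
    induction n with
    | zero =>
      intro r hr h0
      have : r = t₁ := by
        have : |r - t₁| ≤ 0 := by simpa using h0
        have := le_antisymm this (abs_nonneg _)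
        have := abs_eq_zero.mp this
        linarith [sub_eq_zero.mp this]
      rw [this]; exact ht₁0'
    | succ n ih =>
      intro r hr hrn
      have hδn : (0:ℝ) ≤ n * δ := by positivity
      push_cast at hrn
      rw [abs_sub_le_iff] at hrn
      rcases le_total r t₁ with hle | hle
      · set b : ℝ := max r (t₁ - n * δ) with hbdef
        have hbr : r ≤ b := le_max_left _ _
        have hbn : t₁ - n * δ ≤ b := le_max_right _ _
        have hbt : b ≤ t₁ := max_le hle (by linarith)
        have hbI : b ∈ Icc t0 T := ⟨le_trans hr.1 hbr, le_trans hbt ht₁I.2⟩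
        have hb0 : Φ b s x₂ - Φ b s x₁ = 0 := by
          apply ih b hbI
          rw [abs_sub_le_iff]
          constructor <;> linarith
        apply step b hbI hb0 r hr
        rw [abs_sub_le_iff]
        constructor
        · linarith [hδpos.le]
        · rcases max_choice r (t₁ - n * δ) with h | h <;> rw [hbdef, h] <;>
            linarith [hδpos.le]
      · set b : ℝ := min r (t₁ + n * δ) with hbdef
        have hbr : b ≤ r := min_le_left _ _
        have hbn : b ≤ t₁ + n * δ := min_le_right _ _
        have hbt : t₁ ≤ b := le_min hle (by linarith)
        have hbI : b ∈ Icc t0 T := ⟨le_trans ht₁I.1 hbt, le_trans hbr hr.2⟩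
        have hb0 : Φ b s x₂ - Φ b s x₁ = 0 := by
          apply ih b hbI
          rw [abs_sub_le_iff]
          constructor <;> linarith
        apply step b hbI hb0 r hr
        rw [abs_sub_le_iff]
        constructor
        · rcases min_choice r (t₁ + n * δ) with h | h <;> rw [hbdef, h] <;>
            linarith [hδpos.le]
        · linarith [hδpos.le]
  -- conclude: the difference vanishes at s, contradiction
  obtain ⟨n, hn⟩ := exists_nat_ge ((T - t0) / δ)
  have hsdist : |s - t₁| ≤ n * δ := by
    have h1 : |s - t₁| ≤ T - t0 := by
      rw [abs_sub_le_iff]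
      constructor <;> linarith [hs.1, hs.2, ht₁I.1, ht₁I.2]
    have h2 : T - t0 ≤ n * δ := by
      rw [div_le_iff₀ hδpos] at hn
      linarith
    linarith
  have := ind n s hs hsdist
  rw [hus₁, hus₂] at this
  linarith
end

section
/- Let Φ : [t0,T] × [t0,T] × ℝ → ℝ be a function such that for every (s,x), the map t ↦ Φ(t,s,x) is a Carathéodory solution with data (s,x), and assume in addition that G(r,1) > 0 for every r ∈ [t0,T]. Then for every t ∈ [t0,T] and every x with 1 ≤ x ≤ Φ(t,t0,1), there exists a unique s ∈ [t0,t] such that Φ(s,t,x) = 1 (equivalently, Φ(t,s,1) = x). This defines the entry-time function φ on the closure of Ω₁ = {(t,x) : x < Φ(t,t0,1)}. -/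
open MeasureTheory Set

namespace CarathAux

lemma uIoc_subset_Icc {t0 T a b : ℝ} (ha : a ∈ Icc t0 T) (hb : b ∈ Icc t0 T) :
    Set.uIoc a b ⊆ Icc t0 T := by
  intro v hv
  rw [Set.mem_uIoc] at hv
  obtain ⟨h1, h2⟩ | ⟨h1, h2⟩ := hv <;>
    exact ⟨by linarith [ha.1, hb.1], by linarith [ha.2, hb.2]⟩

lemma abs_sub_le_of_mem_uIoc {c u v : ℝ} (hv : v ∈ Set.uIoc c u) : |v - c| ≤ |u - c| := by
  rw [Set.mem_uIoc] at hv
  have h1 := le_abs_self (u - c)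
  have h2 := neg_abs_le (u - c)
  obtain ⟨ha, hb⟩ | ⟨ha, hb⟩ := hv <;> rw [abs_le] <;> constructor <;> linarith

lemma integrable_comp (t0 T : ℝ) (htT : t0 ≤ T) (G : ℝ → ℝ → ℝ)
    (hmeas : ∀ x : ℝ, Measurable fun t => G t x)
    (m L : ℝ) (hL : 0 ≤ L)
    (hbound : ∀ t ∈ Icc t0 T, ∀ x : ℝ, |G t x| ≤ m)
    (hlip : ∀ t ∈ Icc t0 T, ∀ x y : ℝ, |G t x - G t y| ≤ L * |x - y|)
    (ψ : ℝ → ℝ) (hψ : ContinuousOn ψ (Icc t0 T))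
    {a b : ℝ} (ha : a ∈ Icc t0 T) (hb : b ∈ Icc t0 T) :
    IntervalIntegrable (fun r => G r (ψ r)) volume a b := by
  set H : ℝ → ℝ → ℝ := fun t x => if t ∈ Icc t0 T then G t x else 0 with hH
  have hproj : ∀ u : ℝ, max t0 (min u T) ∈ Icc t0 T := fun u =>
    ⟨le_max_left _ _, max_le htT (min_le_right u T)⟩
  have hcproj : Continuous fun u : ℝ => max t0 (min u T) :=
    continuous_const.max (continuous_id.min continuous_const)
  set ψ' : ℝ → ℝ := fun u => ψ (max t0 (min u T)) with hψ'
  have hψ'c : Continuous ψ' := hψ.comp_continuous hcproj hproj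
  have h1 : ∀ x : ℝ, Measurable fun t => H t x := fun x =>
    Measurable.ite measurableSet_Icc (hmeas x) measurable_const
  have h2 : ∀ t : ℝ, Continuous fun x => H t x := by
    intro t
    by_cases h : t ∈ Icc t0 T
    · have hl : LipschitzWith ⟨L, hL⟩ (fun x => G t x) := by
        apply LipschitzWith.of_dist_le_mul
        intro x y
        rw [Real.dist_eq, Real.dist_eq]; exact hlip t h x y
      show Continuous fun x => if t ∈ Icc t0 T then G t x else 0
      simp only [if_pos h]
      exact hl.continuous
    · show Continuous fun x => if t ∈ Icc t0 T then G t x else 0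
      simp only [if_neg h]
      exact continuous_const
  have hunc : Measurable (Function.uncurry fun x t => H t x) :=
    measurable_uncurry_of_continuous_of_measurable h2 h1
  have hm : Measurable fun t => H t (ψ' t) :=
    hunc.comp (hψ'c.measurable.prodMk measurable_id)
  rw [intervalIntegrable_iff]
  have hint : IntegrableOn (fun t => H t (ψ' t)) (Set.uIoc a b) volume := by
    apply Integrable.mono' (g := fun _ => max m 0)
    · exact integrableOn_const measure_Ioc_lt_top.ne
    · exact (hm.aestronglyMeasurable).restrict
    · refine Filter.Eventually.of_forall fun r => ?_
      show ‖if r ∈ Icc t0 T then G r (ψ' r) else 0‖ ≤ max m 0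
      by_cases h : r ∈ Icc t0 T
      · rw [if_pos h, Real.norm_eq_abs]
        exact le_max_of_le_left (hbound r h (ψ' r))
      · rw [if_neg h]
        simpa using le_max_right m 0
  apply hint.congr_fun _ measurableSet_uIoc
  intro r hr
  have hrI : r ∈ Icc t0 T := uIoc_subset_Icc ha hb hr
  have hpr : max t0 (min r T) = r := by
    rw [min_eq_left hrI.2, max_eq_right hrI.1]
  show (if r ∈ Icc t0 T then G r (ψ' r) else 0) = G r (ψ r)
  rw [if_pos hrI]
  simp only [hψ', hpr]


lemma Lδ_le {L : ℝ} (hL : 0 ≤ L) : L * (4*(L+1))⁻¹ ≤ 4⁻¹ := by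
  have h4 : (0:ℝ) < 4*(L+1) := by positivity
  have hi : (0:ℝ) ≤ (4*(L+1))⁻¹ := by positivity
  nlinarith [mul_inv_cancel₀ (ne_of_gt h4)]

lemma window_eq (t0 T : ℝ) (G : ℝ → ℝ → ℝ) (m L : ℝ) (hm : 0 ≤ m) (hL : 0 ≤ L)
    (hbound : ∀ t ∈ Icc t0 T, ∀ x : ℝ, |G t x| ≤ m)
    (hlip : ∀ t ∈ Icc t0 T, ∀ x y : ℝ, |G t x - G t y| ≤ L * |x - y|)
    (ψ χ : ℝ → ℝ)
    (hdψ : ∀ a ∈ Icc t0 T, ∀ b ∈ Icc t0 T, ψ b - ψ a = ∫ r in a..b, G r (ψ r))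
    (hdχ : ∀ a ∈ Icc t0 T, ∀ b ∈ Icc t0 T, χ b - χ a = ∫ r in a..b, G r (χ r))
    (hiψ : ∀ a ∈ Icc t0 T, ∀ b ∈ Icc t0 T, IntervalIntegrable (fun r => G r (ψ r)) volume a b)
    (hiχ : ∀ a ∈ Icc t0 T, ∀ b ∈ Icc t0 T, IntervalIntegrable (fun r => G r (χ r)) volume a b)
    {c : ℝ} (hc : c ∈ Icc t0 T) (hcc : ψ c = χ c) :
    ∀ u ∈ Icc t0 T, |u - c| ≤ (4*(L+1))⁻¹ → ψ u = χ u := by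
  set δ : ℝ := (4*(L+1))⁻¹ with hδdef
  have hδpos : 0 < δ := by positivity
  have hLδ : L * δ ≤ 4⁻¹ := Lδ_le hL
  have key : ∀ n : ℕ, ∀ u ∈ Icc t0 T, |u - c| ≤ δ → |ψ u - χ u| ≤ 2*m*δ / 2^n := by
    intro n
    induction n with
    | zero =>
      intro u hu hud
      have e1 : ψ u - ψ c = ∫ r in c..u, G r (ψ r) := hdψ c hc u hu
      have e2 : χ u - χ c = ∫ r in c..u, G r (χ r) := hdχ c hc u hu
      have b1 : |ψ u - ψ c| ≤ m * |u - c| := by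
        rw [e1, ← Real.norm_eq_abs]
        apply intervalIntegral.norm_integral_le_of_norm_le_const
        intro v hv
        rw [Real.norm_eq_abs]
        exact hbound v (uIoc_subset_Icc hc hu hv) (ψ v)
      have b2 : |χ u - χ c| ≤ m * |u - c| := by
        rw [e2, ← Real.norm_eq_abs]
        apply intervalIntegral.norm_integral_le_of_norm_le_const
        intro v hv
        rw [Real.norm_eq_abs]
        exact hbound v (uIoc_subset_Icc hc hu hv) (χ v)
      have hmud : m * |u - c| ≤ m * δ := mul_le_mul_of_nonneg_left hud hm
      have hsplit : ψ u - χ u = (ψ u - ψ c) - (χ u - χ c) := by rw [hcc]; ring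
      have h3 : |ψ u - χ u| ≤ |ψ u - ψ c| + |χ u - χ c| := by
        rw [hsplit]; exact abs_sub (ψ u - ψ c) (χ u - χ c)
      rw [pow_zero, div_one]
      linarith
    | succ n ih =>
      intro u hu hud
      have e : ψ u - χ u = ∫ r in c..u, (G r (ψ r) - G r (χ r)) := by
        rw [intervalIntegral.integral_sub (hiψ c hc u hu) (hiχ c hc u hu),
          ← hdψ c hc u hu, ← hdχ c hc u hu, hcc]
        ring
      have b : |ψ u - χ u| ≤ (L * (2*m*δ / 2^n)) * |u - c| := by
        rw [e, ← Real.norm_eq_abs]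
        apply intervalIntegral.norm_integral_le_of_norm_le_const
        intro v hv
        have hvI := uIoc_subset_Icc hc hu hv
        have hvd : |v - c| ≤ δ := le_trans (abs_sub_le_of_mem_uIoc hv) hud
        rw [Real.norm_eq_abs]
        calc |G v (ψ v) - G v (χ v)| ≤ L * |ψ v - χ v| := hlip v hvI _ _
          _ ≤ L * (2*m*δ / 2^n) := mul_le_mul_of_nonneg_left (ih v hvI hvd) hL
      have hq : (0:ℝ) ≤ 2*m*δ / 2^n := by positivity
      have h6 : (L * (2*m*δ / 2^n)) * |u - c| ≤ (L*δ) * (2*m*δ / 2^n) :=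
        calc (L * (2*m*δ/2^n)) * |u - c| ≤ (L * (2*m*δ/2^n)) * δ :=
              mul_le_mul_of_nonneg_left hud (mul_nonneg hL hq)
          _ = (L*δ) * (2*m*δ/2^n) := by ring
      have h7 : (L*δ) * (2*m*δ / 2^n) ≤ 4⁻¹ * (2*m*δ / 2^n) :=
        mul_le_mul_of_nonneg_right hLδ hq
      have h8 : 2*m*δ / 2^(n+1) = 2⁻¹ * (2*m*δ / 2^n) := by rw [pow_succ]; ring
      rw [h8]
      linarith
  intro u hu hud
  have htend : Filter.Tendsto (fun n : ℕ => 2*m*δ / 2^n) Filter.atTop (nhds 0) := by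
    apply Filter.Tendsto.div_atTop tendsto_const_nhds
    exact tendsto_pow_atTop_atTop_of_one_lt one_lt_two
  have h0 : |ψ u - χ u| ≤ 0 :=
    ge_of_tendsto htend (Filter.Eventually.of_forall fun n => key n u hu hud)
  have := abs_nonpos_iff.mp h0
  linarith [sub_eq_zero.mp this, le_refl (ψ u)]

end CarathAux
namespace CarathAux

lemma global_eq (t0 T : ℝ) (G : ℝ → ℝ → ℝ) (m L : ℝ) (hm : 0 ≤ m) (hL : 0 ≤ L)
    (hbound : ∀ t ∈ Icc t0 T, ∀ x : ℝ, |G t x| ≤ m)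
    (hlip : ∀ t ∈ Icc t0 T, ∀ x y : ℝ, |G t x - G t y| ≤ L * |x - y|)
    (ψ χ : ℝ → ℝ)
    (hdψ : ∀ a ∈ Icc t0 T, ∀ b ∈ Icc t0 T, ψ b - ψ a = ∫ r in a..b, G r (ψ r))
    (hdχ : ∀ a ∈ Icc t0 T, ∀ b ∈ Icc t0 T, χ b - χ a = ∫ r in a..b, G r (χ r))
    (hiψ : ∀ a ∈ Icc t0 T, ∀ b ∈ Icc t0 T, IntervalIntegrable (fun r => G r (ψ r)) volume a b)
    (hiχ : ∀ a ∈ Icc t0 T, ∀ b ∈ Icc t0 T, IntervalIntegrable (fun r => G r (χ r)) volume a b)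
    {c : ℝ} (hc : c ∈ Icc t0 T) (hcc : ψ c = χ c) :
    ∀ u ∈ Icc t0 T, ψ u = χ u := by
  set δ : ℝ := (4*(L+1))⁻¹ with hδdef
  have hδpos : 0 < δ := by positivity
  have window : ∀ c' ∈ Icc t0 T, ψ c' = χ c' →
      ∀ u ∈ Icc t0 T, |u - c'| ≤ δ → ψ u = χ u := fun c' hc' hcc' =>
    window_eq t0 T G m L hm hL hbound hlip ψ χ hdψ hdχ hiψ hiχ hc' hcc'
  have key : ∀ n : ℕ, ∀ u ∈ Icc t0 T, |u - c| ≤ n * δ → ψ u = χ u := by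
    intro n
    induction n with
    | zero =>
      intro u hu hud
      have : |u - c| ≤ 0 := by simpa using hud
      have : u = c := by
        have := abs_nonpos_iff.mp this
        linarith [sub_eq_zero.mp this]
      rw [this, hcc]
    | succ n ih =>
      intro u hu hud
      by_cases h : |u - c| ≤ n * δ
      · exact ih u hu h
      push_neg at h
      have hnδ : 0 ≤ (n : ℝ) * δ := mul_nonneg (Nat.cast_nonneg n) hδpos.le
      have hud' : |u - c| ≤ n * δ + δ := by
        push_cast at hud
        linarith
      rcases le_total c u with hcu | huc
      · have habs : |u - c| = u - c := abs_of_nonneg (by linarith)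
        set c' := min (c + n*δ) u with hc'def
        have hc'1 : c ≤ c' := le_min (by linarith) hcu
        have hc'I : c' ∈ Icc t0 T := ⟨le_trans hc.1 hc'1, le_trans (min_le_right _ _) hu.2⟩
        have h1 : |c' - c| ≤ n*δ := by
          rw [abs_of_nonneg (by linarith)]
          linarith [min_le_left (c + n*δ) u]
        have hcc' : ψ c' = χ c' := ih c' hc'I h1
        have h2 : |u - c'| ≤ δ := by
          rw [abs_of_nonneg (by linarith [min_le_right (c + n*δ) u])]
          have hh : u - δ ≤ c + n*δ := by rw [habs] at hud'; linarith
          have := le_min hh (by linarith : u - δ ≤ u)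
          linarith
        exact window c' hc'I hcc' u hu h2
      · have habs : |u - c| = c - u := by rw [abs_sub_comm]; exact abs_of_nonneg (by linarith)
        set c' := max (c - n*δ) u with hc'def
        have hc'1 : c' ≤ c := max_le (by linarith) huc
        have hc'I : c' ∈ Icc t0 T := ⟨le_trans hu.1 (le_max_right _ _), le_trans hc'1 hc.2⟩
        have h1 : |c' - c| ≤ n*δ := by
          rw [abs_sub_comm, abs_of_nonneg (by linarith)]
          linarith [le_max_left (c - n*δ) u]
        have hcc' : ψ c' = χ c' := ih c' hc'I h1
        have h2 : |u - c'| ≤ δ := by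
          rw [abs_sub_comm, abs_of_nonneg (by linarith [le_max_right (c - n*δ) u])]
          have hh : c - n*δ ≤ u + δ := by rw [habs] at hud'; linarith
          have := max_le hh (by linarith : u ≤ u + δ)
          linarith
        exact window c' hc'I hcc' u hu h2
  intro u hu
  obtain ⟨n, hn⟩ := exists_nat_ge (|u - c| / δ)
  refine key n u hu ?_
  rw [div_le_iff₀ hδpos] at hn
  linarith

end CarathAux
namespace CarathAux
section
variable (t0 T : ℝ) (G : ℝ → ℝ → ℝ) (m L : ℝ)

lemma after_pos (hm : 0 ≤ m) (hL : 0 ≤ L)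
    (hbound : ∀ t ∈ Icc t0 T, ∀ x : ℝ, |G t x| ≤ m)
    (hlip : ∀ t ∈ Icc t0 T, ∀ x y : ℝ, |G t x - G t y| ≤ L * |x - y|)
    (hG1 : ∀ r ∈ Icc t0 T, 0 < G r 1)
    (ψ : ℝ → ℝ)
    (hdψ : ∀ a ∈ Icc t0 T, ∀ b ∈ Icc t0 T, ψ b - ψ a = ∫ r in a..b, G r (ψ r))
    (hiψ : ∀ a ∈ Icc t0 T, ∀ b ∈ Icc t0 T, IntervalIntegrable (fun r => G r (ψ r)) volume a b)
    (hi1 : ∀ a ∈ Icc t0 T, ∀ b ∈ Icc t0 T, IntervalIntegrable (fun v => G v 1) volume a b)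
    {s1 r : ℝ} (hs1 : s1 ∈ Icc t0 T) (hr : r ∈ Icc t0 T) (h1 : ψ s1 = 1)
    (hlt : s1 < r) (hle : r - s1 ≤ (4*(L+1))⁻¹) : 1 < ψ r := by
  set δ : ℝ := (4*(L+1))⁻¹ with hδdef
  have hδpos : 0 < δ := by positivity
  have hLδ : L * δ ≤ 4⁻¹ := Lδ_le hL
  set F : ℝ → ℝ := fun u => ∫ v in s1..u, G v 1 with hFdef
  have hsubI : ∀ u ∈ Icc t0 T, Icc s1 u ⊆ Icc t0 T := fun u hu x hx =>
    ⟨le_trans hs1.1 hx.1, le_trans hx.2 hu.2⟩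
  have Fnn : ∀ u ∈ Icc t0 T, s1 ≤ u → 0 ≤ F u := fun u hu hsu =>
    intervalIntegral.integral_nonneg hsu fun x hx => (hG1 x (hsubI u hu hx)).le
  have Fmono : ∀ u ∈ Icc t0 T, ∀ v ∈ Icc t0 T, s1 ≤ u → u ≤ v → F u ≤ F v := by
    intro u hu v hv hsu huv
    have hdiff : F v - F u = ∫ w in u..v, G w 1 :=
      intervalIntegral.integral_interval_sub_left (hi1 s1 hs1 v hv) (hi1 s1 hs1 u hu)
    have hnn : 0 ≤ ∫ w in u..v, G w 1 :=
      intervalIntegral.integral_nonneg huv fun x hx =>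
        (hG1 x ⟨le_trans hu.1 hx.1, le_trans hx.2 hv.2⟩).le
    linarith
  have key : ∀ n : ℕ, ∀ u ∈ Icc t0 T, s1 ≤ u → u - s1 ≤ δ →
      |ψ u - 1| ≤ 2 * F u + m * δ / 2^n := by
    intro n
    induction n with
    | zero =>
      intro u hu hsu hud
      have e1 : ψ u - 1 = ∫ v in s1..u, G v (ψ v) := by
        have := hdψ s1 hs1 u hu; rwa [h1] at this
      have b1 : |ψ u - 1| ≤ m * |u - s1| := by
        rw [e1, ← Real.norm_eq_abs]
        apply intervalIntegral.norm_integral_le_of_norm_le_const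
        intro v hv
        rw [Real.norm_eq_abs]
        exact hbound v (uIoc_subset_Icc hs1 hu hv) (ψ v)
      have habs : |u - s1| = u - s1 := abs_of_nonneg (by linarith)
      have : m * |u - s1| ≤ m * δ := by rw [habs]; exact mul_le_mul_of_nonneg_left hud hm
      have := Fnn u hu hsu
      rw [pow_zero, div_one]
      linarith
    | succ n ih =>
      intro u hu hsu hud
      set q : ℝ := m * δ / 2^n with hqdef
      have hq : 0 ≤ q := by positivity
      have hFu : 0 ≤ F u := Fnn u hu hsu
      have e : ψ u - 1 = F u + ∫ v in s1..u, (G v (ψ v) - G v 1) := by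
        rw [intervalIntegral.integral_sub (hiψ s1 hs1 u hu) (hi1 s1 hs1 u hu),
          ← hdψ s1 hs1 u hu, h1]
        ring
      have b : |∫ v in s1..u, (G v (ψ v) - G v 1)| ≤ (L * (2 * F u + q)) * |u - s1| := by
        rw [← Real.norm_eq_abs]
        apply intervalIntegral.norm_integral_le_of_norm_le_const
        intro v hv
        have hvI := uIoc_subset_Icc hs1 hu hv
        rw [Set.uIoc_of_le hsu] at hv
        have hIH := ih v hvI hv.1.le (by linarith [hv.2])
        have hFv : F v ≤ F u := Fmono v hvI u hu hv.1.le hv.2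
        rw [Real.norm_eq_abs]
        calc |G v (ψ v) - G v 1| ≤ L * |ψ v - 1| := hlip v hvI _ _
          _ ≤ L * (2 * F u + q) := by
              apply mul_le_mul_of_nonneg_left _ hL
              linarith
      have habs : |u - s1| = u - s1 := abs_of_nonneg (by linarith)
      have hC : 0 ≤ L * (2 * F u + q) := mul_nonneg hL (by linarith)
      have b2 : (L * (2 * F u + q)) * |u - s1| ≤ (L * δ) * (2 * F u + q) := by
        calc (L * (2 * F u + q)) * |u - s1| ≤ (L * (2 * F u + q)) * δ := by
              rw [habs]; exact mul_le_mul_of_nonneg_left hud hC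
          _ = (L * δ) * (2 * F u + q) := by ring
      have b3 : (L * δ) * (2 * F u + q) ≤ 4⁻¹ * (2 * F u + q) :=
        mul_le_mul_of_nonneg_right hLδ (by linarith)
      have h8 : m * δ / 2^(n+1) = 2⁻¹ * q := by rw [hqdef, pow_succ]; ring
      have habsle := abs_le.mp (le_trans (le_trans b b2) b3 |>.trans_eq' rfl)
      rw [h8]
      have := abs_le.mp (le_trans b (le_trans b2 b3))
      rw [e]
      have h9 : |F u + ∫ v in s1..u, (G v (ψ v) - G v 1)| ≤
          F u + 4⁻¹ * (2 * F u + q) := by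
        rw [abs_le]
        constructor <;> nlinarith [this.1, this.2, hFu]
      nlinarith [h9]
  -- pass to the limit
  have habs2 : ∀ u ∈ Icc t0 T, s1 ≤ u → u - s1 ≤ δ → |ψ u - 1| ≤ 2 * F u := by
    intro u hu hsu hud
    have ht2 : Filter.Tendsto (fun n : ℕ => 2 * F u + m * δ / 2^n) Filter.atTop
        (nhds (2 * F u + 0)) :=
      Filter.Tendsto.add tendsto_const_nhds
        (Filter.Tendsto.div_atTop tendsto_const_nhds
          (tendsto_pow_atTop_atTop_of_one_lt one_lt_two))
    rw [add_zero] at ht2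
    exact ge_of_tendsto ht2 (Filter.Eventually.of_forall fun n => key n u hu hsu hud)
  -- strict positivity
  have hFpos : 0 < F r :=
    intervalIntegral.intervalIntegral_pos_of_pos_on (hi1 s1 hs1 r hr)
      (fun x hx => hG1 x ⟨le_trans hs1.1 hx.1.le, le_trans hx.2.le hr.2⟩) hlt
  have e : ψ r - 1 = F r + ∫ v in s1..r, (G v (ψ v) - G v 1) := by
    rw [intervalIntegral.integral_sub (hiψ s1 hs1 r hr) (hi1 s1 hs1 r hr),
      ← hdψ s1 hs1 r hr, h1]
    ring
  have bE : |∫ v in s1..r, (G v (ψ v) - G v 1)| ≤ (L * (2 * F r)) * |r - s1| := by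
    rw [← Real.norm_eq_abs]
    apply intervalIntegral.norm_integral_le_of_norm_le_const
    intro v hv
    have hvI := uIoc_subset_Icc hs1 hr hv
    rw [Set.uIoc_of_le hlt.le] at hv
    have hb := habs2 v hvI hv.1.le (by linarith [hv.2])
    have hFv : F v ≤ F r := Fmono v hvI r hr hv.1.le hv.2
    rw [Real.norm_eq_abs]
    calc |G v (ψ v) - G v 1| ≤ L * |ψ v - 1| := hlip v hvI _ _
      _ ≤ L * (2 * F r) := by
          apply mul_le_mul_of_nonneg_left _ hL
          linarith
  have habs3 : |r - s1| = r - s1 := abs_of_nonneg (by linarith)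
  have b2 : (L * (2 * F r)) * |r - s1| ≤ (L * δ) * (2 * F r) := by
    calc (L * (2 * F r)) * |r - s1| ≤ (L * (2 * F r)) * δ := by
          rw [habs3]
          exact mul_le_mul_of_nonneg_left hle (mul_nonneg hL (by linarith))
      _ = (L * δ) * (2 * F r) := by ring
  have b3 : (L * δ) * (2 * F r) ≤ 4⁻¹ * (2 * F r) :=
    mul_le_mul_of_nonneg_right hLδ (by linarith)
  have hE := abs_le.mp (le_trans bE (le_trans b2 b3))
  nlinarith [hE.1, hE.2, hFpos]

end
end CarathAux
namespace CarathAux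

lemma before_neg (t0 T : ℝ) (G : ℝ → ℝ → ℝ) (m L : ℝ) (hm : 0 ≤ m) (hL : 0 ≤ L)
    (hbound : ∀ t ∈ Icc t0 T, ∀ x : ℝ, |G t x| ≤ m)
    (hlip : ∀ t ∈ Icc t0 T, ∀ x y : ℝ, |G t x - G t y| ≤ L * |x - y|)
    (hG1 : ∀ r ∈ Icc t0 T, 0 < G r 1)
    (ψ : ℝ → ℝ)
    (hdψ : ∀ a ∈ Icc t0 T, ∀ b ∈ Icc t0 T, ψ b - ψ a = ∫ r in a..b, G r (ψ r))
    (hiψ : ∀ a ∈ Icc t0 T, ∀ b ∈ Icc t0 T, IntervalIntegrable (fun r => G r (ψ r)) volume a b)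
    (hi1 : ∀ a ∈ Icc t0 T, ∀ b ∈ Icc t0 T, IntervalIntegrable (fun v => G v 1) volume a b)
    {s2 r : ℝ} (hs2 : s2 ∈ Icc t0 T) (hr : r ∈ Icc t0 T) (h1 : ψ s2 = 1)
    (hlt : r < s2) (hle : s2 - r ≤ (4*(L+1))⁻¹) : ψ r < 1 := by
  set δ : ℝ := (4*(L+1))⁻¹ with hδdef
  have hδpos : 0 < δ := by positivity
  have hLδ : L * δ ≤ 4⁻¹ := Lδ_le hL
  set F : ℝ → ℝ := fun u => ∫ v in u..s2, G v 1 with hFdef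
  have Fnn : ∀ u ∈ Icc t0 T, u ≤ s2 → 0 ≤ F u := fun u hu hsu =>
    intervalIntegral.integral_nonneg hsu fun x hx =>
      (hG1 x ⟨le_trans hu.1 hx.1, le_trans hx.2 hs2.2⟩).le
  have Fanti : ∀ u ∈ Icc t0 T, ∀ v ∈ Icc t0 T, u ≤ v → v ≤ s2 → F v ≤ F u := by
    intro u hu v hv huv hvs
    have e2 : (∫ w in s2..v, G w 1) - ∫ w in s2..u, G w 1 = ∫ w in u..v, G w 1 :=
      intervalIntegral.integral_interval_sub_left (hi1 s2 hs2 v hv) (hi1 s2 hs2 u hu)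
    have hnn : 0 ≤ ∫ w in u..v, G w 1 :=
      intervalIntegral.integral_nonneg huv fun x hx =>
        (hG1 x ⟨le_trans hu.1 hx.1, le_trans hx.2 hv.2⟩).le
    have e3 : F u = -∫ w in s2..u, G w 1 := by
      rw [hFdef]; simp [intervalIntegral.integral_symm s2 u]
    have e4 : F v = -∫ w in s2..v, G w 1 := by
      rw [hFdef]; simp [intervalIntegral.integral_symm s2 v]
    rw [e3, e4]
    linarith
  have key : ∀ n : ℕ, ∀ u ∈ Icc t0 T, u ≤ s2 → s2 - u ≤ δ →
      |ψ u - 1| ≤ 2 * F u + m * δ / 2^n := by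
    intro n
    induction n with
    | zero =>
      intro u hu hsu hud
      have e1 : ψ u - 1 = ∫ v in s2..u, G v (ψ v) := by
        have := hdψ s2 hs2 u hu; rwa [h1] at this
      have b1 : |ψ u - 1| ≤ m * |u - s2| := by
        rw [e1, ← Real.norm_eq_abs]
        apply intervalIntegral.norm_integral_le_of_norm_le_const
        intro v hv
        rw [Real.norm_eq_abs]
        exact hbound v (uIoc_subset_Icc hs2 hu hv) (ψ v)
      have habs : |u - s2| = s2 - u := by rw [abs_sub_comm]; exact abs_of_nonneg (by linarith)
      have : m * |u - s2| ≤ m * δ := by rw [habs]; exact mul_le_mul_of_nonneg_left hud hm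
      have := Fnn u hu hsu
      rw [pow_zero, div_one]
      linarith
    | succ n ih =>
      intro u hu hsu hud
      set q : ℝ := m * δ / 2^n with hqdef
      have hq : 0 ≤ q := by positivity
      have hFu : 0 ≤ F u := Fnn u hu hsu
      have e : ψ u - 1 = -(F u) - ∫ v in u..s2, (G v (ψ v) - G v 1) := by
        have h0 := hdψ s2 hs2 u hu
        rw [intervalIntegral.integral_symm u s2, h1] at h0
        rw [intervalIntegral.integral_sub (hiψ u hu s2 hs2) (hi1 u hu s2 hs2)]
        rw [hFdef]
        linarith
      have b : |∫ v in u..s2, (G v (ψ v) - G v 1)| ≤ (L * (2 * F u + q)) * |s2 - u| := by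
        rw [← Real.norm_eq_abs]
        apply intervalIntegral.norm_integral_le_of_norm_le_const
        intro v hv
        have hvI := uIoc_subset_Icc hu hs2 hv
        rw [Set.uIoc_of_le hsu] at hv
        have hIH := ih v hvI hv.2 (by linarith [hv.1])
        have hFv : F v ≤ F u := Fanti u hu v hvI hv.1.le hv.2
        rw [Real.norm_eq_abs]
        calc |G v (ψ v) - G v 1| ≤ L * |ψ v - 1| := hlip v hvI _ _
          _ ≤ L * (2 * F u + q) := by
              apply mul_le_mul_of_nonneg_left _ hL
              linarith
      have habs : |s2 - u| = s2 - u := abs_of_nonneg (by linarith)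
      have hC : 0 ≤ L * (2 * F u + q) := mul_nonneg hL (by linarith)
      have b2 : (L * (2 * F u + q)) * |s2 - u| ≤ (L * δ) * (2 * F u + q) := by
        calc (L * (2 * F u + q)) * |s2 - u| ≤ (L * (2 * F u + q)) * δ := by
              rw [habs]; exact mul_le_mul_of_nonneg_left hud hC
          _ = (L * δ) * (2 * F u + q) := by ring
      have b3 : (L * δ) * (2 * F u + q) ≤ 4⁻¹ * (2 * F u + q) :=
        mul_le_mul_of_nonneg_right hLδ (by linarith)
      have h8 : m * δ / 2^(n+1) = 2⁻¹ * q := by rw [hqdef, pow_succ]; ring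
      have hEb := abs_le.mp (le_trans b (le_trans b2 b3))
      rw [h8, e]
      have h9 : |-(F u) - ∫ v in u..s2, (G v (ψ v) - G v 1)| ≤
          F u + 4⁻¹ * (2 * F u + q) := by
        rw [abs_le]
        constructor <;> nlinarith [hEb.1, hEb.2, hFu]
      nlinarith [h9]
  have habs2 : ∀ u ∈ Icc t0 T, u ≤ s2 → s2 - u ≤ δ → |ψ u - 1| ≤ 2 * F u := by
    intro u hu hsu hud
    have ht2 : Filter.Tendsto (fun n : ℕ => 2 * F u + m * δ / 2^n) Filter.atTop
        (nhds (2 * F u + 0)) :=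
      Filter.Tendsto.add tendsto_const_nhds
        (Filter.Tendsto.div_atTop tendsto_const_nhds
          (tendsto_pow_atTop_atTop_of_one_lt one_lt_two))
    rw [add_zero] at ht2
    exact ge_of_tendsto ht2 (Filter.Eventually.of_forall fun n => key n u hu hsu hud)
  have hFpos : 0 < F r :=
    intervalIntegral.intervalIntegral_pos_of_pos_on (hi1 r hr s2 hs2)
      (fun x hx => hG1 x ⟨le_trans hr.1 hx.1.le, le_trans hx.2.le hs2.2⟩) hlt
  have e : ψ r - 1 = -(F r) - ∫ v in r..s2, (G v (ψ v) - G v 1) := by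
    have h0 := hdψ s2 hs2 r hr
    rw [intervalIntegral.integral_symm r s2, h1] at h0
    rw [intervalIntegral.integral_sub (hiψ r hr s2 hs2) (hi1 r hr s2 hs2)]
    rw [hFdef]
    linarith
  have bE : |∫ v in r..s2, (G v (ψ v) - G v 1)| ≤ (L * (2 * F r)) * |s2 - r| := by
    rw [← Real.norm_eq_abs]
    apply intervalIntegral.norm_integral_le_of_norm_le_const
    intro v hv
    have hvI := uIoc_subset_Icc hr hs2 hv
    rw [Set.uIoc_of_le hlt.le] at hv
    have hb := habs2 v hvI hv.2 (by linarith [hv.1])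
    have hFv : F v ≤ F r := Fanti r hr v hvI hv.1.le hv.2
    rw [Real.norm_eq_abs]
    calc |G v (ψ v) - G v 1| ≤ L * |ψ v - 1| := hlip v hvI _ _
      _ ≤ L * (2 * F r) := by
          apply mul_le_mul_of_nonneg_left _ hL
          linarith
  have habs3 : |s2 - r| = s2 - r := abs_of_nonneg (by linarith)
  have b2 : (L * (2 * F r)) * |s2 - r| ≤ (L * δ) * (2 * F r) := by
    calc (L * (2 * F r)) * |s2 - r| ≤ (L * (2 * F r)) * δ := by
          rw [habs3]
          exact mul_le_mul_of_nonneg_left hle (mul_nonneg hL (by linarith))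
      _ = (L * δ) * (2 * F r) := by ring
  have b3 : (L * δ) * (2 * F r) ≤ 4⁻¹ * (2 * F r) :=
    mul_le_mul_of_nonneg_right hLδ (by linarith)
  have hE := abs_le.mp (le_trans bE (le_trans b2 b3))
  nlinarith [hE.1, hE.2, hFpos]

end CarathAux

/-- Existence and uniqueness of the entry time into the region
`Ω₁ = {(t, x) : x < Φ(t, t0, 1)}`: if `G(·, 1) > 0` on `[t0, T]`, then for every
`t ∈ [t0, T]` and `1 ≤ x ≤ Φ(t, t0, 1)` there is a unique `s ∈ [t0, t]` with
`Φ(s, t, x) = 1`. -/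
theorem caratheodory_entry_time_left
    (t0 T : ℝ) (ht : t0 < T) (G : ℝ → ℝ → ℝ)
    (hmeas : ∀ x : ℝ, Measurable fun t => G t x)
    (m : ℝ) (hm : 0 ≤ m) (hbound : ∀ t ∈ Icc t0 T, ∀ x : ℝ, |G t x| ≤ m)
    (L : ℝ) (hL : 0 ≤ L)
    (hlip : ∀ t ∈ Icc t0 T, ∀ x y : ℝ, |G t x - G t y| ≤ L * |x - y|)
    (Φ : ℝ → ℝ → ℝ → ℝ)
    (hΦ : ∀ s ∈ Icc t0 T, ∀ x : ℝ, IsCaratheodorySol t0 T G s x (fun t => Φ t s x))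
    (hG1 : ∀ r ∈ Icc t0 T, 0 < G r 1) :
    ∀ t ∈ Icc t0 T, ∀ x : ℝ, 1 ≤ x → x ≤ Φ t t0 1 →
      ∃! s : ℝ, s ∈ Icc t0 t ∧ Φ s t x = 1 := by
  intro t htI x hx1 hxΦ
  have htT : t0 ≤ T := ht.le
  set δ : ℝ := (4*(L+1))⁻¹ with hδdef
  have hδpos : 0 < δ := by positivity
  have ht0I : t0 ∈ Icc t0 T := ⟨le_refl _, htT⟩
  have hint : ∀ f : ℝ → ℝ, ContinuousOn f (Icc t0 T) →
      ∀ a ∈ Icc t0 T, ∀ b ∈ Icc t0 T, IntervalIntegrable (fun r => G r (f r)) volume a b :=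
    fun f hf a ha b hb =>
      CarathAux.integrable_comp t0 T htT G hmeas m L hL hbound hlip f hf ha hb
  have hi1 : ∀ a ∈ Icc t0 T, ∀ b ∈ Icc t0 T,
      IntervalIntegrable (fun v => G v 1) volume a b :=
    fun a ha b hb => by simpa using hint (fun _ => 1) continuousOn_const a ha b hb
  have hdiff : ∀ (s' x' : ℝ) (f : ℝ → ℝ), s' ∈ Icc t0 T → IsCaratheodorySol t0 T G s' x' f →
      ∀ a ∈ Icc t0 T, ∀ b ∈ Icc t0 T, f b - f a = ∫ r in a..b, G r (f r) := by
    intro s' x' f hs' hsol a ha b hb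
    obtain ⟨hc, he⟩ := hsol
    rw [he a ha, he b hb]
    have h := intervalIntegral.integral_interval_sub_left
      (hint f hc s' hs' b hb) (hint f hc s' hs' a ha)
    linarith
  set ψ : ℝ → ℝ := fun s => Φ s t x with hψdef
  set χ : ℝ → ℝ := fun s => Φ s t0 1 with hχdef
  have hψsol : IsCaratheodorySol t0 T G t x ψ := hΦ t htI x
  have hχsol : IsCaratheodorySol t0 T G t0 1 χ := hΦ t0 ht0I 1
  obtain ⟨hψc, hψe⟩ := hψsol
  obtain ⟨hχc, hχe⟩ := hχsol
  have hdψ := hdiff t x ψ htI ⟨hψc, hψe⟩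
  have hdχ := hdiff t0 1 χ ht0I ⟨hχc, hχe⟩
  have hiψ := hint ψ hψc
  have hiχ := hint χ hχc
  have hψt : ψ t = x := by simpa using hψe t htI
  have hχt0 : χ t0 = 1 := by simpa using hχe t0 ht0I
  have ht0t : t0 ≤ t := htI.1
  have hIccsub : Icc t0 t ⊆ Icc t0 T := fun z hz => ⟨hz.1, le_trans hz.2 htI.2⟩
  -- existence
  have hψt0le : ψ t0 ≤ 1 := by
    by_contra hgt
    push_neg at hgt
    have hcont : ContinuousOn (fun s => ψ s - χ s) (Icc t0 t) :=
      (hψc.mono hIccsub).sub (hχc.mono hIccsub)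
    have hy : (0:ℝ) ∈ Icc ((fun s => ψ s - χ s) t) ((fun s => ψ s - χ s) t0) := by
      constructor
      · show ψ t - χ t ≤ 0
        rw [hψt]
        have : x ≤ χ t := hxΦ
        linarith
      · show 0 ≤ ψ t0 - χ t0
        rw [hχt0]
        linarith
    obtain ⟨c, hcmem, hc0⟩ := intermediate_value_Icc' ht0t hcont hy
    have hcI : c ∈ Icc t0 T := hIccsub hcmem
    have hcc : ψ c = χ c := by
      have : ψ c - χ c = 0 := hc0
      linarith
    have heq := CarathAux.global_eq t0 T G m L hm hL hbound hlip ψ χ hdψ hdχ hiψ hiχ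
      hcI hcc t0 ht0I
    rw [hχt0] at heq
    linarith
  have hy2 : (1:ℝ) ∈ Icc (ψ t0) (ψ t) := ⟨hψt0le, by rw [hψt]; exact hx1⟩
  obtain ⟨s0, hs0mem, hs0⟩ := intermediate_value_Icc ht0t (hψc.mono hIccsub) hy2
  -- uniqueness helper
  have no_two : ∀ s1 s2 : ℝ, s1 ∈ Icc t0 t → s2 ∈ Icc t0 t → ψ s1 = 1 → ψ s2 = 1 →
      s1 < s2 → False := by
    intro s1 s2 hs1 hs2 h1 h2 h12
    have hs1I : s1 ∈ Icc t0 T := hIccsub hs1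
    have hs2I : s2 ∈ Icc t0 T := hIccsub hs2
    have hmidI : ∀ z : ℝ, s1 ≤ z → z ≤ s2 → z ∈ Icc t0 T := fun z hz1 hz2 =>
      ⟨le_trans hs1I.1 hz1, le_trans hz2 hs2I.2⟩
    by_cases hgap : s2 - s1 ≤ δ
    · have hrmidI : (s1 + s2)/2 ∈ Icc t0 T := hmidI _ (by linarith) (by linarith)
      have h1' : 1 < ψ ((s1 + s2)/2) :=
        CarathAux.after_pos t0 T G m L hm hL hbound hlip hG1 ψ hdψ hiψ hi1 hs1I hrmidI h1
          (by linarith) (by rw [← hδdef]; linarith)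
      have h2' : ψ ((s1 + s2)/2) < 1 :=
        CarathAux.before_neg t0 T G m L hm hL hbound hlip hG1 ψ hdψ hiψ hi1 hs2I hrmidI h2
          (by linarith) (by rw [← hδdef]; linarith)
      linarith
    · push_neg at hgap
      set A : Set ℝ := Icc (s1 + δ/2) s2 ∩ ψ ⁻¹' {1} with hA
      have hs2A : s2 ∈ A := ⟨⟨by linarith, le_refl _⟩, h2⟩
      have hAsub : Icc (s1 + δ/2) s2 ⊆ Icc t0 T := fun z hz =>
        hmidI z (by linarith [hz.1]) hz.2
      have hclosed : IsClosed A :=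
        (hψc.mono hAsub).preimage_isClosed_of_isClosed isClosed_Icc isClosed_singleton
      have hbdd : BddBelow A := ⟨s1, fun z hz => by linarith [hz.1.1]⟩
      have hs'A : sInf A ∈ A := hclosed.csInf_mem ⟨s2, hs2A⟩ hbdd
      set s' : ℝ := sInf A with hs'def
      have h1s' : ψ s' = 1 := hs'A.2
      have hs'1 : s1 + δ/2 ≤ s' := hs'A.1.1
      have hs'2 : s' ≤ s2 := hs'A.1.2
      have hs'I : s' ∈ Icc t0 T := hAsub hs'A.1
      by_cases hgap2 : s' - s1 ≤ δ
      · have hrmidI : (s1 + s')/2 ∈ Icc t0 T := hmidI _ (by linarith) (by linarith)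
        have h1' : 1 < ψ ((s1 + s')/2) :=
          CarathAux.after_pos t0 T G m L hm hL hbound hlip hG1 ψ hdψ hiψ hi1 hs1I hrmidI h1
            (by linarith) (by rw [← hδdef]; linarith)
        have h2' : ψ ((s1 + s')/2) < 1 :=
          CarathAux.before_neg t0 T G m L hm hL hbound hlip hG1 ψ hdψ hiψ hi1 hs'I hrmidI h1s'
            (by linarith) (by rw [← hδdef]; linarith)
        linarith
      · push_neg at hgap2
        have hpI : s1 + δ/2 ∈ Icc t0 T := hmidI _ (by linarith) (by linarith)
        have hrrI : s' - δ/2 ∈ Icc t0 T := hmidI _ (by linarith) (by linarith)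
        have hp1 : 1 < ψ (s1 + δ/2) :=
          CarathAux.after_pos t0 T G m L hm hL hbound hlip hG1 ψ hdψ hiψ hi1 hs1I hpI h1
            (by linarith) (by rw [← hδdef]; linarith)
        have hrr1 : ψ (s' - δ/2) < 1 :=
          CarathAux.before_neg t0 T G m L hm hL hbound hlip hG1 ψ hdψ hiψ hi1 hs'I hrrI h1s'
            (by linarith) (by rw [← hδdef]; linarith)
        have hpr : s1 + δ/2 ≤ s' - δ/2 := by linarith
        have hcont2 : ContinuousOn ψ (Icc (s1 + δ/2) (s' - δ/2)) :=
          hψc.mono fun z hz => hmidI z (by linarith [hz.1]) (by linarith [hz.2])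
        have hy3 : (1:ℝ) ∈ Icc (ψ (s' - δ/2)) (ψ (s1 + δ/2)) := ⟨hrr1.le, hp1.le⟩
        obtain ⟨z, hzmem, hz1⟩ := intermediate_value_Icc' hpr hcont2 hy3
        have hzA : z ∈ A := ⟨⟨hzmem.1, by linarith [hzmem.2]⟩, hz1⟩
        have := csInf_le hbdd hzA
        linarith [hzmem.2]
  refine ⟨s0, ⟨hs0mem, hs0⟩, ?_⟩
  rintro s' ⟨hs'mem, hs'1⟩
  rcases lt_trichotomy s' s0 with h | h | h
  · exact (no_two s' s0 hs'mem hs0mem hs'1 hs0 h).elim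
  · exact h
  · exact (no_two s0 s' hs0mem hs'mem hs0 hs'1 h).elim
end

section
/- Let b > 1 and let Φ : [t0,T] × [t0,T] × ℝ → ℝ be a function such that for every (s,x), the map t ↦ Φ(t,s,x) is a Carathéodory solution with data (s,x), and assume in addition that G(r,b) < 0 for every r ∈ (t0,T]. Then for every t ∈ (t0,T] and every x with Φ(t,t0,b) ≤ x ≤ b, there exists a unique s ∈ [t0,t] such that Φ(s,t,x) = b (equivalently, Φ(t,s,b) = x). This defines the entry-time function θ on the closure of Ω₃ = {(t,x) : Φ(t,t0,b) < x ≤ b}. -/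
open MeasureTheory Set
section EntryTimeAux
open Filter

lemma gronwall_fwd {L : ℝ} (hL : 0 ≤ L) {a c : ℝ} (hac : a ≤ c) {v : ℝ → ℝ}
    (hv : ContinuousOn v (Icc a c)) (h0 : ∀ r ∈ Icc a c, 0 ≤ v r)
    (hiv : ∀ r ∈ Icc a c, v r ≤ L * ∫ τ in a..r, v τ) :
    ∀ r ∈ Icc a c, v r = 0 := by
  obtain ⟨M, hM⟩ := (isCompact_Icc (a := a) (b := c)).exists_bound_of_continuousOn hv
  have hM0 : 0 ≤ M := le_trans (abs_nonneg _) (by simpa using hM a ⟨le_rfl, hac⟩)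
  have hvint : ∀ u ∈ Icc a c, ∀ w ∈ Icc a c, IntervalIntegrable v volume u w := by
    intro u hu w hw
    exact (hv.mono (uIcc_subset_Icc hu hw)).intervalIntegrable
  have key : ∀ n : ℕ, ∀ r ∈ Icc a c, v r ≤ M * (L * (r - a)) ^ n / ((Nat.factorial n : ℕ) : ℝ) := by
    intro n
    induction n with
    | zero => intro r hr; simpa using le_trans (le_abs_self _) (hM r hr)
    | succ n ih =>
      intro r hr
      have hra : a ≤ r := hr.1
      have h1 : v r ≤ L * ∫ τ in a..r, v τ := hiv r hr
      have h2 : (∫ τ in a..r, v τ) ≤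
          ∫ τ in a..r, M * (L * (τ - a)) ^ n / ((Nat.factorial n : ℕ) : ℝ) := by
        apply intervalIntegral.integral_mono_on hra (hvint a ⟨le_rfl, hac⟩ r hr)
        · apply ContinuousOn.intervalIntegrable
          fun_prop
        · intro τ hτ
          exact ih τ ⟨hτ.1, le_trans hτ.2 hr.2⟩
      have h3 : (∫ τ in a..r, M * (L * (τ - a)) ^ n / ((Nat.factorial n : ℕ) : ℝ)) =
          M * L ^ n / ((Nat.factorial n : ℕ) : ℝ) * ((r - a) ^ (n + 1) / (n + 1)) := by
        have : (fun τ => M * (L * (τ - a)) ^ n / ((Nat.factorial n : ℕ) : ℝ)) =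
            fun τ => M * L ^ n / ((Nat.factorial n : ℕ) : ℝ) * ((fun x => x ^ n) (τ - a)) := by
          funext τ; rw [mul_pow]; ring
        rw [this, intervalIntegral.integral_const_mul,
          intervalIntegral.integral_comp_sub_right (fun x => x ^ n) a, sub_self,
          integral_pow]
        ring
      calc v r ≤ L * ∫ τ in a..r, v τ := h1
        _ ≤ L * (M * L ^ n / ((Nat.factorial n : ℕ) : ℝ) * ((r - a) ^ (n + 1) / (n + 1))) := by
            rw [← h3]; exact mul_le_mul_of_nonneg_left h2 hL
        _ = M * (L * (r - a)) ^ (n + 1) / ((Nat.factorial (n+1) : ℕ) : ℝ) := by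
            rw [Nat.factorial_succ, mul_pow]
            push_cast
            field_simp
            ring
  intro r hr
  refine le_antisymm ?_ (h0 r hr)
  have h1 := FloorSemiring.tendsto_pow_div_factorial_atTop (K := ℝ) (L * (r - a))
  have hlim : Tendsto (fun n : ℕ => M * (L * (r - a)) ^ n / ((Nat.factorial n : ℕ) : ℝ))
      atTop (nhds 0) := by
    have := h1.const_mul M
    simpa [mul_div_assoc] using this
  exact ge_of_tendsto' hlim fun n => key n r hr

lemma gronwall_bwd {L : ℝ} (hL : 0 ≤ L) {a c : ℝ} (hac : a ≤ c) {v : ℝ → ℝ}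
    (hv : ContinuousOn v (Icc a c)) (h0 : ∀ r ∈ Icc a c, 0 ≤ v r)
    (hiv : ∀ r ∈ Icc a c, v r ≤ L * ∫ τ in r..c, v τ) :
    ∀ r ∈ Icc a c, v r = 0 := by
  have hmaps : ∀ u ∈ Icc a c, a + c - u ∈ Icc a c := by
    intro u hu; exact ⟨by linarith [hu.2], by linarith [hu.1]⟩
  have h := gronwall_fwd hL hac (v := fun u => v (a + c - u))
    (hv.comp (continuous_const.sub continuous_id).continuousOn
      (fun u hu => hmaps u hu))
    (fun u hu => h0 _ (hmaps u hu))
    (by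
      intro u hu
      have h1 := hiv (a + c - u) (hmaps u hu)
      have h2 : (∫ τ in a..u, v (a + c - τ)) = ∫ τ in (a + c - u)..c, v τ := by
        rw [intervalIntegral.integral_comp_sub_left v (a + c)]
        norm_num
      simpa [h2] using h1)
  intro r hr
  have := h (a + c - r) (hmaps r hr)
  simpa using this

lemma integrableOn_G_comp {t0 T m L : ℝ} {G : ℝ → ℝ → ℝ}
    (hT : t0 ≤ T)
    (hmeas : ∀ x : ℝ, Measurable fun t => G t x)
    (hbound : ∀ t ∈ Icc t0 T, ∀ x : ℝ, |G t x| ≤ m)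
    (hL : 0 ≤ L)
    (hlip : ∀ t ∈ Icc t0 T, ∀ x y : ℝ, |G t x - G t y| ≤ L * |x - y|)
    {φ : ℝ → ℝ} (hφ : ContinuousOn φ (Icc t0 T)) :
    IntegrableOn (fun τ => G τ (φ τ)) (Icc t0 T) volume := by
  set G' : ℝ → ℝ → ℝ := fun t x => if t ∈ Icc t0 T then G t x else 0 with hG'
  have hcont : ∀ t, Continuous fun x => G' t x := by
    intro t
    by_cases h : t ∈ Icc t0 T
    · simp only [hG', if_pos h]
      have hl : LipschitzWith ⟨L, hL⟩ fun x => G t x := by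
        apply LipschitzWith.of_dist_le_mul
        intro x y
        rw [Real.dist_eq, Real.dist_eq]
        exact hlip t h x y
      exact hl.continuous
    · simp only [hG', if_neg h]; exact continuous_const
  have hmeas' : ∀ x, Measurable fun t => G' t x := by
    intro x
    exact Measurable.ite measurableSet_Icc (hmeas x) measurable_const
  have huncurry : Measurable (Function.uncurry fun (x t : ℝ) => G' t x) :=
    measurable_uncurry_of_continuous_of_measurable (fun t => hcont t) hmeas'
  set ψ : ℝ → ℝ := fun τ => φ (max t0 (min T τ)) with hψ
  have hψc : Continuous ψ := by
    apply hφ.comp_continuous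
    · exact continuous_const.max (continuous_const.min continuous_id)
    · intro τ
      exact ⟨le_max_left _ _, max_le hT (min_le_left _ _)⟩
  have hmc : Measurable fun τ => G' τ (ψ τ) :=
    huncurry.comp ((hψc.measurable).prodMk measurable_id)
  have heq : EqOn (fun τ => G' τ (ψ τ)) (fun τ => G τ (φ τ)) (Icc t0 T) := by
    intro τ hτ
    have h1 : max t0 (min T τ) = τ := by
      rw [min_eq_right hτ.2, max_eq_right hτ.1]
    simp only [hG', hψ, h1, if_pos hτ]
  have hint : IntegrableOn (fun τ => G' τ (ψ τ)) (Icc t0 T) volume := by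
    apply Integrable.mono' (g := fun _ => m)
    · exact integrableOn_const measure_Icc_lt_top.ne
    · exact (hmc.aestronglyMeasurable).restrict
    · filter_upwards [ae_restrict_mem measurableSet_Icc] with τ hτ
      have := heq hτ
      beta_reduce at this
      rw [Real.norm_eq_abs, this]
      exact hbound τ hτ (φ τ)
  exact hint.congr_fun heq measurableSet_Icc

lemma no_double_hit {t0 T L b : ℝ} {G : ℝ → ℝ → ℝ} (hL : 0 ≤ L)
    (hlip : ∀ t ∈ Icc t0 T, ∀ x y : ℝ, |G t x - G t y| ≤ L * |x - y|)
    (hGb : ∀ r ∈ Ioc t0 T, G r b < 0)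
    {f : ℝ → ℝ} (hfc : ContinuousOn f (Icc t0 T))
    (hII : ∀ u ∈ Icc t0 T, ∀ v ∈ Icc t0 T, IntervalIntegrable (fun τ => G τ (f τ)) volume u v)
    (hGbII : ∀ u ∈ Icc t0 T, ∀ v ∈ Icc t0 T, IntervalIntegrable (fun τ => G τ b) volume u v)
    (hstep : ∀ u ∈ Icc t0 T, ∀ v ∈ Icc t0 T, f v - f u = ∫ τ in u..v, G τ (f τ))
    {s1 s2 : ℝ} (hs1 : s1 ∈ Icc t0 T) (hs2 : s2 ∈ Icc t0 T) (h12 : s1 < s2)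
    (hb1 : f s1 = b) (hb2 : f s2 = b) : False := by
  have hsub12 : Icc s1 s2 ⊆ Icc t0 T := Icc_subset_Icc hs1.1 hs2.2
  have hae : ∀ᵐ τ ∂(volume : Measure ℝ), τ ≠ t0 := by
    rw [ae_iff]
    have : {a : ℝ | ¬a ≠ t0} = {t0} := by ext a; simp
    rw [this]; exact measure_singleton t0
  -- (a) f ≤ b on [s1, s2]
  have hup : ∀ r ∈ Icc s1 s2, f r ≤ b := by
    by_contra hcon
    push_neg at hcon
    obtain ⟨rs, hrs, hrsb⟩ := hcon
    have hrsT : rs ∈ Icc t0 T := hsub12 hrs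
    set S := {r ∈ Icc s1 rs | f r = b} with hS
    have hSsub : S ⊆ Icc s1 rs := fun r hr => hr.1
    have hScl : IsCompact S := by
      apply IsCompact.of_isClosed_subset (isCompact_Icc (a := s1) (b := rs)) ?_ hSsub
      have hSeq : S = Icc s1 rs ∩ f ⁻¹' {b} := by ext r; simp [hS]
      rw [hSeq]
      exact (hfc.mono (Icc_subset_Icc hs1.1 hrsT.2)).preimage_isClosed_of_isClosed
        isClosed_Icc isClosed_singleton
    have hSne : S.Nonempty := ⟨s1, ⟨le_rfl, hrs.1⟩, hb1⟩
    set σ := sSup S with hσ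
    have hσS : σ ∈ S := hScl.sSup_mem hSne
    have hσrs : σ ≤ rs := hσS.1.2
    have hσT : σ ∈ Icc t0 T := hsub12 ⟨hσS.1.1, hσrs.trans hrs.2⟩
    have hfσ : f σ = b := hσS.2
    have hge : ∀ τ ∈ Icc σ rs, b ≤ f τ := by
      intro τ hτ
      rcases eq_or_lt_of_le hτ.1 with h|h
      · rw [← h, hfσ]
      by_contra hτb
      push_neg at hτb
      have himg : b ∈ f '' Icc τ rs := by
        apply intermediate_value_Icc hτ.2
          (hfc.mono (Icc_subset_Icc (hσT.1.trans h.le) hrsT.2))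
        exact ⟨hτb.le, hrsb.le⟩
      obtain ⟨z, hz, hzb⟩ := himg
      have hzS : z ∈ S := ⟨⟨hσS.1.1.trans (h.le.trans hz.1), hz.2⟩, hzb⟩
      have hzσ : z ≤ σ := le_csSup hScl.bddAbove hzS
      have : τ ≤ σ := hz.1.trans hzσ
      exact absurd this (not_le.2 h)
    have hzero := gronwall_fwd hL hσrs (v := fun r => f r - b)
      ((hfc.mono (Icc_subset_Icc hσT.1 hrsT.2)).sub continuousOn_const)
      (fun r hr => sub_nonneg.2 (hge r hr))
      ?_
    · have := hzero rs ⟨hσrs, le_rfl⟩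
      beta_reduce at this
      linarith
    intro r hr
    have hrT : r ∈ Icc t0 T := ⟨hσT.1.trans hr.1, hr.2.trans hrsT.2⟩
    have e1 : f r - b = ∫ τ in σ..r, G τ (f τ) := by
      rw [← hfσ]; exact hstep σ hσT r hrT
    have e2 : (∫ τ in σ..r, G τ (f τ)) ≤ ∫ τ in σ..r, L * (f τ - b) := by
      apply intervalIntegral.integral_mono_ae_restrict hr.1 (hII σ hσT r hrT)
      · apply ContinuousOn.intervalIntegrable
        exact continuousOn_const.mul
          ((hfc.mono (uIcc_subset_Icc hσT hrT)).sub continuousOn_const)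
      · filter_upwards [ae_restrict_mem measurableSet_Icc, ae_restrict_of_ae hae]
          with τ hτ hτ0
        have hτT : τ ∈ Icc t0 T := ⟨hσT.1.trans hτ.1, hτ.2.trans hrT.2⟩
        have l1 : G τ (f τ) - G τ b ≤ L * |f τ - b| :=
          le_trans (le_abs_self _) (hlip τ hτT _ _)
        have l2 : G τ b ≤ 0 :=
          (hGb τ ⟨lt_of_le_of_ne (hσT.1.trans hτ.1) (Ne.symm hτ0), hτT.2⟩).le
        have l3 : b ≤ f τ := hge τ ⟨hτ.1, hτ.2.trans hr.2⟩
        have l4 : |f τ - b| = f τ - b := abs_of_nonneg (by linarith)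
        rw [l4] at l1
        linarith
    beta_reduce
    rw [e1, ← intervalIntegral.integral_const_mul]
    exact e2
  -- (b) b ≤ f on [s1, s2]
  have hdn : ∀ r ∈ Icc s1 s2, b ≤ f r := by
    by_contra hcon
    push_neg at hcon
    obtain ⟨rs, hrs, hrsb⟩ := hcon
    have hrsT : rs ∈ Icc t0 T := hsub12 hrs
    set S := {r ∈ Icc rs s2 | f r = b} with hS
    have hSsub : S ⊆ Icc rs s2 := fun r hr => hr.1
    have hScl : IsCompact S := by
      apply IsCompact.of_isClosed_subset (isCompact_Icc (a := rs) (b := s2)) ?_ hSsub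
      have hSeq : S = Icc rs s2 ∩ f ⁻¹' {b} := by ext r; simp [hS]
      rw [hSeq]
      exact (hfc.mono (Icc_subset_Icc hrsT.1 hs2.2)).preimage_isClosed_of_isClosed
        isClosed_Icc isClosed_singleton
    have hSne : S.Nonempty := ⟨s2, ⟨hrs.2, le_rfl⟩, hb2⟩
    set σ := sInf S with hσ
    have hσS : σ ∈ S := hScl.sInf_mem hSne
    have hrsσ : rs ≤ σ := hσS.1.1
    have hσT : σ ∈ Icc t0 T := hsub12 ⟨hrs.1.trans hrsσ, hσS.1.2⟩
    have hfσ : f σ = b := hσS.2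
    have hle' : ∀ τ ∈ Icc rs σ, f τ ≤ b := by
      intro τ hτ
      rcases eq_or_lt_of_le hτ.2 with h|h
      · rw [h, hfσ]
      by_contra hτb
      push_neg at hτb
      have himg : b ∈ f '' Icc rs τ := by
        apply intermediate_value_Icc hτ.1
          (hfc.mono (Icc_subset_Icc hrsT.1 (h.le.trans hσT.2)))
        exact ⟨hrsb.le, hτb.le⟩
      obtain ⟨z, hz, hzb⟩ := himg
      have hzS : z ∈ S := ⟨⟨hz.1, (hz.2.trans h.le).trans hσS.1.2⟩, hzb⟩
      have hσz : σ ≤ z := csInf_le hScl.bddBelow hzS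
      have : σ ≤ τ := hσz.trans hz.2
      exact absurd this (not_le.2 h)
    have hzero := gronwall_bwd hL hrsσ (v := fun r => b - f r)
      (continuousOn_const.sub (hfc.mono (Icc_subset_Icc hrsT.1 hσT.2)))
      (fun r hr => sub_nonneg.2 (hle' r hr))
      ?_
    · have := hzero rs ⟨le_rfl, hrsσ⟩
      beta_reduce at this
      linarith
    intro r hr
    have hrT : r ∈ Icc t0 T := ⟨hrsT.1.trans hr.1, hr.2.trans hσT.2⟩
    have e1 : b - f r = ∫ τ in r..σ, G τ (f τ) := by
      rw [← hfσ]; exact hstep r hrT σ hσT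
    have e2 : (∫ τ in r..σ, G τ (f τ)) ≤ ∫ τ in r..σ, L * (b - f τ) := by
      apply intervalIntegral.integral_mono_ae_restrict hr.2 (hII r hrT σ hσT)
      · apply ContinuousOn.intervalIntegrable
        exact continuousOn_const.mul
          (continuousOn_const.sub (hfc.mono (uIcc_subset_Icc hrT hσT)))
      · filter_upwards [ae_restrict_mem measurableSet_Icc, ae_restrict_of_ae hae]
          with τ hτ hτ0
        have hτT : τ ∈ Icc t0 T := ⟨hrT.1.trans hτ.1, hτ.2.trans hσT.2⟩
        have l1 : G τ (f τ) - G τ b ≤ L * |f τ - b| :=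
          le_trans (le_abs_self _) (hlip τ hτT _ _)
        have l2 : G τ b ≤ 0 :=
          (hGb τ ⟨lt_of_le_of_ne (hrT.1.trans hτ.1) (Ne.symm hτ0), hτT.2⟩).le
        have l3 : f τ ≤ b := hle' τ ⟨hr.1.trans hτ.1, hτ.2⟩
        have l4 : |f τ - b| = b - f τ := by rw [abs_sub_comm]; exact abs_of_nonneg (by linarith)
        rw [l4] at l1
        linarith
    beta_reduce
    rw [e1, ← intervalIntegral.integral_const_mul]
    exact e2
  have heq : ∀ r ∈ Icc s1 s2, f r = b := fun r hr => le_antisymm (hup r hr) (hdn r hr)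
  have h1 : f s2 - f s1 = ∫ τ in s1..s2, G τ (f τ) := hstep s1 hs1 s2 hs2
  have h2 : (∫ τ in s1..s2, G τ (f τ)) = ∫ τ in s1..s2, G τ b := by
    apply intervalIntegral.integral_congr
    intro τ hτ
    rw [uIcc_of_le h12.le] at hτ
    show G τ (f τ) = G τ b
    rw [heq τ hτ]
  have h3 : 0 < ∫ τ in s1..s2, -G τ b := by
    apply intervalIntegral.intervalIntegral_pos_of_pos_on ((hGbII s1 hs1 s2 hs2).neg)
    · intro τ hτ
      have := hGb τ ⟨lt_of_le_of_lt hs1.1 hτ.1, hτ.2.le.trans hs2.2⟩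
      show 0 < -G τ b
      linarith
    · exact h12
  rw [intervalIntegral.integral_neg] at h3
  rw [hb1, hb2, sub_self, h2] at h1
  linarith

lemma eq_left_of_eq {t0 T L : ℝ} {G : ℝ → ℝ → ℝ} (hL : 0 ≤ L)
    (hlip : ∀ t ∈ Icc t0 T, ∀ x y : ℝ, |G t x - G t y| ≤ L * |x - y|)
    {f g : ℝ → ℝ} (hfc : ContinuousOn f (Icc t0 T)) (hgc : ContinuousOn g (Icc t0 T))
    (hfII : ∀ u ∈ Icc t0 T, ∀ v ∈ Icc t0 T, IntervalIntegrable (fun τ => G τ (f τ)) volume u v)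
    (hgII : ∀ u ∈ Icc t0 T, ∀ v ∈ Icc t0 T, IntervalIntegrable (fun τ => G τ (g τ)) volume u v)
    (hfstep : ∀ u ∈ Icc t0 T, ∀ v ∈ Icc t0 T, f v - f u = ∫ τ in u..v, G τ (f τ))
    (hgstep : ∀ u ∈ Icc t0 T, ∀ v ∈ Icc t0 T, g v - g u = ∫ τ in u..v, G τ (g τ))
    {c : ℝ} (hc : c ∈ Icc t0 T) (hfg : f c = g c) :
    ∀ r ∈ Icc t0 c, f r = g r := by
  have h := gronwall_bwd (a := t0) (c := c) hL hc.1 (v := fun r => |f r - g r|)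
    (((hfc.mono (Icc_subset_Icc le_rfl hc.2)).sub (hgc.mono (Icc_subset_Icc le_rfl hc.2))).abs)
    (fun r _ => abs_nonneg _)
    ?_
  · intro r hr
    have := h r hr
    beta_reduce at this
    rwa [abs_eq_zero, sub_eq_zero] at this
  intro r hr
  have hrT : r ∈ Icc t0 T := ⟨hr.1, hr.2.trans hc.2⟩
  have e1 : f r - g r = -∫ τ in r..c, (G τ (f τ) - G τ (g τ)) := by
    have a1 : f c - f r = ∫ τ in r..c, G τ (f τ) := hfstep r hrT c hc
    have a2 : g c - g r = ∫ τ in r..c, G τ (g τ) := hgstep r hrT c hc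
    rw [intervalIntegral.integral_sub (hfII r hrT c hc) (hgII r hrT c hc), ← a1, ← a2, hfg]
    ring
  beta_reduce
  rw [e1, abs_neg]
  calc |∫ τ in r..c, (G τ (f τ) - G τ (g τ))|
      ≤ ∫ τ in r..c, |G τ (f τ) - G τ (g τ)| :=
        intervalIntegral.abs_integral_le_integral_abs hr.2
    _ ≤ ∫ τ in r..c, L * |f τ - g τ| := by
        apply intervalIntegral.integral_mono_on hr.2
          (((hfII r hrT c hc).sub (hgII r hrT c hc)).abs)
        · apply ContinuousOn.intervalIntegrable
          exact continuousOn_const.mul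
            (((hfc.mono (uIcc_subset_Icc hrT hc)).sub (hgc.mono (uIcc_subset_Icc hrT hc))).abs)
        · intro τ hτ
          exact hlip τ ⟨hrT.1.trans hτ.1, hτ.2.trans hc.2⟩ _ _
    _ = L * ∫ τ in r..c, |f τ - g τ| := intervalIntegral.integral_const_mul _ _

end EntryTimeAux

/-- Existence and uniqueness of the entry time into the region
`Ω₃ = {(t, x) : Φ(t, t0, b) < x ≤ b}`: if `b > 1` and `G(·, b) < 0` on `(t0, T]`,
then for every `t ∈ (t0, T]` and `Φ(t, t0, b) ≤ x ≤ b` there is a unique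
`s ∈ [t0, t]` with `Φ(s, t, x) = b`. -/
theorem caratheodory_entry_time_right
    (t0 T : ℝ) (ht : t0 < T) (b : ℝ) (hb : 1 < b) (G : ℝ → ℝ → ℝ)
    (hmeas : ∀ x : ℝ, Measurable fun t => G t x)
    (m : ℝ) (hm : 0 ≤ m) (hbound : ∀ t ∈ Icc t0 T, ∀ x : ℝ, |G t x| ≤ m)
    (L : ℝ) (hL : 0 ≤ L)
    (hlip : ∀ t ∈ Icc t0 T, ∀ x y : ℝ, |G t x - G t y| ≤ L * |x - y|)
    (Φ : ℝ → ℝ → ℝ → ℝ)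
    (hΦ : ∀ s ∈ Icc t0 T, ∀ x : ℝ, IsCaratheodorySol t0 T G s x (fun t => Φ t s x))
    (hGb : ∀ r ∈ Ioc t0 T, G r b < 0) :
    ∀ t ∈ Ioc t0 T, ∀ x : ℝ, Φ t t0 b ≤ x → x ≤ b →
      ∃! s : ℝ, s ∈ Icc t0 t ∧ Φ s t x = b := by
  intro t ht' x hx1 hx2
  have htT : t ∈ Icc t0 T := ⟨ht'.1.le, ht'.2⟩
  have hT : t0 ≤ T := ht.le
  obtain ⟨hfc, hfe⟩ := hΦ t htT x
  obtain ⟨hgc, hge⟩ := hΦ t0 ⟨le_rfl, hT⟩ b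
  simp only [] at hfc hfe hgc hge
  have hft : Φ t t x = x := by
    have := hfe t htT
    simpa using this
  have hgt0 : Φ t0 t0 b = b := by
    have := hge t0 ⟨le_rfl, hT⟩
    simpa using this
  have hfint : IntegrableOn (fun τ => G τ (Φ τ t x)) (Icc t0 T) volume :=
    integrableOn_G_comp hT hmeas hbound hL hlip hfc
  have hgint : IntegrableOn (fun τ => G τ (Φ τ t0 b)) (Icc t0 T) volume :=
    integrableOn_G_comp hT hmeas hbound hL hlip hgc
  have hbint : IntegrableOn (fun τ => G τ b) (Icc t0 T) volume :=
    integrableOn_G_comp hT hmeas hbound hL hlip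
      (continuousOn_const : ContinuousOn (fun _ => b) (Icc t0 T))
  have mkII : ∀ (F : ℝ → ℝ), IntegrableOn F (Icc t0 T) volume →
      ∀ u ∈ Icc t0 T, ∀ v ∈ Icc t0 T, IntervalIntegrable F volume u v := by
    intro F hint u hu v hv
    rw [intervalIntegrable_iff]
    exact hint.mono_set (uIoc_subset_uIcc.trans (uIcc_subset_Icc hu hv))
  have hfII := mkII _ hfint
  have hgII := mkII _ hgint
  have hbII := mkII _ hbint
  have hfstep : ∀ u ∈ Icc t0 T, ∀ v ∈ Icc t0 T,
      Φ v t x - Φ u t x = ∫ τ in u..v, G τ (Φ τ t x) := by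
    intro u hu v hv
    have h1 := hfe u hu
    have h2 := hfe v hv
    have e : Φ v t x - Φ u t x =
        (∫ τ in t..v, G τ (Φ τ t x)) - ∫ τ in t..u, G τ (Φ τ t x) := by
      rw [h1, h2]; ring
    rw [e, intervalIntegral.integral_interval_sub_left (hfII t htT v hv) (hfII t htT u hu)]
  have hgstep : ∀ u ∈ Icc t0 T, ∀ v ∈ Icc t0 T,
      Φ v t0 b - Φ u t0 b = ∫ τ in u..v, G τ (Φ τ t0 b) := by
    intro u hu v hv
    have h1 := hge u hu
    have h2 := hge v hv
    have e : Φ v t0 b - Φ u t0 b =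
        (∫ τ in t0..v, G τ (Φ τ t0 b)) - ∫ τ in t0..u, G τ (Φ τ t0 b) := by
      rw [h1, h2]; ring
    rw [e, intervalIntegral.integral_interval_sub_left (hgII t0 ⟨le_rfl, hT⟩ v hv)
      (hgII t0 ⟨le_rfl, hT⟩ u hu)]
  have hsub : Icc t0 t ⊆ Icc t0 T := Icc_subset_Icc le_rfl ht'.2
  -- existence: Φ t0 t x ≥ b
  have hft0 : b ≤ Φ t0 t x := by
    by_contra hcon
    push_neg at hcon
    have hhc : ContinuousOn (fun r => Φ r t x - Φ r t0 b) (Icc t0 t) :=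
      (hfc.mono hsub).sub (hgc.mono hsub)
    have himg : (0 : ℝ) ∈ (fun r => Φ r t x - Φ r t0 b) '' Icc t0 t := by
      apply intermediate_value_Icc ht'.1.le hhc
      constructor
      · show Φ t0 t x - Φ t0 t0 b ≤ 0
        rw [hgt0]; linarith
      · show (0 : ℝ) ≤ Φ t t x - Φ t t0 b
        rw [hft]; linarith
    obtain ⟨c, hcmem, hceq⟩ := himg
    simp only [] at hceq
    have hcT : c ∈ Icc t0 T := hsub hcmem
    have hfgc : Φ c t x = Φ c t0 b := by linarith
    have heqL := eq_left_of_eq hL hlip hfc hgc hfII hgII hfstep hgstep hcT hfgc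
    have ht0eq := heqL t0 ⟨le_rfl, hcmem.1⟩
    rw [ht0eq, hgt0] at hcon
    exact absurd hcon (lt_irrefl b)
  have himg : b ∈ (fun r => Φ r t x) '' Icc t0 t := by
    apply intermediate_value_Icc' ht'.1.le (hfc.mono hsub)
    constructor
    · show Φ t t x ≤ b
      rw [hft]; exact hx2
    · exact hft0
  obtain ⟨s, hsmem, hsb⟩ := himg
  simp only [] at hsb
  refine ⟨s, ⟨hsmem, hsb⟩, ?_⟩
  rintro y ⟨hy, hyb⟩
  by_contra hne
  rcases lt_or_gt_of_ne hne with h|h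
  · exact no_double_hit hL hlip hGb hfc hfII hbII hfstep (hsub hy) (hsub hsmem) h hyb hsb
  · exact no_double_hit hL hlip hGb hfc hfII hbII hfstep (hsub hsmem) (hsub hy) h hsb hyb
end

section
/- Let Φ : [t0,T] × [t0,T] × ℝ → ℝ be a function such that for every (s,x), the map t ↦ Φ(t,s,x) is a Carathéodory solution with data (s,x), and assume G(r,1) > 0 for every r ∈ [t0,T]. For (t,x) with t ∈ [t0,T] and 1 ≤ x ≤ Φ(t,t0,1), let φ(t,x) denote the unique s ∈ [t0,t] with Φ(s,t,x) = 1. Then φ is constant along characteristic curves: for every σ ∈ [t0,T] such that 1 ≤ Φ(σ,t,x) ≤ Φ(σ,t0,1), one has φ(σ, Φ(σ,t,x)) = φ(t,x). -/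
open MeasureTheory Set

open intervalIntegral

/-- Integral-form Grönwall with zero forcing (forward). -/
lemma gronwall_zero {a b L : ℝ} (hL : 0 ≤ L) {g : ℝ → ℝ}
    (hg : ContinuousOn g (Icc a b)) (hg0 : ∀ ρ ∈ Icc a b, 0 ≤ g ρ)
    (hineq : ∀ ρ ∈ Icc a b, g ρ ≤ L * ∫ r in a..ρ, g r) :
    ∀ ρ ∈ Icc a b, g ρ = 0 := by
  intro ρ hρ
  have hab : a ≤ b := le_trans hρ.1 hρ.2
  obtain ⟨K, hK⟩ : ∃ K, ∀ r ∈ Icc a b, g r ≤ K := by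
    obtain ⟨z, _, hz⟩ := isCompact_Icc.exists_isMaxOn ⟨a, le_refl a, hab⟩ hg
    exact ⟨g z, hz⟩
  have hK0 : 0 ≤ K := le_trans (hg0 a ⟨le_refl a, hab⟩) (hK a ⟨le_refl a, hab⟩)
  have key : ∀ n : ℕ, ∀ r ∈ Icc a b, g r ≤ K * (L * (r - a)) ^ n / n.factorial := by
    intro n
    induction n with
    | zero => simpa using hK
    | succ n ih =>
      intro r hr
      have hint1 : IntervalIntegrable g volume a r :=
        (hg.mono (Icc_subset_Icc le_rfl hr.2)).intervalIntegrable_of_Icc hr.1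
      have hint2 : IntervalIntegrable (fun s => K * (L * (s - a)) ^ n / n.factorial) volume a r :=
        (Continuous.continuousOn (by fun_prop)).intervalIntegrable_of_Icc hr.1
      have hmono : (∫ s in a..r, g s) ≤ ∫ s in a..r, K * (L * (s - a)) ^ n / n.factorial := by
        apply integral_mono_on hr.1 hint1 hint2
        intro s hs
        exact ih s ⟨hs.1, le_trans hs.2 hr.2⟩
      have hcomp : (∫ s in a..r, K * (L * (s - a)) ^ n / n.factorial)
          = K * L ^ n / n.factorial * ((r - a) ^ (n + 1) / (n + 1)) := by
        have : (fun s : ℝ => K * (L * (s - a)) ^ n / n.factorial)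
            = fun s : ℝ => (K * L ^ n / n.factorial) * (s - a) ^ n := by
          funext s; rw [mul_pow]; ring
        rw [this, intervalIntegral.integral_const_mul,
          intervalIntegral.integral_comp_sub_right (fun x => x ^ n) a]
        simp [integral_pow]
      calc g r ≤ L * ∫ s in a..r, g s := hineq r hr
        _ ≤ L * (K * L ^ n / n.factorial * ((r - a) ^ (n + 1) / (n + 1))) := by
            rw [hcomp] at hmono
            exact mul_le_mul_of_nonneg_left (le_trans hmono (le_of_eq rfl)) hL
        _ = K * (L * (r - a)) ^ (n + 1) / (n + 1).factorial := by
            rw [Nat.factorial_succ, mul_pow]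
            push_cast
            field_simp
            ring
  have hlim : Filter.Tendsto (fun n : ℕ => K * (L * (ρ - a)) ^ n / n.factorial)
      Filter.atTop (nhds 0) := by
    have := (FloorSemiring.tendsto_pow_div_factorial_atTop (L * (ρ - a))).const_mul K
    simpa [mul_div_assoc] using this
  have : g ρ ≤ 0 :=
    le_of_tendsto_of_tendsto' tendsto_const_nhds hlim (fun n => key n ρ hρ)
  exact le_antisymm this (hg0 ρ hρ)

/-- Integral-form Grönwall with zero forcing (backward). -/
lemma gronwall_zero' {a b L : ℝ} (hL : 0 ≤ L) {g : ℝ → ℝ}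
    (hg : ContinuousOn g (Icc a b)) (hg0 : ∀ ρ ∈ Icc a b, 0 ≤ g ρ)
    (hineq : ∀ ρ ∈ Icc a b, g ρ ≤ L * ∫ r in ρ..b, g r) :
    ∀ ρ ∈ Icc a b, g ρ = 0 := by
  intro ρ hρ
  have hmaps : ∀ τ ∈ Icc a b, a + b - τ ∈ Icc a b := by
    intro τ hτ; constructor <;> [linarith [hτ.2]; linarith [hτ.1]]
  have h := gronwall_zero hL (g := fun τ => g (a + b - τ))
    (hg.comp (by fun_prop) (fun τ hτ => hmaps τ hτ))
    (fun τ hτ => hg0 _ (hmaps τ hτ))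
    (fun τ hτ => by
      have hsub : (∫ u in a..τ, g (a + b - u)) = ∫ r in (a + b - τ)..b, g r := by
        have := intervalIntegral.integral_comp_sub_left g (a + b) (a := a) (b := τ)
        simpa using this
      rw [hsub]
      exact hineq _ (hmaps τ hτ))
    (a + b - ρ) (hmaps ρ hρ)
  simpa using h

/-- The composition `r ↦ G r (γ r)` is interval integrable on subintervals of `[t0, T]`. -/
lemma comp_integrable {t0 T : ℝ} {G : ℝ → ℝ → ℝ}
    (hmeas : ∀ x : ℝ, Measurable fun t => G t x)
    {m : ℝ} (hm : 0 ≤ m) (hbound : ∀ t ∈ Icc t0 T, ∀ x : ℝ, |G t x| ≤ m)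
    {L : ℝ} (hL : 0 ≤ L)
    (hlip : ∀ t ∈ Icc t0 T, ∀ x y : ℝ, |G t x - G t y| ≤ L * |x - y|)
    {γ : ℝ → ℝ} (hγ : ContinuousOn γ (Icc t0 T))
    {a b : ℝ} (ha : a ∈ Icc t0 T) (hb : b ∈ Icc t0 T) :
    IntervalIntegrable (fun r => G r (γ r)) volume a b := by
  set u : ℝ → ℝ → ℝ := fun x t => Set.indicator (Icc t0 T) (fun s => G s x) t with hu
  have hu_meas : ∀ x, Measurable (u x) := fun x => (hmeas x).indicator measurableSet_Icc
  have hu_cont : ∀ t, Continuous fun x => u x t := by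
    intro t
    by_cases h : t ∈ Icc t0 T
    · have : (fun x => u x t) = fun x => G t x := by
        funext x; simp [hu, Set.indicator_of_mem h]
      rw [this]
      have hlw : LipschitzWith (Real.toNNReal L) (fun x => G t x) := by
        apply LipschitzWith.of_dist_le_mul
        intro x y
        rw [Real.dist_eq, Real.dist_eq]
        calc |G t x - G t y| ≤ L * |x - y| := hlip t h x y
          _ = (Real.toNNReal L : ℝ) * |x - y| := by rw [Real.coe_toNNReal L hL]
      exact hlw.continuous
    · have : (fun x => u x t) = fun _ => 0 := by
        funext x; simp [hu, Set.indicator_of_notMem h]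
      rw [this]; exact continuous_const
  have hU : Measurable (Function.uncurry u) :=
    measurable_uncurry_of_continuous_of_measurable hu_cont hu_meas
  have hsub : Set.uIoc a b ⊆ Icc t0 T := by
    intro r hr
    rw [Set.mem_uIoc] at hr
    rcases hr with h | h
    · exact ⟨le_trans ha.1 h.1.le, le_trans h.2 hb.2⟩
    · exact ⟨le_trans hb.1 h.1.le, le_trans h.2 ha.2⟩
  rw [intervalIntegrable_iff]
  have hInt : IntegrableOn (fun r => u (γ r) r) (Set.uIoc a b) volume := by
    have haem : AEMeasurable (fun r => u (γ r) r) (volume.restrict (Set.uIoc a b)) := by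
      have h1 : AEMeasurable γ (volume.restrict (Set.uIoc a b)) :=
        (hγ.mono hsub).aemeasurable measurableSet_uIoc
      exact hU.comp_aemeasurable (h1.prodMk aemeasurable_id)
    have hboundu : ∀ r : ℝ, ‖u (γ r) r‖ ≤ m := by
      intro r
      by_cases h : r ∈ Icc t0 T
      · simpa [hu, Set.indicator_of_mem h] using hbound r h (γ r)
      · simpa [hu, Set.indicator_of_notMem h] using hm
    apply Integrable.mono' (g := fun _ => m) _ haem.aestronglyMeasurable
      (Filter.Eventually.of_forall hboundu)
    have : IntegrableOn (fun _ => m) (Set.uIoc a b) volume := by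
      exact integrableOn_const (hs := measure_Ioc_lt_top.ne) (hC := enorm_ne_top)
    exact this
  exact hInt.congr_fun (fun r hr => by
    simp [hu, Set.indicator_of_mem (hsub hr)]) measurableSet_uIoc

section Unique
variable {t0 T : ℝ} {G : ℝ → ℝ → ℝ}
    (hmeas : ∀ x : ℝ, Measurable fun t => G t x)
    {m : ℝ} (hm : 0 ≤ m) (hbound : ∀ t ∈ Icc t0 T, ∀ x : ℝ, |G t x| ≤ m)
    {L : ℝ} (hL : 0 ≤ L)
    (hlip : ∀ t ∈ Icc t0 T, ∀ x y : ℝ, |G t x - G t y| ≤ L * |x - y|)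

include hmeas hm hbound hL hlip

/-- Difference formula for a Carathéodory solution. -/
lemma sol_diff {γ : ℝ → ℝ} (hγc : ContinuousOn γ (Icc t0 T))
    {s x : ℝ} (hs : s ∈ Icc t0 T)
    (heq : ∀ t ∈ Icc t0 T, γ t = x + ∫ r in s..t, G r (γ r))
    {σ r : ℝ} (hσ : σ ∈ Icc t0 T) (hr : r ∈ Icc t0 T) :
    γ r - γ σ = ∫ ρ in σ..r, G ρ (γ ρ) := by
  have h1 := heq r hr
  have h2 := heq σ hσ
  have hadd := intervalIntegral.integral_add_adjacent_intervals
    (comp_integrable hmeas hm hbound hL hlip hγc hs hσ)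
    (comp_integrable hmeas hm hbound hL hlip hγc hσ hr)
    (f := fun ρ => G ρ (γ ρ))
  rw [h1, h2]
  linarith [hadd]

/-- Uniqueness of Carathéodory solutions agreeing at one point. -/
lemma sol_unique {γ₁ γ₂ : ℝ → ℝ}
    (hγ₁c : ContinuousOn γ₁ (Icc t0 T)) (hγ₂c : ContinuousOn γ₂ (Icc t0 T))
    {s₁ x₁ s₂ x₂ : ℝ} (hs₁ : s₁ ∈ Icc t0 T) (hs₂ : s₂ ∈ Icc t0 T)
    (heq₁ : ∀ t ∈ Icc t0 T, γ₁ t = x₁ + ∫ r in s₁..t, G r (γ₁ r))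
    (heq₂ : ∀ t ∈ Icc t0 T, γ₂ t = x₂ + ∫ r in s₂..t, G r (γ₂ r))
    {σ : ℝ} (hσ : σ ∈ Icc t0 T) (hagree : γ₁ σ = γ₂ σ) :
    ∀ r ∈ Icc t0 T, γ₁ r = γ₂ r := by
  set g : ℝ → ℝ := fun r => |γ₁ r - γ₂ r| with hg
  have hgc : ContinuousOn g (Icc t0 T) := (hγ₁c.sub hγ₂c).abs
  have hg0 : ∀ r ∈ Icc t0 T, 0 ≤ g r := fun r _ => abs_nonneg _
  have hdiff : ∀ r ∈ Icc t0 T,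
      γ₁ r - γ₂ r = ∫ ρ in σ..r, (G ρ (γ₁ ρ) - G ρ (γ₂ ρ)) := by
    intro r hr
    have d1 := sol_diff hmeas hm hbound hL hlip hγ₁c hs₁ heq₁ hσ hr
    have d2 := sol_diff hmeas hm hbound hL hlip hγ₂c hs₂ heq₂ hσ hr
    rw [intervalIntegral.integral_sub
      (comp_integrable hmeas hm hbound hL hlip hγ₁c hσ hr)
      (comp_integrable hmeas hm hbound hL hlip hγ₂c hσ hr), ← d1, ← d2]
    linarith [hagree]
  -- key estimate
  have hest : ∀ a b : ℝ, a ∈ Icc t0 T → b ∈ Icc t0 T → a ≤ b →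
      |∫ ρ in a..b, (G ρ (γ₁ ρ) - G ρ (γ₂ ρ))| ≤ L * ∫ ρ in a..b, g ρ := by
    intro a b ha hb hab
    have hint : IntervalIntegrable (fun ρ => G ρ (γ₁ ρ) - G ρ (γ₂ ρ)) volume a b :=
      (comp_integrable hmeas hm hbound hL hlip hγ₁c ha hb).sub
        (comp_integrable hmeas hm hbound hL hlip hγ₂c ha hb)
    calc |∫ ρ in a..b, (G ρ (γ₁ ρ) - G ρ (γ₂ ρ))|
        ≤ ∫ ρ in a..b, |G ρ (γ₁ ρ) - G ρ (γ₂ ρ)| :=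
          intervalIntegral.abs_integral_le_integral_abs hab
      _ ≤ ∫ ρ in a..b, L * g ρ := by
          apply intervalIntegral.integral_mono_on hab hint.abs
            (((continuous_const.comp_continuousOn (hgc.mono (Icc_subset_Icc ha.1 hb.2))).mul
              (hgc.mono (Icc_subset_Icc ha.1 hb.2))).intervalIntegrable_of_Icc hab)
          intro ρ hρ
          exact hlip ρ ⟨le_trans ha.1 hρ.1, le_trans hρ.2 hb.2⟩ _ _
      _ = L * ∫ ρ in a..b, g ρ := intervalIntegral.integral_const_mul _ _
  -- forward zone
  have hfwd : ∀ r ∈ Icc σ T, g r = 0 := by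
    apply gronwall_zero hL (hgc.mono (Icc_subset_Icc hσ.1 le_rfl))
      (fun r hr => hg0 r ⟨le_trans hσ.1 hr.1, hr.2⟩)
    intro r hr
    have hr' : r ∈ Icc t0 T := ⟨le_trans hσ.1 hr.1, hr.2⟩
    show |γ₁ r - γ₂ r| ≤ L * ∫ ρ in σ..r, g ρ
    rw [hdiff r hr']
    exact hest σ r hσ hr' hr.1
  have hbwd : ∀ r ∈ Icc t0 σ, g r = 0 := by
    apply gronwall_zero' hL (hgc.mono (Icc_subset_Icc le_rfl hσ.2))
      (fun r hr => hg0 r ⟨hr.1, le_trans hr.2 hσ.2⟩)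
    intro r hr
    have hr' : r ∈ Icc t0 T := ⟨hr.1, le_trans hr.2 hσ.2⟩
    have hkey : g r = |∫ ρ in r..σ, (G ρ (γ₁ ρ) - G ρ (γ₂ ρ))| := by
      show |γ₁ r - γ₂ r| = _
      rw [hdiff r hr', intervalIntegral.integral_symm, abs_neg]
    rw [hkey]
    exact hest r σ hr' hσ hr.2
  intro r hr
  have : g r = 0 := by
    rcases le_total r σ with h | h
    · exact hbwd r ⟨hr.1, h⟩
    · exact hfwd r ⟨h, hr.2⟩
  have := abs_eq_zero.mp this
  linarith

/-- A Carathéodory solution can cross the level 1 at most once, if `G r 1 > 0`. -/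
lemma cross_unique (hG1 : ∀ r ∈ Icc t0 T, 0 < G r 1)
    {γ : ℝ → ℝ} (hγc : ContinuousOn γ (Icc t0 T))
    {s x : ℝ} (hs : s ∈ Icc t0 T)
    (heq : ∀ t ∈ Icc t0 T, γ t = x + ∫ r in s..t, G r (γ r))
    {s₁ s₂ : ℝ} (hs₁ : s₁ ∈ Icc t0 T) (hs₂ : s₂ ∈ Icc t0 T)
    (h1 : γ s₁ = 1) (h2 : γ s₂ = 1) : s₁ = s₂ := by
  -- pointwise key estimate
  have hkey : ∀ ρ ∈ Icc t0 T, -(L * |γ ρ - 1|) ≤ G ρ (γ ρ) := by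
    intro ρ hρ
    have h := neg_abs_le (G ρ (γ ρ) - G ρ 1)
    have h2 := hlip ρ hρ (γ ρ) 1
    have h3 := hG1 ρ hρ
    have : -(L * |γ ρ - 1|) ≤ G ρ (γ ρ) - G ρ 1 := le_trans (neg_le_neg h2) h
    linarith
  set f : ℝ → ℝ := fun ρ => γ ρ - 1 with hf
  have hfc : ContinuousOn f (Icc t0 T) := hγc.sub continuousOn_const
  -- main claim: no two crossings a < b
  have main : ∀ a b : ℝ, a ∈ Icc t0 T → b ∈ Icc t0 T → γ a = 1 → γ b = 1 →
      a < b → False := by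
    intro a b ha hb hga hgb hab
    have habT : Icc a b ⊆ Icc t0 T := Icc_subset_Icc ha.1 hb.2
    -- Step A: f ≥ 0 on [a, b]
    have hf_nonneg : ∀ ρ ∈ Icc a b, 0 ≤ f ρ := by
      by_contra hcon
      push_neg at hcon
      obtain ⟨r₀, hr₀, hneg⟩ := hcon
      set S : Set ℝ := Icc a r₀ ∩ f ⁻¹' {0} with hS
      have hScl : IsClosed S :=
        (hfc.mono (Icc_subset_Icc ha.1 (le_trans hr₀.2 hb.2))).preimage_isClosed_of_isClosed
          isClosed_Icc isClosed_singleton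
      have haS : a ∈ S := ⟨⟨le_rfl, hr₀.1⟩, by simp [hf, hga]⟩
      have hSbdd : BddAbove S := bddAbove_Icc.mono Set.inter_subset_left
      set r₁ : ℝ := sSup S with hr₁def
      have hr₁S : r₁ ∈ S := hScl.csSup_mem ⟨a, haS⟩ hSbdd
      have hr₁Icc : r₁ ∈ Icc a r₀ := hr₁S.1
      have hfr₁ : f r₁ = 0 := hr₁S.2
      have hr₁T : r₁ ∈ Icc t0 T := habT ⟨hr₁Icc.1, le_trans hr₁Icc.2 hr₀.2⟩
      have hr₀T : r₀ ∈ Icc t0 T := habT hr₀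
      have hsub10 : Icc r₁ r₀ ⊆ Icc t0 T := Icc_subset_Icc hr₁T.1 hr₀T.2
      -- f ≤ 0 on [r₁, r₀]
      have hfle : ∀ r ∈ Icc r₁ r₀, f r ≤ 0 := by
        intro r hr
        by_contra hpos
        push_neg at hpos
        have hrlt : r < r₀ := by
          rcases lt_or_eq_of_le hr.2 with h | h
          · exact h
          · exfalso; rw [h] at hpos; linarith
        obtain ⟨c, hc, hfc0⟩ : ∃ c ∈ Icc r r₀, f c = 0 := by
          have hiv := intermediate_value_Icc' hr.2
            ((hfc.mono (Icc_subset_Icc (hsub10 ⟨hr.1, hr.2⟩).1 hr₀T.2)).mono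
              (Icc_subset_Icc le_rfl le_rfl))
          have h0mem : (0 : ℝ) ∈ Icc (f r₀) (f r) := ⟨le_of_lt hneg, le_of_lt hpos⟩
          obtain ⟨c, hc, hfc0⟩ := hiv h0mem
          exact ⟨c, hc, hfc0⟩
        have hcS : c ∈ S := ⟨⟨le_trans hr₁Icc.1 (le_trans hr.1 hc.1), hc.2⟩, by simp [hfc0]⟩
        have : c ≤ r₁ := le_csSup hSbdd hcS
        have hr₁r : r₁ < r := by
          rcases lt_or_eq_of_le hr.1 with h | h
          · exact h
          · exfalso; rw [← h] at hpos; rw [hfr₁] at hpos; exact lt_irrefl 0 hpos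
        linarith [hc.1]
      -- Grönwall on [r₁, r₀] for g = -f
      have hg0 : ∀ r ∈ Icc r₁ r₀, (0:ℝ) ≤ -f r := fun r hr => by linarith [hfle r hr]
      have hgron : ∀ r ∈ Icc r₁ r₀, -f r = 0 := by
        apply gronwall_zero hL ((hfc.mono hsub10).neg) hg0
        intro ρ hρ
        have hρT : ρ ∈ Icc t0 T := hsub10 hρ
        have hd : f ρ - f r₁ = ∫ r in r₁..ρ, G r (γ r) := by
          have := sol_diff hmeas hm hbound hL hlip hγc hs heq hr₁T hρT
          simpa [hf] using this
        have hmono : (∫ r in r₁..ρ, -(L * (-f r))) ≤ ∫ r in r₁..ρ, G r (γ r) := by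
          apply intervalIntegral.integral_mono_on hρ.1
            ((((continuousOn_const.mul ((hfc.mono hsub10).neg)).neg).mono
              (Icc_subset_Icc le_rfl hρ.2)).intervalIntegrable_of_Icc hρ.1)
            (comp_integrable hmeas hm hbound hL hlip hγc hr₁T hρT)
          intro r hr
          have hrT : r ∈ Icc t0 T := hsub10 ⟨hr.1, le_trans hr.2 hρ.2⟩
          have habs : |γ r - 1| = -f r :=
            abs_of_nonpos (hfle r ⟨hr.1, le_trans hr.2 hρ.2⟩)
          have := hkey r hrT
          rw [habs] at this
          exact this
        have hcalc : (∫ r in r₁..ρ, -(L * (-f r))) = -(L * ∫ r in r₁..ρ, -f r) := by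
          rw [intervalIntegral.integral_neg, intervalIntegral.integral_const_mul]
        rw [hcalc] at hmono
        rw [hfr₁] at hd
        show -f ρ ≤ L * ∫ r in r₁..ρ, -f r
        linarith [hd ▸ hmono]
      have := hgron r₀ ⟨hr₁Icc.2, le_rfl⟩
      linarith
    -- Step B: backward Grönwall gives f ≡ 0 on [a, b]
    have hf_zero : ∀ ρ ∈ Icc a b, f ρ = 0 := by
      apply gronwall_zero' hL (hfc.mono habT) hf_nonneg
      intro ρ hρ
      have hρT : ρ ∈ Icc t0 T := habT hρ
      have hd : f b - f ρ = ∫ r in ρ..b, G r (γ r) := by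
        have := sol_diff hmeas hm hbound hL hlip hγc hs heq hρT hb
        simpa [hf] using this
      have hfb : f b = 0 := by simp [hf, hgb]
      have hmono : (∫ r in ρ..b, -(L * f r)) ≤ ∫ r in ρ..b, G r (γ r) := by
        apply intervalIntegral.integral_mono_on hρ.2
          ((((continuousOn_const.mul (hfc.mono habT)).neg).mono
            (Icc_subset_Icc hρ.1 le_rfl)).intervalIntegrable_of_Icc hρ.2)
          (comp_integrable hmeas hm hbound hL hlip hγc hρT hb)
        intro r hr
        have hrab : r ∈ Icc a b := ⟨le_trans hρ.1 hr.1, hr.2⟩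
        have habs : |γ r - 1| = f r := abs_of_nonneg (hf_nonneg r hrab)
        have := hkey r (habT hrab)
        rw [habs] at this
        exact this
      have hcalc : (∫ r in ρ..b, -(L * f r)) = -(L * ∫ r in ρ..b, f r) := by
        rw [intervalIntegral.integral_neg, intervalIntegral.integral_const_mul]
      rw [hcalc] at hmono
      linarith [hd ▸ hmono]
    -- but then the integral of G(r, 1) over [a, b] is both 0 and positive
    have hd : γ b - γ a = ∫ r in a..b, G r (γ r) :=
      sol_diff hmeas hm hbound hL hlip hγc hs heq ha hb
    have hzero : (∫ r in a..b, G r (γ r)) = 0 := by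
      rw [← hd, hga, hgb]; ring
    have hpos : 0 < ∫ r in a..b, G r (γ r) := by
      apply intervalIntegral.intervalIntegral_pos_of_pos_on
        (comp_integrable hmeas hm hbound hL hlip hγc ha hb) _ hab
      intro r hr
      have hrab : r ∈ Icc a b := ⟨le_of_lt hr.1, le_of_lt hr.2⟩
      have : γ r = 1 := by have := hf_zero r hrab; simp [hf] at this; linarith
      rw [this]
      exact hG1 r (habT hrab)
    linarith
  rcases lt_trichotomy s₁ s₂ with h | h | h
  · exact absurd (main s₁ s₂ hs₁ hs₂ h1 h2 h) not_false
  · exact h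
  · exact absurd (main s₂ s₁ hs₂ hs₁ h2 h1 h) not_false

end Unique

/-- The entry time `φ` into the region `Ω₁ = {(t, x) : 1 ≤ x < Φ(t, t0, 1)}`
is constant along characteristic curves:
`φ(σ, Φ(σ, t, x)) = φ(t, x)`. -/
theorem entry_time_constant_along_characteristics
    (t0 T : ℝ) (ht : t0 < T) (G : ℝ → ℝ → ℝ)
    (hmeas : ∀ x : ℝ, Measurable fun t => G t x)
    (m : ℝ) (hm : 0 ≤ m) (hbound : ∀ t ∈ Icc t0 T, ∀ x : ℝ, |G t x| ≤ m)
    (L : ℝ) (hL : 0 ≤ L)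
    (hlip : ∀ t ∈ Icc t0 T, ∀ x y : ℝ, |G t x - G t y| ≤ L * |x - y|)
    (Φ : ℝ → ℝ → ℝ → ℝ)
    (hΦ : ∀ s ∈ Icc t0 T, ∀ x : ℝ, IsCaratheodorySol t0 T G s x (fun t => Φ t s x))
    (hG1 : ∀ r ∈ Icc t0 T, 0 < G r 1)
    (φ : ℝ → ℝ → ℝ)
    (hφ : ∀ t ∈ Icc t0 T, ∀ x : ℝ, 1 ≤ x → x ≤ Φ t t0 1 →
      φ t x ∈ Icc t0 t ∧ Φ (φ t x) t x = 1) :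
    ∀ t ∈ Icc t0 T, ∀ x : ℝ, 1 ≤ x → x ≤ Φ t t0 1 →
      ∀ σ ∈ Icc t0 T, 1 ≤ Φ σ t x → Φ σ t x ≤ Φ σ t0 1 →
        φ σ (Φ σ t x) = φ t x := by
  intro t htT x hx1 hxΦ σ hσ h1y h2y
  set y := Φ σ t x with hy
  obtain ⟨hγc, hγeq⟩ := hΦ t htT x
  obtain ⟨hδc, hδeq⟩ := hΦ σ hσ y
  have hδσ : Φ σ σ y = y := by simpa using hδeq σ hσ
  have huniq : ∀ r ∈ Icc t0 T, Φ r σ y = Φ r t x :=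
    sol_unique hmeas hm hbound hL hlip hδc hγc hσ htT hδeq hγeq hσ (by rw [hδσ])
  obtain ⟨hs₁mem, hs₁⟩ := hφ σ hσ y h1y h2y
  obtain ⟨hs₂mem, hs₂⟩ := hφ t htT x hx1 hxΦ
  have hs₁T : φ σ y ∈ Icc t0 T := ⟨hs₁mem.1, le_trans hs₁mem.2 hσ.2⟩
  have hs₂T : φ t x ∈ Icc t0 T := ⟨hs₂mem.1, le_trans hs₂mem.2 htT.2⟩
  have hγs₁ : Φ (φ σ y) t x = 1 := by rw [← huniq _ hs₁T]; exact hs₁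
  exact cross_unique hmeas hm hbound hL hlip hG1 hγc htT hγeq hs₁T hs₂T hγs₁ hs₂
end

section
/- Let a > 0, b > 0, γ ∈ ℝ, s ∈ ℝ, x ∈ (0, b], and let C : ℝ → ℝ be continuous. Define I(t) = ∫_0^t C(τ)·e^(a τ) dτ and Φ(t) = b·(x/b)^(e^(−a(t−s))) · exp( −γ·e^(−a t)·(I(t) − I(s)) ). Then Φ(s) = x and for every t ∈ ℝ, Φ is differentiable at t with Φ'(t) = a·Φ(t)·log(b/Φ(t)) − γ·C(t)·Φ(t). -/
open MeasureTheory

/-- The explicit characteristic curves of the Gompertzian model with chemotherapy: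
with `I t = ∫_0^t C τ e^{a τ} dτ`, the function
`Φ t = b (x/b)^{e^{−a(t−s)}} · exp (−γ e^{−a t} (I t − I s))` satisfies `Φ s = x` and
`Φ' t = a Φ t log (b / Φ t) − γ C t Φ t`. -/
theorem gompertz_chemo_characteristics (a b γ s x : ℝ) (ha : 0 < a) (hb : 0 < b)
    (hx0 : 0 < x) (hxb : x ≤ b)
    (C : ℝ → ℝ) (hC : Continuous C)
    (I : ℝ → ℝ) (hI : ∀ t, I t = ∫ τ in (0:ℝ)..t, C τ * Real.exp (a * τ))
    (Φ : ℝ → ℝ)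
    (hΦ : ∀ t, Φ t =
      b * Real.exp (Real.exp (-a * (t - s)) * Real.log (x / b)) *
        Real.exp (-γ * Real.exp (-a * t) * (I t - I s))) :
    Φ s = x ∧
      ∀ t : ℝ, HasDerivAt Φ (a * Φ t * Real.log (b / Φ t) - γ * C t * Φ t) t := by
  set L : ℝ := Real.log (x / b) with hL
  set F : ℝ → ℝ := fun u => Real.exp (-a * (u - s)) * L - γ * (Real.exp (-a * u) * (I u - I s))
    with hF
  have hΦF : ∀ u, Φ u = b * Real.exp (F u) := by
    intro u
    rw [hΦ u, hF]
    simp only [mul_assoc, ← Real.exp_add]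
    ring_nf
  have hΦs : Φ s = x := by
    rw [hΦF s]
    simp only [hF, sub_self, mul_zero, neg_zero, zero_mul, Real.exp_zero, one_mul, sub_zero]
    rw [hL, Real.exp_log (by positivity : (0:ℝ) < x / b)]
    field_simp
  refine ⟨hΦs, fun t => ?_⟩
  -- derivative of I
  set f : ℝ → ℝ := fun τ => C τ * Real.exp (a * τ) with hf
  have hfc : Continuous f := hC.mul (Real.continuous_exp.comp (continuous_const.mul continuous_id))
  have hIder : HasDerivAt I (f t) t := by
    have hIfun : I = fun u => ∫ τ in (0:ℝ)..u, f τ := funext hI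
    rw [hIfun]
    exact intervalIntegral.integral_hasDerivAt_right (hfc.intervalIntegrable 0 t)
      (hfc.stronglyMeasurableAtFilter _ _) hfc.continuousAt
  -- derivative of F
  have hA : HasDerivAt (fun u : ℝ => Real.exp (-a * (u - s)) * L)
      (-a * Real.exp (-a * (t - s)) * L) t := by
    have h1 : HasDerivAt (fun u : ℝ => -a * (u - s)) (-a) t := by
      simpa using ((hasDerivAt_id t).sub_const s).const_mul (-a)
    have := (h1.exp).mul_const L
    refine this.congr_deriv ?_
    ring
  have hE : HasDerivAt (fun u : ℝ => Real.exp (-a * u)) (-a * Real.exp (-a * t)) t := by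
    have h1 : HasDerivAt (fun u : ℝ => -a * u) (-a) t := by
      simpa using (hasDerivAt_id t).const_mul (-a)
    have := h1.exp
    convert this using 1
    ring
  have hB : HasDerivAt (fun u : ℝ => Real.exp (-a * u) * (I u - I s))
      (-a * Real.exp (-a * t) * (I t - I s) + Real.exp (-a * t) * f t) t :=
    hE.mul (hIder.sub_const (I s))
  have hFder : HasDerivAt F (-a * F t - γ * C t) t := by
    have := hA.sub ((hB.const_mul γ))
    refine this.congr_deriv ?_
    have hkey : Real.exp (-a * t) * f t = C t := by
      rw [hf]
      have : Real.exp (-a * t) * Real.exp (a * t) = 1 := by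
        rw [← Real.exp_add]; ring_nf; exact Real.exp_zero
      calc Real.exp (-a * t) * (C t * Real.exp (a * t))
          = C t * (Real.exp (-a * t) * Real.exp (a * t)) := by ring
        _ = C t := by rw [this]; ring
    rw [hF]
    simp only
    rw [← hkey]
    ring
  -- derivative of Φ
  have hΦder : HasDerivAt Φ (b * Real.exp (F t) * (-a * F t - γ * C t)) t := by
    have hfun : Φ = fun u => b * Real.exp (F u) := funext hΦF
    rw [hfun]
    have := (hFder.exp).const_mul b
    refine this.congr_deriv ?_
    ring
  have hlog : Real.log (b / Φ t) = -F t := by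
    rw [hΦF t, Real.log_div (ne_of_gt hb) (by positivity),
      Real.log_mul (ne_of_gt hb) (Real.exp_ne_zero _), Real.log_exp]
    ring
  have : a * Φ t * Real.log (b / Φ t) - γ * C t * Φ t
      = b * Real.exp (F t) * (-a * F t - γ * C t) := by
    rw [hlog, hΦF t]; ring
  rw [this]
  exact hΦder
end

section
/- Let t0 < T, 1 < b, let G : [t0,T] × [1,b] → ℝ be continuous with continuous partial derivative ∂_x G, let β : [1,b] → ℝ be continuous, f : [t0,T] → ℝ be continuous, and let u : [t0,T] × [1,b] → ℝ be continuously differentiable and satisfy: (i) ∂_t u(t,x) + ∂_x (G(t,x)·u(t,x)) = 0 on [t0,T] × [1,b]; (ii) G(t,b)·u(t,b) = 0 for all t ∈ [t0,T]; (iii) G(t,1)·u(t,1) = ∫_1^b β(x)·u(t,x) dx + f(t) for all t ∈ [t0,T]. Then for every t ∈ [t0,T], ∫_1^b |u(t,x)| dx ≤ e^(‖β‖_∞·(T − t0)) · ( ∫_{t0}^T |f(s)| ds + ∫_1^b |u(t0,x)| dx ), where ‖β‖_∞ = sup_{x ∈ [1,b]} |β(x)|. -/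
open MeasureTheory Set

namespace TransportAux

noncomputable def sq (ε r : ℝ) : ℝ := Real.sqrt (r^2 + ε^2)

lemma sq_pos {ε : ℝ} (hε : 0 < ε) (r : ℝ) : 0 < sq ε r :=
  Real.sqrt_pos.2 (by positivity)

lemma abs_le_sq {ε : ℝ} (r : ℝ) : |r| ≤ sq ε r := by
  rw [← Real.sqrt_sq_eq_abs]
  exact Real.sqrt_le_sqrt (by nlinarith [sq_nonneg ε])

lemma sq_le {ε : ℝ} (hε : 0 < ε) (r : ℝ) : sq ε r ≤ |r| + ε := by
  rw [show |r| + ε = Real.sqrt ((|r| + ε)^2) from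
    (Real.sqrt_sq (by positivity)).symm]
  exact Real.sqrt_le_sqrt (by nlinarith [abs_nonneg r, sq_abs r])

lemma sq_hasDerivAt {ε : ℝ} (hε : 0 < ε) (r : ℝ) :
    HasDerivAt (sq ε) (r / sq ε r) r := by
  have h1 : HasDerivAt (fun r : ℝ => r^2 + ε^2) (2 * r) r := by
    simpa using ((hasDerivAt_pow 2 r).add_const (ε^2))
  have h2 := (Real.hasDerivAt_sqrt (x := r^2 + ε^2) (by positivity)).comp r h1
  refine h2.congr_deriv ?_
  unfold sq
  rw [div_mul_eq_mul_div, one_mul, mul_div_mul_left _ _ two_ne_zero]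

lemma sq_sq {ε : ℝ} (hε : 0 < ε) (r : ℝ) : (sq ε r)^2 = r^2 + ε^2 :=
  Real.sq_sqrt (by positivity)

lemma abs_deriv_le {ε : ℝ} (hε : 0 < ε) (r : ℝ) : |r / sq ε r| ≤ 1 := by
  rw [abs_div, abs_of_pos (sq_pos hε r), div_le_one (sq_pos hε r)]
  exact abs_le_sq r

lemma eps_div_le {ε : ℝ} (hε : 0 < ε) (r : ℝ) : ε^2 / sq ε r ≤ ε := by
  rw [div_le_iff₀ (sq_pos hε r)]
  have h : ε ≤ sq ε r :=
    calc ε = Real.sqrt (ε^2) := by rw [Real.sqrt_sq hε.le]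
    _ ≤ sq ε r := Real.sqrt_le_sqrt (by nlinarith [sq_nonneg r])
  nlinarith

lemma eps_div_pos {ε : ℝ} (hε : 0 < ε) (r : ℝ) : 0 < ε^2 / sq ε r :=
  div_pos (by positivity) (sq_pos hε r)

end TransportAux

open TransportAux

set_option maxHeartbeats 1000000 in
/-- A priori `L¹` estimate for the metastatic transport model: if `u` solves
`∂ₜ u + ∂ₓ (G u) = 0` on `[t0, T] × [1, b]` with the zero-flux condition at `x = b`
and the nonlocal boundary condition `G(t,1) u(t,1) = ∫_1^b β(x) u(t,x) dx + f(t)`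
at `x = 1`, then
`∫_1^b |u(t,x)| dx ≤ e^{‖β‖_∞ (T − t0)} (∫_{t0}^T |f| + ∫_1^b |u(t0, ·)|)`. -/
theorem transport_L1_estimate
    (t0 T b : ℝ) (ht : t0 < T) (hb : 1 < b)
    (G : ℝ → ℝ → ℝ)
    (hGcont : Continuous fun p : ℝ × ℝ => G p.1 p.2)
    (hGdiff : ∀ t : ℝ, Differentiable ℝ (G t))
    (hGxcont : Continuous fun p : ℝ × ℝ => deriv (G p.1) p.2)
    (β : ℝ → ℝ) (hβ : Continuous β)
    (f : ℝ → ℝ) (hf : Continuous f)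
    (u : ℝ → ℝ → ℝ)
    (hu : ContDiff ℝ 1 (fun p : ℝ × ℝ => u p.1 p.2))
    (hpde : ∀ t ∈ Icc t0 T, ∀ x ∈ Icc (1:ℝ) b,
      deriv (fun τ => u τ x) t + deriv (fun y => G t y * u t y) x = 0)
    (hbc_b : ∀ t ∈ Icc t0 T, G t b * u t b = 0)
    (hbc_1 : ∀ t ∈ Icc t0 T,
      G t 1 * u t 1 = (∫ x in (1:ℝ)..b, β x * u t x) + f t) :
    ∀ t ∈ Icc t0 T,
      (∫ x in (1:ℝ)..b, |u t x|) ≤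
        Real.exp ((⨆ x : Icc (1:ℝ) b, |β ↑x|) * (T - t0)) *
          ((∫ s in t0..T, |f s|) + ∫ x in (1:ℝ)..b, |u t0 x|) := by
  intro t htmem
  set U : ℝ × ℝ → ℝ := fun p => u p.1 p.2 with hUdef
  have hUc : Continuous U := hu.continuous
  have hUd : Differentiable ℝ U := hu.differentiable one_ne_zero
  have hUf : Continuous (fderiv ℝ U) := hu.continuous_fderiv one_ne_zero
  -- partial derivatives
  set ut : ℝ → ℝ → ℝ := fun t x => fderiv ℝ U (t, x) (1, 0) with hutdef
  set ux : ℝ → ℝ → ℝ := fun t x => fderiv ℝ U (t, x) (0, 1) with huxdef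
  have hut_c : Continuous fun p : ℝ × ℝ => ut p.1 p.2 := by
    exact hUf.clm_apply continuous_const
  have hux_c : Continuous fun p : ℝ × ℝ => ux p.1 p.2 := by
    exact hUf.clm_apply continuous_const
  have hut_d : ∀ t x, HasDerivAt (fun τ => u τ x) (ut t x) t := by
    intro t x
    have hcurve : HasDerivAt (fun τ : ℝ => ((τ, x) : ℝ × ℝ)) (1, 0) t :=
      (hasDerivAt_id t).prodMk (hasDerivAt_const t x)
    exact (hUd (t, x)).hasFDerivAt.comp_hasDerivAt t hcurve
  have hux_d : ∀ t x, HasDerivAt (fun y => u t y) (ux t x) x := by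
    intro t x
    have hcurve : HasDerivAt (fun y : ℝ => ((t, y) : ℝ × ℝ)) (0, 1) x :=
      (hasDerivAt_const x t).prodMk (hasDerivAt_id x)
    exact (hUd (t, x)).hasFDerivAt.comp_hasDerivAt x hcurve
  -- continuity in x of slices
  have hu_cx : ∀ τ, Continuous (fun x => u τ x) :=
    fun τ => hUc.comp (continuous_const.prodMk continuous_id)
  have hut_cx : ∀ τ, Continuous (fun x => ut τ x) :=
    fun τ => hut_c.comp (continuous_const.prodMk continuous_id)
  have hux_cx : ∀ τ, Continuous (fun x => ux τ x) :=
    fun τ => hux_c.comp (continuous_const.prodMk continuous_id)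
  have hG_cx : ∀ τ, Continuous (fun x => G τ x) :=
    fun τ => hGcont.comp (continuous_const.prodMk continuous_id)
  have hGx_cx : ∀ τ, Continuous (fun x => deriv (G τ) x) :=
    fun τ => hGxcont.comp (continuous_const.prodMk continuous_id)
  -- PDE in terms of partials
  have hpde' : ∀ τ ∈ Icc t0 T, ∀ x ∈ Icc (1:ℝ) b,
      ut τ x = -(deriv (G τ) x * u τ x + G τ x * ux τ x) := by
    intro τ hτ x hx
    have h1 : deriv (fun s => u s x) τ = ut τ x := (hut_d τ x).deriv
    have h2 : deriv (fun y => G τ y * u τ y) x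
        = deriv (G τ) x * u τ x + G τ x * ux τ x :=
      (((hGdiff τ) x).hasDerivAt.mul (hux_d τ x)).deriv
    have h := hpde τ hτ x hx
    rw [h1, h2] at h
    linarith
  -- sup norm of β
  set M : ℝ := ⨆ x : Icc (1:ℝ) b, |β ↑x| with hMdef
  have hβbdd : BddAbove (Set.range fun x : Icc (1:ℝ) b => |β ↑x|) := by
    obtain ⟨C, hC⟩ := (isCompact_Icc : IsCompact (Icc (1:ℝ) b)).bddAbove_image
      ((continuous_abs.comp hβ).continuousOn)
    refine ⟨C, ?_⟩
    rintro y ⟨x, rfl⟩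
    exact hC (Set.mem_image_of_mem _ x.2)
  have hM : ∀ x ∈ Icc (1:ℝ) b, |β x| ≤ M := fun x hx =>
    le_ciSup hβbdd (⟨x, hx⟩ : Icc (1:ℝ) b)
  have hM0 : 0 ≤ M := le_trans (abs_nonneg _) (hM 1 ⟨le_rfl, hb.le⟩)
  -- compact bounds for G and ∂ₓG
  have hQ : IsCompact ((Icc t0 T) ×ˢ (Icc (1:ℝ) b)) := isCompact_Icc.prod isCompact_Icc
  obtain ⟨Cx, hCx⟩ := hQ.exists_bound_of_continuousOn hGxcont.continuousOn
  obtain ⟨CG, hCG⟩ := hQ.exists_bound_of_continuousOn hGcont.continuousOn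
  have hmem0 : ((t0, 1) : ℝ × ℝ) ∈ (Icc t0 T) ×ˢ (Icc (1:ℝ) b) :=
    ⟨⟨le_rfl, ht.le⟩, ⟨le_rfl, hb.le⟩⟩
  have hCx0 : 0 ≤ Cx := le_trans (norm_nonneg _) (hCx _ hmem0)
  have hCG0 : 0 ≤ CG := le_trans (norm_nonneg _) (hCG _ hmem0)
  set K : ℝ := Cx * (b - 1) + 2 * CG with hKdef
  have hK0 : 0 ≤ K := by nlinarith
  -- the L¹ functional
  set F : ℝ → ℝ := fun τ => ∫ x in (1:ℝ)..b, |u τ x| with hFdef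
  have hFint : ∀ τ : ℝ, IntervalIntegrable (fun x => |u τ x|) volume 1 b :=
    fun τ => ((hu_cx τ).abs).intervalIntegrable 1 b
  show F t ≤ Real.exp (M * (T - t0)) * ((∫ s in t0..T, |f s|) + F t0)
  have key : ∀ ε : ℝ, 0 < ε →
      F t ≤ Real.exp (M * (T - t0)) * ((∫ s in t0..T, |f s|) + F t0)
        + ε * (Real.exp (M * (T - t0)) * (K * (T - t0) + (b - 1))) := by
    intro ε hε
    set Fe : ℝ → ℝ := fun τ => ∫ x in (1:ℝ)..b, sq ε (u τ x) with hFedef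
    set De : ℝ → ℝ := fun τ => ∫ x in (1:ℝ)..b, (u τ x / sq ε (u τ x)) * ut τ x with hDedef
    have hsq_cx : ∀ τ : ℝ, Continuous fun x => sq ε (u τ x) := fun τ =>
      Real.continuous_sqrt.comp (((hu_cx τ).pow 2).add continuous_const)
    have hq_cx : ∀ τ : ℝ, Continuous fun x => u τ x / sq ε (u τ x) :=
      fun τ => (hu_cx τ).div (hsq_cx τ) (fun x => (sq_pos hε _).ne')
    have hFe_int : ∀ τ : ℝ, IntervalIntegrable (fun x => sq ε (u τ x)) volume 1 b :=
      fun τ => (hsq_cx τ).intervalIntegrable 1 b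
    -- derivative of Fe under the integral sign
    have hFe_deriv : ∀ τ : ℝ, HasDerivAt Fe (De τ) τ := by
      intro τ
      obtain ⟨C, hC⟩ := ((isCompact_Icc.prod isCompact_Icc :
          IsCompact ((Icc (τ-1) (τ+1)) ×ˢ (Icc (1:ℝ) b)))).exists_bound_of_continuousOn
          hut_c.continuousOn
      have h := intervalIntegral.hasDerivAt_integral_of_dominated_loc_of_deriv_le
        (F := fun s x => sq ε (u s x))
        (F' := fun s x => (u s x / sq ε (u s x)) * ut s x)
        (x₀ := τ) (a := (1:ℝ)) (b := b) (μ := volume) (bound := fun _ => C)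
        (Metric.ball_mem_nhds τ one_pos) ?_ ?_ ?_ ?_ ?_ ?_
      · exact h.2
      · exact Filter.Eventually.of_forall fun s => ((hsq_cx s).aestronglyMeasurable)
      · exact hFe_int τ
      · exact ((hq_cx τ).mul (hut_cx τ)).aestronglyMeasurable
      · refine Filter.Eventually.of_forall fun x hx s hs => ?_
        have hxI : x ∈ Icc (1:ℝ) b := by
          rw [Set.uIoc_of_le hb.le] at hx
          exact Ioc_subset_Icc_self hx
        have hsI : s ∈ Icc (τ-1) (τ+1) := by
          rw [Metric.mem_ball, Real.dist_eq] at hs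
          have := abs_lt.1 hs
          constructor <;> linarith [this.1, this.2]
        have h1 : ‖ut s x‖ ≤ C := hC (s, x) ⟨hsI, hxI⟩
        rw [Real.norm_eq_abs] at h1 ⊢
        rw [abs_mul]
        have h2 := abs_deriv_le hε (u s x)
        nlinarith [abs_nonneg (ut s x), abs_nonneg (u s x / sq ε (u s x))]
      · exact intervalIntegrable_const
      · refine Filter.Eventually.of_forall fun x hx s hs => ?_
        exact HasDerivAt.comp (h₂ := sq ε) (h := fun τ => u τ x) s (sq_hasDerivAt hε (u s x)) (hut_d s x)
    -- differential inequality
    have hDe_bound : ∀ τ ∈ Icc t0 T, De τ ≤ M * F τ + |f τ| + K * ε := by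
      intro τ hτ
      set P : ℝ → ℝ := fun x => G τ x * sq ε (u τ x) with hPdef
      set P' : ℝ → ℝ := fun x =>
        deriv (G τ) x * sq ε (u τ x) + G τ x * ((u τ x / sq ε (u τ x)) * ux τ x) with hP'def
      have hP_d : ∀ x : ℝ, HasDerivAt P (P' x) x := fun x =>
        ((hGdiff τ x).hasDerivAt.mul ((sq_hasDerivAt hε (u τ x)).comp x (hux_d τ x)))
      have hP'_c : Continuous P' :=
        ((hGx_cx τ).mul (hsq_cx τ)).add ((hG_cx τ).mul ((hq_cx τ).mul (hux_cx τ)))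
      have hftc : ∫ x in (1:ℝ)..b, P' x = P b - P 1 :=
        intervalIntegral.integral_eq_sub_of_hasDerivAt
          (fun x _ => hP_d x) (hP'_c.intervalIntegrable 1 b)
      have hc2 : Continuous fun x => deriv (G τ) x * (ε^2 / sq ε (u τ x)) :=
        (hGx_cx τ).mul (continuous_const.div (hsq_cx τ) (fun x => (sq_pos hε _).ne'))
      have hint2 : IntervalIntegrable (fun x => deriv (G τ) x * (ε^2 / sq ε (u τ x)))
          volume 1 b := hc2.intervalIntegrable 1 b
      have hDe_eq : De τ
          = (∫ x in (1:ℝ)..b, deriv (G τ) x * (ε^2 / sq ε (u τ x))) - (P b - P 1) := by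
        rw [← hftc, ← intervalIntegral.integral_sub hint2 (hP'_c.intervalIntegrable 1 b)]
        apply intervalIntegral.integral_congr
        intro x hx
        rw [Set.uIcc_of_le hb.le] at hx
        have hut' := hpde' τ hτ x hx
        have hs := sq_pos hε (u τ x)
        have hss := sq_sq hε (u τ x)
        simp only [hP'def]
        rw [hut']
        field_simp
        linear_combination (deriv (G τ) x) * hss
      have hIbound : (∫ x in (1:ℝ)..b, deriv (G τ) x * (ε^2 / sq ε (u τ x)))
          ≤ Cx * ε * (b - 1) := by
        have h1 : (∫ x in (1:ℝ)..b, deriv (G τ) x * (ε^2 / sq ε (u τ x)))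
            ≤ ∫ _x in (1:ℝ)..b, Cx * ε := by
          apply intervalIntegral.integral_mono_on hb.le hint2 intervalIntegrable_const
          intro x hx
          have h2 : ‖deriv (G τ) x‖ ≤ Cx := hCx (τ, x) ⟨hτ, hx⟩
          rw [Real.norm_eq_abs] at h2
          have h3 := eps_div_le hε (u τ x)
          have h4 := (eps_div_pos hε (u τ x)).le
          have h5 := le_abs_self (deriv (G τ) x)
          nlinarith
        calc (∫ x in (1:ℝ)..b, deriv (G τ) x * (ε^2 / sq ε (u τ x)))
            ≤ ∫ _x in (1:ℝ)..b, Cx * ε := h1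
        _ = (b - 1) * (Cx * ε) := by
              rw [intervalIntegral.integral_const, smul_eq_mul]
        _ = Cx * ε * (b - 1) := by ring
      have hP1 : P 1 ≤ M * F τ + |f τ| + CG * ε := by
        show G τ 1 * sq ε (u τ 1) ≤ M * F τ + |f τ| + CG * ε
        have hg1 : |G τ 1| ≤ CG := by
          have := hCG (τ, 1) ⟨hτ, ⟨le_rfl, hb.le⟩⟩
          rwa [Real.norm_eq_abs] at this
        have hflux : |G τ 1 * u τ 1| ≤ M * F τ + |f τ| := by
          rw [hbc_1 τ hτ]
          have h5 : |∫ x in (1:ℝ)..b, β x * u τ x| ≤ M * F τ := by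
            calc |∫ x in (1:ℝ)..b, β x * u τ x| ≤ ∫ x in (1:ℝ)..b, |β x * u τ x| :=
              intervalIntegral.abs_integral_le_integral_abs hb.le
            _ ≤ ∫ x in (1:ℝ)..b, M * |u τ x| := by
              apply intervalIntegral.integral_mono_on hb.le
                (((hβ.mul (hu_cx τ)).abs).intervalIntegrable 1 b)
                ((continuous_const.mul (hu_cx τ).abs).intervalIntegrable 1 b)
              intro x hx
              show |β x * u τ x| ≤ M * |u τ x|
              rw [abs_mul]
              exact mul_le_mul_of_nonneg_right (hM x hx) (abs_nonneg _)
            _ = M * F τ := by rw [intervalIntegral.integral_const_mul]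
          calc |(∫ x in (1:ℝ)..b, β x * u τ x) + f τ|
              ≤ |∫ x in (1:ℝ)..b, β x * u τ x| + |f τ| := abs_add_le _ _
          _ ≤ M * F τ + |f τ| := by linarith
        have hs1 := sq_le hε (u τ 1)
        have hs2 := abs_le_sq (ε := ε) (u τ 1)
        have habs := (abs_mul (G τ 1) (u τ 1)).symm
        have h6 := le_abs_self (G τ 1)
        have h8 := abs_nonneg (u τ 1)
        have h9 := abs_nonneg (G τ 1)
        have hsp := (sq_pos hε (u τ 1)).le
        nlinarith [mul_nonneg (sub_nonneg.2 h6) hsp, mul_nonneg h9 (sub_nonneg.2 hs1),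
          mul_le_mul_of_nonneg_right hg1 hε.le]
      have hPb : -(P b) ≤ CG * ε := by
        show -(G τ b * sq ε (u τ b)) ≤ CG * ε
        have hgb : |G τ b| ≤ CG := by
          have := hCG (τ, b) ⟨hτ, ⟨hb.le, le_rfl⟩⟩
          rwa [Real.norm_eq_abs] at this
        have h0 : G τ b * u τ b = 0 := hbc_b τ hτ
        have habs : |G τ b| * |u τ b| = 0 := by rw [← abs_mul, h0, abs_zero]
        have hs1 := sq_le hε (u τ b)
        have hsp := (sq_pos hε (u τ b)).le
        have h7 := neg_abs_le (G τ b)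
        have h9 := abs_nonneg (G τ b)
        have h8 := abs_nonneg (u τ b)
        nlinarith [mul_nonneg (sub_nonneg.2 h7) hsp, mul_nonneg h9 (sub_nonneg.2 hs1),
          mul_le_mul_of_nonneg_right hgb hε.le]
      have hKe : K * ε = Cx * ε * (b - 1) + (CG * ε + CG * ε) := by rw [hKdef]; ring
      rw [hDe_eq]
      linarith
    -- comparison of F and Fe
    have hFFe : ∀ τ : ℝ, F τ ≤ Fe τ := by
      intro τ
      apply intervalIntegral.integral_mono_on hb.le (hFint τ) (hFe_int τ)
      intro x _
      exact abs_le_sq _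
    have hFet0 : Fe t0 ≤ F t0 + (b - 1) * ε := by
      calc Fe t0 ≤ ∫ x in (1:ℝ)..b, (|u t0 x| + ε) := by
            apply intervalIntegral.integral_mono_on hb.le (hFe_int t0)
              ((((hu_cx t0).abs).add continuous_const).intervalIntegrable 1 b)
            intro x _
            exact sq_le hε _
      _ = F t0 + (b - 1) * ε := by
            rw [intervalIntegral.integral_add (hFint t0) intervalIntegrable_const,
              intervalIntegral.integral_const]
            simp [smul_eq_mul]
            rfl
    -- Gronwall via a monotone auxiliary function
    set q : ℝ → ℝ := fun s => Real.exp (-(M*s)) * (|f s| + K * ε) with hqdef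
    have hq_c : Continuous q :=
      (Real.continuous_exp.comp (continuous_const.mul continuous_id).neg).mul
        (hf.abs.add continuous_const)
    set ψ : ℝ → ℝ := fun τ => Real.exp (-(M*τ)) * Fe τ - ∫ s in t0..τ, q s with hψdef
    have hexp_d : ∀ τ : ℝ,
        HasDerivAt (fun s : ℝ => Real.exp (-(M*s))) (-M * Real.exp (-(M*τ))) τ := by
      intro τ
      have h1 : HasDerivAt (fun s : ℝ => -(M*s)) (-M) τ := by
        simpa using ((hasDerivAt_id τ).const_mul (-M))
      simpa [mul_comm] using h1.exp
    have hψ_d : ∀ τ : ℝ, HasDerivAt ψ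
        (Real.exp (-(M*τ)) * (De τ - M * Fe τ) - q τ) τ := by
      intro τ
      have h1 := (hexp_d τ).mul (hFe_deriv τ)
      have h2 : HasDerivAt (fun r => ∫ s in t0..r, q s) (q τ) τ :=
        intervalIntegral.integral_hasDerivAt_right (hq_c.intervalIntegrable _ _)
          (hq_c.stronglyMeasurableAtFilter _ _) hq_c.continuousAt
      have h3 := h1.sub h2
      refine h3.congr_deriv ?_
      ring
    have hψ_anti : AntitoneOn ψ (Icc t0 T) := by
      apply antitoneOn_of_deriv_nonpos (convex_Icc _ _)
      · exact fun τ _ => ((hψ_d τ).differentiableAt).continuousAt.continuousWithinAt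
      · exact fun τ hτ => ((hψ_d τ).differentiableAt).differentiableWithinAt
      · intro τ hτ
        rw [interior_Icc] at hτ
        rw [(hψ_d τ).deriv]
        have hDb := hDe_bound τ ⟨hτ.1.le, hτ.2.le⟩
        have hFF := hFFe τ
        have hexp_pos := Real.exp_pos (-(M*τ))
        have h4 : De τ - M * Fe τ ≤ |f τ| + K * ε := by nlinarith
        have h3 : Real.exp (-(M*τ)) * (De τ - M * Fe τ)
            ≤ Real.exp (-(M*τ)) * (|f τ| + K * ε) :=
          mul_le_mul_of_nonneg_left h4 hexp_pos.le
        have hqτ : q τ = Real.exp (-(M*τ)) * (|f τ| + K * ε) := rfl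
        linarith
    have hψt0 : ψ t0 = Real.exp (-(M*t0)) * Fe t0 := by
      simp [hψdef, intervalIntegral.integral_same]
    have hstep : Real.exp (-(M*t)) * Fe t
        ≤ Real.exp (-(M*t0)) * Fe t0 + ∫ s in t0..t, q s := by
      have h := hψ_anti ⟨le_rfl, ht.le⟩ htmem htmem.1
      rw [hψt0] at h
      simp only [hψdef] at h
      linarith
    have hqint : (∫ s in t0..t, q s)
        ≤ Real.exp (-(M*t0)) * ((∫ s in t0..T, |f s|) + K * ε * (T - t0)) := by
      have h1 : (∫ s in t0..t, q s)
          ≤ ∫ s in t0..t, Real.exp (-(M*t0)) * (|f s| + K * ε) := by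
        apply intervalIntegral.integral_mono_on htmem.1 (hq_c.intervalIntegrable _ _)
          ((continuous_const.mul (hf.abs.add continuous_const)).intervalIntegrable _ _)
        intro s hs
        have hle : Real.exp (-(M*s)) ≤ Real.exp (-(M*t0)) := by
          apply Real.exp_le_exp.2
          nlinarith [hs.1]
        have hnn : 0 ≤ |f s| + K * ε := by positivity
        exact mul_le_mul_of_nonneg_right hle hnn
      have h2 : (∫ s in t0..t, Real.exp (-(M*t0)) * (|f s| + K * ε))
          = Real.exp (-(M*t0)) * ∫ s in t0..t, (|f s| + K * ε) :=
        intervalIntegral.integral_const_mul _ _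
      have h4 : (∫ s in t0..t, (|f s| + K * ε))
          = (∫ s in t0..t, |f s|) + (t - t0) * (K * ε) := by
        rw [intervalIntegral.integral_add ((hf.abs).intervalIntegrable _ _)
          intervalIntegrable_const, intervalIntegral.integral_const]
        simp [smul_eq_mul]
      have h5 : (∫ s in t0..t, |f s|) ≤ ∫ s in t0..T, |f s| := by
        rw [← intervalIntegral.integral_add_adjacent_intervals
          ((hf.abs).intervalIntegrable t0 t) ((hf.abs).intervalIntegrable t T)]
        have h6 : 0 ≤ ∫ s in t..T, |f s| :=
          intervalIntegral.integral_nonneg htmem.2 (fun s _ => abs_nonneg _)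
        linarith
      have h7 : (t - t0) * (K * ε) ≤ (T - t0) * (K * ε) := by
        apply mul_le_mul_of_nonneg_right (by linarith [htmem.2]) (by positivity)
      have h3 : (∫ s in t0..t, (|f s| + K * ε))
          ≤ (∫ s in t0..T, |f s|) + K * ε * (T - t0) := by
        rw [h4]
        nlinarith
      calc (∫ s in t0..t, q s) ≤ _ := h1
      _ = _ := h2
      _ ≤ Real.exp (-(M*t0)) * ((∫ s in t0..T, |f s|) + K * ε * (T - t0)) :=
        mul_le_mul_of_nonneg_left h3 (Real.exp_pos _).le
    have hFt0_nn : 0 ≤ F t0 :=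
      intervalIntegral.integral_nonneg hb.le (fun x _ => abs_nonneg _)
    have hfint_nn : 0 ≤ ∫ s in t0..T, |f s| :=
      intervalIntegral.integral_nonneg ht.le (fun s _ => abs_nonneg _)
    set Z : ℝ := (∫ s in t0..T, |f s|) + F t0 + (b - 1) * ε + K * ε * (T - t0) with hZdef
    have hZ0 : 0 ≤ Z := by
      have hz1 : 0 ≤ (b - 1) * ε := by nlinarith
      have hz2 : 0 ≤ K * ε * (T - t0) := by
        apply mul_nonneg (mul_nonneg hK0 hε.le)
        linarith
      rw [hZdef]
      linarith
    have hcomb : Real.exp (-(M*t)) * Fe t ≤ Real.exp (-(M*t0)) * Z := by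
      have hr : Real.exp (-(M*t0)) * (F t0 + (b - 1) * ε)
          + Real.exp (-(M*t0)) * ((∫ s in t0..T, |f s|) + K * ε * (T - t0))
          = Real.exp (-(M*t0)) * Z := by
        rw [hZdef]; ring
      have hm := mul_le_mul_of_nonneg_left hFet0 (Real.exp_pos (-(M*t0))).le
      linarith
    have hFe_t : Fe t ≤ Real.exp (M * (T - t0)) * Z := by
      have h1 : Real.exp (M*t) * (Real.exp (-(M*t)) * Fe t) = Fe t := by
        rw [← mul_assoc, ← Real.exp_add]
        simp
      have h2 : Real.exp (M*t) * (Real.exp (-(M*t)) * Fe t)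
          ≤ Real.exp (M*t) * (Real.exp (-(M*t0)) * Z) :=
        mul_le_mul_of_nonneg_left hcomb (Real.exp_pos _).le
      have h3 : Real.exp (M*t) * (Real.exp (-(M*t0)) * Z) = Real.exp (M*(t - t0)) * Z := by
        rw [← mul_assoc, ← Real.exp_add, show M*t + -(M*t0) = M*(t - t0) by ring]
      have h4 : Real.exp (M*(t - t0)) ≤ Real.exp (M*(T - t0)) :=
        Real.exp_le_exp.2 (by nlinarith [htmem.2])
      calc Fe t = Real.exp (M*t) * (Real.exp (-(M*t)) * Fe t) := h1.symm
      _ ≤ Real.exp (M*t) * (Real.exp (-(M*t0)) * Z) := h2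
      _ = Real.exp (M*(t - t0)) * Z := h3
      _ ≤ Real.exp (M*(T - t0)) * Z := mul_le_mul_of_nonneg_right h4 hZ0
    calc F t ≤ Fe t := hFFe t
    _ ≤ Real.exp (M * (T - t0)) * Z := hFe_t
    _ = Real.exp (M * (T - t0)) * ((∫ s in t0..T, |f s|) + F t0)
        + ε * (Real.exp (M * (T - t0)) * (K * (T - t0) + (b - 1))) := by
      rw [hZdef]; ring
  -- let ε → 0
  set B : ℝ := Real.exp (M * (T - t0)) * (K * (T - t0) + (b - 1)) with hBdef
  have hB0 : 0 ≤ B := by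
    have h1 : 0 ≤ K * (T - t0) + (b - 1) := by
      have : 0 ≤ K * (T - t0) := mul_nonneg hK0 (by linarith)
      linarith
    exact mul_nonneg (Real.exp_pos _).le h1
  refine le_of_forall_pos_le_add fun η hη => ?_
  have hkey := key (η / (B + 1)) (by positivity)
  have h2 : (η / (B + 1)) * B ≤ η := by
    rw [div_mul_eq_mul_div, div_le_iff₀ (by linarith)]
    nlinarith
  linarith
end

section
/- Let t0 < T, 1 < b, let G : [t0,T] × [1,b] → ℝ be continuous with continuous partial derivative ∂_x G, let β : [1,b] → ℝ be continuous and f : [t0,T] → ℝ be continuous. Suppose u₁ and u₂ are continuously differentiable functions on [t0,T] × [1,b] each satisfying: (i) ∂_t u(t,x) + ∂_x (G(t,x)·u(t,x)) = 0 on [t0,T] × [1,b]; (ii) G(t,b)·u(t,b) = 0 for all t ∈ [t0,T]; (iii) G(t,1)·u(t,1) = ∫_1^b β(x)·u(t,x) dx + f(t) for all t ∈ [t0,T]; and suppose u₁(t0,x) = u₂(t0,x) for all x ∈ [1,b]. Then u₁ = u₂ on [t0,T] × [1,b]. -/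
open MeasureTheory Set

noncomputable def tuPhi (ε s : ℝ) : ℝ := Real.sqrt (s ^ 2 + ε ^ 2) - ε

noncomputable def tuPhid (ε s : ℝ) : ℝ := s / Real.sqrt (s ^ 2 + ε ^ 2)

lemma tuPhi_sqrt_pos {ε : ℝ} (hε : 0 < ε) (s : ℝ) : 0 < Real.sqrt (s ^ 2 + ε ^ 2) :=
  Real.sqrt_pos.mpr (by positivity)

lemma tuPhi_eps_le {ε : ℝ} (hε : 0 < ε) (s : ℝ) : ε ≤ Real.sqrt (s ^ 2 + ε ^ 2) := by
  have h1 := Real.sq_sqrt (by positivity : (0:ℝ) ≤ s ^ 2 + ε ^ 2)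
  have h2 := Real.sqrt_nonneg (s ^ 2 + ε ^ 2)
  nlinarith [sq_nonneg s]

lemma tuPhi_abs_le' (ε s : ℝ) : |s| ≤ Real.sqrt (s ^ 2 + ε ^ 2) := by
  rw [← Real.sqrt_sq_eq_abs]
  exact Real.sqrt_le_sqrt (by nlinarith)

lemma tuPhi_hasDerivAt {ε : ℝ} (hε : 0 < ε) (s : ℝ) :
    HasDerivAt (tuPhi ε) (tuPhid ε s) s := by
  have hq : (0:ℝ) < s ^ 2 + ε ^ 2 := by positivity
  have h1 : HasDerivAt (fun s : ℝ => s ^ 2 + ε ^ 2) (2 * s) s := by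
    simpa using ((hasDerivAt_pow 2 s).add_const (ε ^ 2))
  have h2 := (Real.hasDerivAt_sqrt hq.ne').comp s h1
  have h3 : 1 / (2 * Real.sqrt (s ^ 2 + ε ^ 2)) * (2 * s) = tuPhid ε s := by
    have := (tuPhi_sqrt_pos hε s).ne'
    rw [tuPhid]; field_simp
  have h4 : HasDerivAt (fun s : ℝ => Real.sqrt (s ^ 2 + ε ^ 2) - ε)
      (1 / (2 * Real.sqrt (s ^ 2 + ε ^ 2)) * (2 * s)) s := h2.sub_const ε
  rw [h3] at h4
  exact h4

lemma tuPhi_nonneg {ε : ℝ} (hε : 0 < ε) (s : ℝ) : 0 ≤ tuPhi ε s := by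
  have := tuPhi_eps_le hε s; rw [tuPhi]; linarith

lemma tuPhi_le_abs {ε : ℝ} (hε : 0 < ε) (s : ℝ) : tuPhi ε s ≤ |s| := by
  have hsq : Real.sqrt (s ^ 2 + ε ^ 2) ≤ |s| + ε := by
    calc Real.sqrt (s ^ 2 + ε ^ 2) ≤ Real.sqrt ((|s| + ε) ^ 2) := by
          apply Real.sqrt_le_sqrt; nlinarith [abs_nonneg s, sq_abs s]
      _ = |s| + ε := Real.sqrt_sq (by positivity)
  rw [tuPhi]; linarith

lemma tuPhi_abs_le_add (ε s : ℝ) : |s| ≤ tuPhi ε s + ε := by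
  have := tuPhi_abs_le' ε s; rw [tuPhi]; linarith

lemma tuPhi_zero {ε : ℝ} (hε : 0 < ε) : tuPhi ε 0 = 0 := by
  rw [tuPhi]
  norm_num [Real.sqrt_sq hε.le]

lemma tuPhid_abs_le_one {ε : ℝ} (hε : 0 < ε) (s : ℝ) : |tuPhid ε s| ≤ 1 := by
  rw [tuPhid, abs_div, abs_of_nonneg (Real.sqrt_nonneg _),
    div_le_one (tuPhi_sqrt_pos hε s)]
  exact tuPhi_abs_le' ε s

lemma tuPhi_fenchel {ε : ℝ} (hε : 0 < ε) (s : ℝ) :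
    0 ≤ s * tuPhid ε s - tuPhi ε s ∧ s * tuPhid ε s - tuPhi ε s ≤ ε := by
  have hq : (0:ℝ) < s ^ 2 + ε ^ 2 := by positivity
  have hrpos := tuPhi_sqrt_pos hε s
  have hr2 : Real.sqrt (s ^ 2 + ε ^ 2) ^ 2 = s ^ 2 + ε ^ 2 := Real.sq_sqrt hq.le
  have hge := tuPhi_eps_le hε s
  set r := Real.sqrt (s ^ 2 + ε ^ 2) with hr
  have key : s * tuPhid ε s - tuPhi ε s = ε - ε ^ 2 / r := by
    rw [tuPhid, tuPhi]
    field_simp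
    nlinarith [hr2]
  rw [key]
  constructor
  · have : ε ^ 2 / r ≤ ε := by rw [div_le_iff₀ hrpos]; nlinarith
    linarith
  · have : 0 ≤ ε ^ 2 / r := by positivity
    linarith

lemma tuPhi_cont (ε : ℝ) : Continuous (tuPhi ε) := by
  unfold tuPhi
  fun_prop

lemma tuPhid_cont {ε : ℝ} (hε : 0 < ε) : Continuous (tuPhid ε) := by
  unfold tuPhid
  exact continuous_id.div (by fun_prop) fun s => (tuPhi_sqrt_pos hε s).ne'

lemma tuGronwall_scale (K C s ε : ℝ) :
    gronwallBound 0 K (C * ε) s = ε * gronwallBound 0 K C s := by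
  simp only [gronwallBound]
  split_ifs <;> ring

lemma tu_hasDerivAt_fst {u : ℝ → ℝ → ℝ}
    (hu : ContDiff ℝ 1 (fun p : ℝ × ℝ => u p.1 p.2)) (t x : ℝ) :
    HasDerivAt (fun τ => u τ x) (fderiv ℝ (fun p : ℝ × ℝ => u p.1 p.2) (t, x) (1, 0)) t := by
  have h1 : HasFDerivAt (fun p : ℝ × ℝ => u p.1 p.2)
      (fderiv ℝ (fun p : ℝ × ℝ => u p.1 p.2) (t, x)) (t, x) :=
    (hu.differentiable one_ne_zero (t, x)).hasFDerivAt
  have h2 : HasDerivAt (fun τ : ℝ => (τ, x)) ((1 : ℝ), (0 : ℝ)) t :=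
    HasDerivAt.prodMk (hasDerivAt_id t) (hasDerivAt_const t x)
  exact h1.comp_hasDerivAt t h2

lemma tu_hasDerivAt_snd {u : ℝ → ℝ → ℝ}
    (hu : ContDiff ℝ 1 (fun p : ℝ × ℝ => u p.1 p.2)) (t x : ℝ) :
    HasDerivAt (fun y => u t y) (fderiv ℝ (fun p : ℝ × ℝ => u p.1 p.2) (t, x) (0, 1)) x := by
  have h1 : HasFDerivAt (fun p : ℝ × ℝ => u p.1 p.2)
      (fderiv ℝ (fun p : ℝ × ℝ => u p.1 p.2) (t, x)) (t, x) :=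
    (hu.differentiable one_ne_zero (t, x)).hasFDerivAt
  have h2 : HasDerivAt (fun y : ℝ => (t, y)) ((0 : ℝ), (1 : ℝ)) x :=
    HasDerivAt.prodMk (hasDerivAt_const x t) (hasDerivAt_id x)
  exact h1.comp_hasDerivAt x h2

lemma transport_aux (t0 T b : ℝ) (ht : t0 < T) (hb : 1 < b)
    (G : ℝ → ℝ → ℝ)
    (hGcont : Continuous fun p : ℝ × ℝ => G p.1 p.2)
    (hGdiff : ∀ t : ℝ, Differentiable ℝ (G t))
    (hGxcont : Continuous fun p : ℝ × ℝ => deriv (G p.1) p.2)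
    (β : ℝ → ℝ) (hβ : Continuous β)
    (w : ℝ → ℝ → ℝ)
    (hw : ContDiff ℝ 1 (fun p : ℝ × ℝ => w p.1 p.2))
    (hpde : ∀ t ∈ Icc t0 T, ∀ x ∈ Icc (1:ℝ) b,
      fderiv ℝ (fun p : ℝ × ℝ => w p.1 p.2) (t, x) (1, 0)
        = -(deriv (G t) x * w t x
            + G t x * fderiv ℝ (fun p : ℝ × ℝ => w p.1 p.2) (t, x) (0, 1)))
    (hbcb : ∀ t ∈ Icc t0 T, G t b * w t b = 0)
    (hbc1 : ∀ t ∈ Icc t0 T, G t 1 * w t 1 = ∫ x in (1:ℝ)..b, β x * w t x)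
    (hinit : ∀ x ∈ Icc (1:ℝ) b, w t0 x = 0) :
    ∀ t ∈ Icc t0 T, ∀ x ∈ Icc (1:ℝ) b, w t x = 0 := by
  have hwt : ∀ t x : ℝ, HasDerivAt (fun τ => w τ x)
      (fderiv ℝ (fun p : ℝ × ℝ => w p.1 p.2) (t, x) (1, 0)) t :=
    fun t x => tu_hasDerivAt_fst hw t x
  have hwx : ∀ t x : ℝ, HasDerivAt (fun y => w t y)
      (fderiv ℝ (fun p : ℝ × ℝ => w p.1 p.2) (t, x) (0, 1)) x :=
    fun t x => tu_hasDerivAt_snd hw t x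
  set wt : ℝ → ℝ → ℝ := fun t x => fderiv ℝ (fun p : ℝ × ℝ => w p.1 p.2) (t, x) (1, 0)
    with hwt_def
  set wx : ℝ → ℝ → ℝ := fun t x => fderiv ℝ (fun p : ℝ × ℝ => w p.1 p.2) (t, x) (0, 1)
    with hwx_def
  have hwc : Continuous (fun p : ℝ × ℝ => w p.1 p.2) := hw.continuous
  have hwcx : ∀ t, Continuous fun x => w t x :=
    fun t => hwc.comp (continuous_const.prodMk continuous_id)
  have hwtc : Continuous fun p : ℝ × ℝ => wt p.1 p.2 :=
    (hw.continuous_fderiv one_ne_zero).clm_apply continuous_const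
  have hwxc : Continuous fun p : ℝ × ℝ => wx p.1 p.2 :=
    (hw.continuous_fderiv one_ne_zero).clm_apply continuous_const
  have hwtcx : ∀ t, Continuous fun x => wt t x :=
    fun t => hwtc.comp (continuous_const.prodMk continuous_id)
  have hwxcx : ∀ t, Continuous fun x => wx t x :=
    fun t => hwxc.comp (continuous_const.prodMk continuous_id)
  have hGcx : ∀ t, Continuous fun x => G t x :=
    fun t => hGcont.comp (continuous_const.prodMk continuous_id)
  have hgxcx : ∀ t, Continuous fun x => deriv (G t) x :=
    fun t => hGxcont.comp (continuous_const.prodMk continuous_id)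
  obtain ⟨K₁', hK₁'⟩ := (isCompact_Icc.prod isCompact_Icc :
      IsCompact (Icc t0 T ×ˢ Icc (1:ℝ) b)).exists_bound_of_continuousOn hGxcont.continuousOn
  set K₁ : ℝ := max K₁' 0 with hK₁_def
  have hK₁0 : 0 ≤ K₁ := le_max_right _ _
  have hK₁ : ∀ t ∈ Icc t0 T, ∀ x ∈ Icc (1:ℝ) b, |deriv (G t) x| ≤ K₁ := by
    intro t htm x hxm
    have h := hK₁' (t, x) ⟨htm, hxm⟩
    rw [Real.norm_eq_abs] at h
    exact h.trans (le_max_left _ _)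
  obtain ⟨K₂', hK₂'⟩ :=
    (isCompact_Icc : IsCompact (Icc (1:ℝ) b)).exists_bound_of_continuousOn hβ.continuousOn
  set K₂ : ℝ := max K₂' 0 with hK₂_def
  have hK₂0 : 0 ≤ K₂ := le_max_right _ _
  have hK₂ : ∀ x ∈ Icc (1:ℝ) b, |β x| ≤ K₂ := by
    intro x hxm
    have h := hK₂' x hxm
    rw [Real.norm_eq_abs] at h
    exact h.trans (le_max_left _ _)
  -- key per-ε Grönwall estimate
  have key : ∀ ε : ℝ, 0 < ε → ∀ t ∈ Icc t0 T,
      (∫ x in (1:ℝ)..b, |w t x|) ≤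
        ε * (gronwallBound 0 K₂ ((K₁ + K₂) * (b - 1)) (t - t0) + (b - 1)) := by
    intro ε hε
    set E : ℝ → ℝ := fun t => ∫ x in (1:ℝ)..b, tuPhi ε (w t x) with hE_def
    set E' : ℝ → ℝ := fun t => ∫ x in (1:ℝ)..b, tuPhid ε (w t x) * wt t x with hE'_def
    have hφc : Continuous (tuPhi ε) := tuPhi_cont ε
    have hφdc : Continuous (tuPhid ε) := tuPhid_cont hε
    have hφwc : ∀ t, Continuous fun x => tuPhi ε (w t x) := fun t => hφc.comp (hwcx t)
    have hφdwc : ∀ t, Continuous fun x => tuPhid ε (w t x) := fun t => hφdc.comp (hwcx t)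
    have hEd : ∀ t₁ : ℝ, HasDerivAt E (E' t₁) t₁ := by
      intro t₁
      obtain ⟨M, hM⟩ := (isCompact_Icc.prod isCompact_Icc :
          IsCompact (Icc (t₁ - 1) (t₁ + 1) ×ˢ Icc (1:ℝ) b)).exists_bound_of_continuousOn
          hwtc.continuousOn
      have hder := intervalIntegral.hasDerivAt_integral_of_dominated_loc_of_deriv_le
        (F := fun t x => tuPhi ε (w t x)) (F' := fun t x => tuPhid ε (w t x) * wt t x)
        (bound := fun _ => max M 0) (a := (1:ℝ)) (b := b) (x₀ := t₁) (μ := volume)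
        (Metric.ball_mem_nhds t₁ zero_lt_one)
        (Filter.Eventually.of_forall fun t =>
          (hφwc t).aestronglyMeasurable)
        ((hφwc t₁).intervalIntegrable _ _)
        ((hφdwc t₁).mul (hwtcx t₁)).aestronglyMeasurable
        (Filter.Eventually.of_forall ?_)
        intervalIntegrable_const
        (Filter.Eventually.of_forall ?_)
      · exact hder.2
      · intro x hx t htb
        have hxm : x ∈ Icc (1:ℝ) b := by
          rw [uIoc_of_le hb.le] at hx
          exact Ioc_subset_Icc_self hx
        have htm : t ∈ Icc (t₁ - 1) (t₁ + 1) := by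
          rw [Real.ball_eq_Ioo] at htb
          exact Ioo_subset_Icc_self htb
        have h1 : ‖wt t x‖ ≤ M := hM (t, x) ⟨htm, hxm⟩
        calc ‖tuPhid ε (w t x) * wt t x‖ = |tuPhid ε (w t x)| * ‖wt t x‖ := by
              rw [Real.norm_eq_abs, abs_mul, Real.norm_eq_abs]
          _ ≤ 1 * M :=
              mul_le_mul (tuPhid_abs_le_one hε _) h1 (norm_nonneg _) zero_le_one
          _ ≤ max M 0 := by rw [one_mul]; exact le_max_left _ _
      · intro x _hx t _htb
        exact (tuPhi_hasDerivAt hε (w t x)).comp t (hwt t x)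
    -- bound on E'
    have hE'bd : ∀ t ∈ Icc t0 T, ‖E' t‖ ≤ K₂ * ‖E t‖ + (K₁ + K₂) * (b - 1) * ε := by
      intro t htm
      have hcong : ∀ x ∈ uIcc (1:ℝ) b, tuPhid ε (w t x) * wt t x =
          (-(deriv (G t) x * (w t x * tuPhid ε (w t x) - tuPhi ε (w t x))))
            - (deriv (G t) x * tuPhi ε (w t x)
                + G t x * (tuPhid ε (w t x) * wx t x)) := by
        intro x hx
        rw [uIcc_of_le hb.le] at hx
        have hp := hpde t htm x hx
        simp only [hwt_def, hwx_def]
        rw [hp]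
        ring
      have hint1 : IntervalIntegrable
          (fun x => -(deriv (G t) x * (w t x * tuPhid ε (w t x) - tuPhi ε (w t x))))
          volume 1 b := by
        apply Continuous.intervalIntegrable
        exact ((hgxcx t).mul (((hwcx t).mul (hφdc.comp (hwcx t))).sub
          (hφc.comp (hwcx t)))).neg
      have hint2 : IntervalIntegrable
          (fun x => deriv (G t) x * tuPhi ε (w t x)
            + G t x * (tuPhid ε (w t x) * wx t x)) volume 1 b := by
        apply Continuous.intervalIntegrable
        exact ((hgxcx t).mul (hφc.comp (hwcx t))).add
          ((hGcx t).mul ((hφdc.comp (hwcx t)).mul (hwxcx t)))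
      have hsplit : E' t =
          (∫ x in (1:ℝ)..b,
            -(deriv (G t) x * (w t x * tuPhid ε (w t x) - tuPhi ε (w t x))))
          - ∫ x in (1:ℝ)..b,
              (deriv (G t) x * tuPhi ε (w t x) + G t x * (tuPhid ε (w t x) * wx t x)) := by
        simp only [hE'_def]
        rw [intervalIntegral.integral_congr hcong]
        exact intervalIntegral.integral_sub hint1 hint2
      have hftc : (∫ x in (1:ℝ)..b,
            (deriv (G t) x * tuPhi ε (w t x) + G t x * (tuPhid ε (w t x) * wx t x)))
          = G t b * tuPhi ε (w t b) - G t 1 * tuPhi ε (w t 1) := by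
        apply intervalIntegral.integral_eq_sub_of_hasDerivAt
        · intro x _hx
          exact ((hGdiff t) x).hasDerivAt.mul
            ((tuPhi_hasDerivAt hε (w t x)).comp x (hwx t x))
        · exact hint2
      have hGb0 : G t b * tuPhi ε (w t b) = 0 := by
        rcases mul_eq_zero.mp (hbcb t htm) with h | h
        · rw [h, zero_mul]
        · rw [h, tuPhi_zero hε, mul_zero]
      have hA : ‖∫ x in (1:ℝ)..b,
          -(deriv (G t) x * (w t x * tuPhid ε (w t x) - tuPhi ε (w t x)))‖
          ≤ K₁ * ε * (b - 1) := by
        have hle := intervalIntegral.norm_integral_le_of_norm_le_const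
          (C := K₁ * ε) (a := (1:ℝ)) (b := b)
          (f := fun x => -(deriv (G t) x * (w t x * tuPhid ε (w t x) - tuPhi ε (w t x))))
          ?_
        · have habs : |b - (1:ℝ)| = b - 1 := abs_of_nonneg (by linarith)
          rw [habs] at hle
          exact hle
        · intro x hx
          rw [uIoc_of_le hb.le] at hx
          have hxm : x ∈ Icc (1:ℝ) b := Ioc_subset_Icc_self hx
          obtain ⟨hf1, hf2⟩ := tuPhi_fenchel hε (w t x)
          rw [Real.norm_eq_abs, abs_neg, abs_mul]
          have h1 : |w t x * tuPhid ε (w t x) - tuPhi ε (w t x)| ≤ ε := by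
            rw [abs_of_nonneg hf1]
            exact hf2
          exact mul_le_mul (hK₁ t htm x hxm) h1 (abs_nonneg _) hK₁0
      have hG1 : |G t 1 * tuPhi ε (w t 1)| ≤ K₂ * ‖E t‖ + K₂ * (b - 1) * ε := by
        have h1 : |G t 1 * tuPhi ε (w t 1)| ≤ |G t 1 * w t 1| := by
          rw [abs_mul, abs_mul]
          apply mul_le_mul_of_nonneg_left _ (abs_nonneg _)
          rw [abs_of_nonneg (tuPhi_nonneg hε _)]
          exact tuPhi_le_abs hε _
        have h2 : |G t 1 * w t 1| = |∫ x in (1:ℝ)..b, β x * w t x| := by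
          rw [hbc1 t htm]
        have h3 : |∫ x in (1:ℝ)..b, β x * w t x| ≤ ∫ x in (1:ℝ)..b, |β x * w t x| :=
          intervalIntegral.abs_integral_le_integral_abs hb.le
        have h4 : (∫ x in (1:ℝ)..b, |β x * w t x|)
            ≤ ∫ x in (1:ℝ)..b, K₂ * (tuPhi ε (w t x) + ε) := by
          apply intervalIntegral.integral_mono_on hb.le
          · exact ((hβ.mul (hwcx t)).abs).intervalIntegrable _ _
          · exact (continuous_const.mul ((hφwc t).add
              continuous_const)).intervalIntegrable _ _
          · intro x hxm
            rw [abs_mul]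
            exact mul_le_mul (hK₂ x hxm) (tuPhi_abs_le_add ε _) (abs_nonneg _) hK₂0
        have h5 : (∫ x in (1:ℝ)..b, K₂ * (tuPhi ε (w t x) + ε))
            = K₂ * E t + K₂ * (b - 1) * ε := by
          rw [intervalIntegral.integral_const_mul,
            intervalIntegral.integral_add
              ((hφwc t).intervalIntegrable _ _) intervalIntegrable_const,
            intervalIntegral.integral_const, smul_eq_mul]
          simp only [hE_def]
          ring
        have hEE : K₂ * E t ≤ K₂ * ‖E t‖ := by
          apply mul_le_mul_of_nonneg_left _ hK₂0
          rw [Real.norm_eq_abs]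
          exact le_abs_self _
        calc |G t 1 * tuPhi ε (w t 1)| ≤ |∫ x in (1:ℝ)..b, β x * w t x| := h2 ▸ h1
          _ ≤ ∫ x in (1:ℝ)..b, |β x * w t x| := h3
          _ ≤ K₂ * E t + K₂ * (b - 1) * ε := h5 ▸ h4
          _ ≤ K₂ * ‖E t‖ + K₂ * (b - 1) * ε := by linarith
      rw [hsplit, hftc, hGb0, zero_sub, sub_neg_eq_add]
      calc ‖(∫ x in (1:ℝ)..b,
            -(deriv (G t) x * (w t x * tuPhid ε (w t x) - tuPhi ε (w t x))))
            + G t 1 * tuPhi ε (w t 1)‖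
          ≤ ‖∫ x in (1:ℝ)..b,
              -(deriv (G t) x * (w t x * tuPhid ε (w t x) - tuPhi ε (w t x)))‖
            + ‖G t 1 * tuPhi ε (w t 1)‖ := norm_add_le _ _
        _ ≤ K₁ * ε * (b - 1) + (K₂ * ‖E t‖ + K₂ * (b - 1) * ε) := by
            apply add_le_add hA
            rw [Real.norm_eq_abs]
            exact hG1
        _ = K₂ * ‖E t‖ + (K₁ + K₂) * (b - 1) * ε := by ring
    have hE0 : E t0 = 0 := by
      simp only [hE_def]
      have hz : EqOn (fun x => tuPhi ε (w t0 x)) (fun _ => (0:ℝ)) (uIcc (1:ℝ) b) := by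
        intro x hx
        rw [uIcc_of_le hb.le] at hx
        simp only
        rw [hinit x hx, tuPhi_zero hε]
      rw [intervalIntegral.integral_congr hz, intervalIntegral.integral_const, smul_zero]
    have hgron := norm_le_gronwallBound_of_norm_deriv_right_le (f := E) (f' := E')
      (δ := 0) (K := K₂) (ε := (K₁ + K₂) * (b - 1) * ε) (a := t0) (b := T)
      (fun t _ => (hEd t).continuousAt.continuousWithinAt)
      (fun t _ => (hEd t).hasDerivWithinAt)
      (by rw [hE0]; simp)
      (fun t htm => hE'bd t (Ico_subset_Icc_self htm))
    intro t htm
    have h6 : (∫ x in (1:ℝ)..b, |w t x|) ≤ E t + (b - 1) * ε := by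
      have hmono : (∫ x in (1:ℝ)..b, |w t x|)
          ≤ ∫ x in (1:ℝ)..b, (tuPhi ε (w t x) + ε) := by
        apply intervalIntegral.integral_mono_on hb.le
        · exact ((hwcx t).abs).intervalIntegrable _ _
        · exact ((hφwc t).add continuous_const).intervalIntegrable _ _
        · intro x _hxm
          exact tuPhi_abs_le_add ε _
      rw [intervalIntegral.integral_add
          ((hφwc t).intervalIntegrable _ _) intervalIntegrable_const,
        intervalIntegral.integral_const, smul_eq_mul] at hmono
      simp only [hE_def]
      linarith
    have h7 : E t ≤ ε * gronwallBound 0 K₂ ((K₁ + K₂) * (b - 1)) (t - t0) := by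
      have h8 := hgron t htm
      rw [Real.norm_eq_abs] at h8
      have h9 := (le_abs_self (E t)).trans h8
      rwa [tuGronwall_scale] at h9
    nlinarith
  -- endgame: for each t, the integral of |w t ·| vanishes
  intro t htm
  have hI0 : 0 ≤ ∫ x in (1:ℝ)..b, |w t x| :=
    intervalIntegral.integral_nonneg hb.le fun x _ => abs_nonneg _
  set D : ℝ := gronwallBound 0 K₂ ((K₁ + K₂) * (b - 1)) (t - t0) + (b - 1) with hD_def
  have hID : ∀ ε : ℝ, 0 < ε → (∫ x in (1:ℝ)..b, |w t x|) ≤ ε * D :=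
    fun ε hε => key ε hε t htm
  have hIzero : (∫ x in (1:ℝ)..b, |w t x|) = 0 := by
    by_contra hne
    have hpos : 0 < ∫ x in (1:ℝ)..b, |w t x| := lt_of_le_of_ne hI0 (Ne.symm hne)
    have hD0 : 0 < D := by
      have h1 := hID 1 one_pos
      rw [one_mul] at h1
      linarith
    have h8 := hID ((∫ x in (1:ℝ)..b, |w t x|) / (2 * D)) (by positivity)
    have h9 : (∫ x in (1:ℝ)..b, |w t x|) / (2 * D) * D
        = (∫ x in (1:ℝ)..b, |w t x|) / 2 := by
      field_simp
    rw [h9] at h8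
    linarith
  have haecont : Continuous fun x => |w t x| := (hwcx t).abs
  have hae := (intervalIntegral.integral_eq_zero_iff_of_le_of_nonneg_ae hb.le
    (Filter.Eventually.of_forall fun x => abs_nonneg _)
    (haecont.intervalIntegrable _ _)).mp hIzero
  have haecc : (fun x => |w t x|) =ᵐ[volume.restrict (Icc (1:ℝ) b)] 0 := by
    rwa [Measure.restrict_congr_set Ioc_ae_eq_Icc] at hae
  have heq : EqOn (fun x => |w t x|) (fun _ => (0:ℝ)) (Icc (1:ℝ) b) :=
    Measure.eqOn_Icc_of_ae_eq (volume : Measure ℝ) hb.ne haecc haecont.continuousOn continuousOn_const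
  intro x hxm
  have h10 := heq hxm
  simp only at h10
  exact abs_eq_zero.mp h10

/-- Uniqueness for the metastatic transport model: two (continuously differentiable)
solutions of `∂ₜ u + ∂ₓ (G u) = 0` on `[t0, T] × [1, b]` with the zero-flux condition
at `x = b`, the nonlocal boundary condition
`G(t,1) u(t,1) = ∫_1^b β(x) u(t,x) dx + f(t)` at `x = 1`, and the same initial data
at `t = t0`, coincide on `[t0, T] × [1, b]`. -/
theorem transport_uniqueness
    (t0 T b : ℝ) (ht : t0 < T) (hb : 1 < b)
    (G : ℝ → ℝ → ℝ)
    (hGcont : Continuous fun p : ℝ × ℝ => G p.1 p.2)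
    (hGdiff : ∀ t : ℝ, Differentiable ℝ (G t))
    (hGxcont : Continuous fun p : ℝ × ℝ => deriv (G p.1) p.2)
    (β : ℝ → ℝ) (hβ : Continuous β)
    (f : ℝ → ℝ) (hf : Continuous f)
    (u₁ u₂ : ℝ → ℝ → ℝ)
    (hu₁ : ContDiff ℝ 1 (fun p : ℝ × ℝ => u₁ p.1 p.2))
    (hu₂ : ContDiff ℝ 1 (fun p : ℝ × ℝ => u₂ p.1 p.2))
    (hpde₁ : ∀ t ∈ Icc t0 T, ∀ x ∈ Icc (1:ℝ) b,
      deriv (fun τ => u₁ τ x) t + deriv (fun y => G t y * u₁ t y) x = 0)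
    (hpde₂ : ∀ t ∈ Icc t0 T, ∀ x ∈ Icc (1:ℝ) b,
      deriv (fun τ => u₂ τ x) t + deriv (fun y => G t y * u₂ t y) x = 0)
    (hbc_b₁ : ∀ t ∈ Icc t0 T, G t b * u₁ t b = 0)
    (hbc_b₂ : ∀ t ∈ Icc t0 T, G t b * u₂ t b = 0)
    (hbc_1₁ : ∀ t ∈ Icc t0 T,
      G t 1 * u₁ t 1 = (∫ x in (1:ℝ)..b, β x * u₁ t x) + f t)
    (hbc_1₂ : ∀ t ∈ Icc t0 T,
      G t 1 * u₂ t 1 = (∫ x in (1:ℝ)..b, β x * u₂ t x) + f t)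
    (hinit : ∀ x ∈ Icc (1:ℝ) b, u₁ t0 x = u₂ t0 x) :
    ∀ t ∈ Icc t0 T, ∀ x ∈ Icc (1:ℝ) b, u₁ t x = u₂ t x := by
  have hw : ContDiff ℝ 1 (fun p : ℝ × ℝ => u₁ p.1 p.2 - u₂ p.1 p.2) := hu₁.sub hu₂
  have hu₁cx : ∀ t, Continuous fun x => u₁ t x :=
    fun t => hu₁.continuous.comp (continuous_const.prodMk continuous_id)
  have hu₂cx : ∀ t, Continuous fun x => u₂ t x :=
    fun t => hu₂.continuous.comp (continuous_const.prodMk continuous_id)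
  have main := transport_aux t0 T b ht hb G hGcont hGdiff hGxcont β hβ
    (fun t x => u₁ t x - u₂ t x) hw ?hpde ?hbcb ?hbc1 ?hinit
  case hpde =>
    intro t htm x hxm
    beta_reduce
    have h1t := tu_hasDerivAt_fst hu₁ t x
    have h2t := tu_hasDerivAt_fst hu₂ t x
    have h1x := tu_hasDerivAt_snd hu₁ t x
    have h2x := tu_hasDerivAt_snd hu₂ t x
    have hWt := tu_hasDerivAt_fst (u := fun t x => u₁ t x - u₂ t x) hw t x
    have hWx := tu_hasDerivAt_snd (u := fun t x => u₁ t x - u₂ t x) hw t x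
    have ht' : fderiv ℝ (fun p : ℝ × ℝ => u₁ p.1 p.2 - u₂ p.1 p.2) (t, x) (1, 0)
        = fderiv ℝ (fun p : ℝ × ℝ => u₁ p.1 p.2) (t, x) (1, 0)
          - fderiv ℝ (fun p : ℝ × ℝ => u₂ p.1 p.2) (t, x) (1, 0) :=
      hWt.unique (h1t.sub h2t)
    have hx' : fderiv ℝ (fun p : ℝ × ℝ => u₁ p.1 p.2 - u₂ p.1 p.2) (t, x) (0, 1)
        = fderiv ℝ (fun p : ℝ × ℝ => u₁ p.1 p.2) (t, x) (0, 1)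
          - fderiv ℝ (fun p : ℝ × ℝ => u₂ p.1 p.2) (t, x) (0, 1) :=
      hWx.unique (h1x.sub h2x)
    have hp1 := hpde₁ t htm x hxm
    rw [h1t.deriv, (show HasDerivAt (fun y => G t y * u₁ t y) _ x from ((hGdiff t) x).hasDerivAt.mul h1x).deriv] at hp1
    have hp2 := hpde₂ t htm x hxm
    rw [h2t.deriv, (show HasDerivAt (fun y => G t y * u₂ t y) _ x from ((hGdiff t) x).hasDerivAt.mul h2x).deriv] at hp2
    rw [ht', hx']
    linear_combination hp1 - hp2
  case hbcb =>
    intro t htm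
    beta_reduce
    have h1 := hbc_b₁ t htm
    have h2 := hbc_b₂ t htm
    rw [mul_sub]
    linarith
  case hbc1 =>
    intro t htm
    beta_reduce
    have h1 := hbc_1₁ t htm
    have h2 := hbc_1₂ t htm
    have hi1 : IntervalIntegrable (fun x => β x * u₁ t x) volume 1 b :=
      (hβ.mul (hu₁cx t)).intervalIntegrable _ _
    have hi2 : IntervalIntegrable (fun x => β x * u₂ t x) volume 1 b :=
      (hβ.mul (hu₂cx t)).intervalIntegrable _ _
    have hsub : (∫ x in (1:ℝ)..b, β x * (u₁ t x - u₂ t x))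
        = (∫ x in (1:ℝ)..b, β x * u₁ t x) - ∫ x in (1:ℝ)..b, β x * u₂ t x := by
      rw [← intervalIntegral.integral_sub hi1 hi2]
      apply intervalIntegral.integral_congr
      intro x _
      ring
    rw [mul_sub, hsub]
    linarith
  case hinit =>
    intro x hxm
    beta_reduce
    rw [hinit x hxm, sub_self]
  intro t htm x hxm
  have h := main t htm x hxm
  linarith
end
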